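/- arXiv:1310.2515 — 10 statements merged into one kernel-verified Lean document; each statement's English description precedes it below -/
import Mathlib

section
/- Let q ∈ (0,1) be a real number. Define the q-gamma function Γ_q(z) = (1−q)^{1−z} · (q;q)_∞ / (q^z;q)_∞ for real z > 0. Then the function z ↦ log Γ_q(z) is differentiable on (0,∞), and for every z > 0 its derivative (the q-digamma function Ψ_q(z)) equals −log(1−q) + log q · Σ_{k=0}^∞ q^{z+k}/(1 − q^{z+k}). -/
open Real

lemma abs_log_one_sub_le {p : ℝ} (hp0 : 0 < p) (hp1 : p < 1) :
    |Real.log (1 - p)| ≤ p / (1 - p) := by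
  have h1 : (0:ℝ) < 1 - p := by linarith
  rw [abs_of_nonpos (Real.log_nonpos (by linarith) (by linarith))]
  have h2 := Real.log_le_sub_one_of_pos (inv_pos.2 h1)
  rw [Real.log_inv] at h2
  have he : (1 - p)⁻¹ - 1 = p / (1 - p) := by field_simp; ring
  linarith [he ▸ h2]

lemma log_tprod (f : ℕ → ℝ) (hpos : ∀ k, 0 < f k)
    (hs : Summable fun k => Real.log (f k)) :
    0 < (∏' k, f k) ∧ Real.log (∏' k, f k) = ∑' k, Real.log (f k) := by
  have hp : HasProd f (Real.exp (∑' k, Real.log (f k))) := by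
    have h := hs.hasSum.rexp
    refine HasProd.congr_fun h fun k => ?_
    simp [Real.exp_log (hpos k)]
  rw [hp.tprod_eq]
  exact ⟨Real.exp_pos _, Real.log_exp _⟩

lemma sum_log_aux {q : ℝ} (hq0 : 0 < q) (hq1 : q < 1) {y : ℝ} (hy : 0 < y) :
    Summable fun k : ℕ => Real.log (1 - q ^ (y + (k:ℝ))) := by
  have hbd : Summable fun k : ℕ => (q ^ y / (1 - q ^ y)) * q ^ k :=
    (summable_geometric_of_lt_one hq0.le hq1).mul_left _
  refine Summable.of_norm_bounded hbd fun k => ?_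
  have hyk : 0 < y + (k:ℝ) := by positivity
  have hp0 : 0 < q ^ (y + (k:ℝ)) := Real.rpow_pos_of_pos hq0 _
  have hp1 : q ^ (y + (k:ℝ)) < 1 := Real.rpow_lt_one hq0.le hq1 hyk
  refine (abs_log_one_sub_le hp0 hp1).trans ?_
  have hsplit : q ^ (y + (k:ℝ)) = q ^ y * q ^ k := by
    rw [Real.rpow_add hq0, Real.rpow_natCast]
  have hqy1 : q ^ y < 1 := Real.rpow_lt_one hq0.le hq1 hy
  have hqy0 : 0 < q ^ y := Real.rpow_pos_of_pos hq0 _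
  have hk1 : q ^ k ≤ 1 := pow_le_one₀ hq0.le hq1.le
  have hk0 : (0:ℝ) < q ^ k := pow_pos hq0 k
  rw [hsplit, div_mul_eq_mul_div]
  gcongr
  · nlinarith

/-- For `q ∈ (0,1)`, the q-Gamma function
`Γ_q(z) = (1−q)^(1−z) · (q;q)_∞ / (q^z;q)_∞` has the property that
`z ↦ log Γ_q(z)` is differentiable on `(0,∞)` with derivative (the q-digamma
function) equal to `−log(1−q) + log q · Σ_{k=0}^∞ q^(z+k)/(1 − q^(z+k))`. -/
theorem stmt_0 (q : ℝ) (hq : q ∈ Set.Ioo (0 : ℝ) 1) :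
    ∀ z : ℝ, 0 < z →
      HasDerivAt
        (fun z : ℝ =>
          Real.log ((1 - q) ^ (1 - z) * (∏' k : ℕ, (1 - q * q ^ k)) /
            ∏' k : ℕ, (1 - q ^ (z + (k : ℝ)))))
        (-Real.log (1 - q) +
          Real.log q * ∑' k : ℕ, q ^ (z + (k : ℝ)) / (1 - q ^ (z + (k : ℝ)))) z := by
  obtain ⟨hq0, hq1⟩ := hq
  have h1q : (0:ℝ) < 1 - q := by linarith
  intro z hz
  set g : ℕ → ℝ → ℝ := fun k y => Real.log (1 - q ^ (y + (k:ℝ))) with hg_def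
  set g' : ℕ → ℝ → ℝ := fun k y =>
    -(Real.log q * (q ^ (y + (k:ℝ)) / (1 - q ^ (y + (k:ℝ))))) with hg'_def
  have hz2 : 0 < z / 2 := by linarith
  have hqz2 : q ^ (z/2) < 1 := Real.rpow_lt_one hq0.le hq1 hz2
  have hqz2' : 0 < q ^ (z/2) := Real.rpow_pos_of_pos hq0 _
  -- derivative of each term
  have hderiv : ∀ (k : ℕ) (y : ℝ), y ∈ Set.Ioi (z/2) → HasDerivAt (g k) (g' k y) y := by
    intro k y hy
    have hy' : z/2 < y := hy
    have hkc : (0:ℝ) ≤ (k:ℝ) := Nat.cast_nonneg k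
    have hyk : 0 < y + (k:ℝ) := by linarith
    have hinner : HasDerivAt (fun y : ℝ => q ^ (y + (k:ℝ)))
        (q ^ (y + (k:ℝ)) * Real.log q) y := by
      have h1 := (Real.hasStrictDerivAt_const_rpow hq0 (y + (k:ℝ))).hasDerivAt
      have h2 : HasDerivAt (fun y : ℝ => y + (k:ℝ)) 1 y := (hasDerivAt_id y).add_const _
      exact (h1.comp y h2).congr_deriv (by simp)
    have hp1 : q ^ (y + (k:ℝ)) < 1 := Real.rpow_lt_one hq0.le hq1 hyk
    have hne : 1 - q ^ (y + (k:ℝ)) ≠ 0 := by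
      have : (0:ℝ) < 1 - q ^ (y + (k:ℝ)) := by linarith
      exact this.ne'
    have h3 : HasDerivAt (fun y : ℝ => 1 - q ^ (y + (k:ℝ)))
        (-(q ^ (y + (k:ℝ)) * Real.log q)) y := hinner.const_sub 1
    have h4 := h3.log hne
    convert h4 using 1
    ring
  -- summable bound on derivatives
  set u : ℕ → ℝ := fun k => (|Real.log q| * q ^ (z/2) / (1 - q ^ (z/2))) * q ^ k with hu_def
  have hu : Summable u := (summable_geometric_of_lt_one hq0.le hq1).mul_left _
  have hbound : ∀ (k : ℕ) (y : ℝ), y ∈ Set.Ioi (z/2) → ‖g' k y‖ ≤ u k := by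
    intro k y hy
    have hy' : z/2 < y := hy
    have hkc : (0:ℝ) ≤ (k:ℝ) := Nat.cast_nonneg k
    have hyk : 0 < y + (k:ℝ) := by linarith
    have hp0 : 0 < q ^ (y + (k:ℝ)) := Real.rpow_pos_of_pos hq0 _
    have hp1 : q ^ (y + (k:ℝ)) < 1 := Real.rpow_lt_one hq0.le hq1 hyk
    have hsplit : q ^ (y + (k:ℝ)) = q ^ y * q ^ k := by
      rw [Real.rpow_add hq0, Real.rpow_natCast]
    have hle : q ^ y ≤ q ^ (z/2) :=
      Real.rpow_le_rpow_of_exponent_ge hq0 hq1.le hy'.le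
    have hk1 : q ^ k ≤ 1 := pow_le_one₀ hq0.le hq1.le
    have hk0 : (0:ℝ) < q ^ k := pow_pos hq0 k
    have hple : q ^ (y + (k:ℝ)) ≤ q ^ (z/2) * q ^ k := by
      rw [hsplit]; exact mul_le_mul_of_nonneg_right hle hk0.le
    have hnorm : ‖g' k y‖ = |Real.log q| * (q ^ (y + (k:ℝ)) / (1 - q ^ (y + (k:ℝ)))) := by
      rw [hg'_def]
      rw [Real.norm_eq_abs, abs_neg, abs_mul,
        abs_of_nonneg (div_nonneg hp0.le (sub_nonneg.2 hp1.le))]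
    calc ‖g' k y‖ = |Real.log q| * (q ^ (y + (k:ℝ)) / (1 - q ^ (y + (k:ℝ)))) := hnorm
      _ ≤ |Real.log q| * ((q ^ (z/2) * q ^ k) / (1 - q ^ (z/2))) := by
          refine mul_le_mul_of_nonneg_left ?_ (abs_nonneg _)
          exact div_le_div₀ (by positivity) hple (by linarith) (by nlinarith)
      _ = u k := by rw [hu_def]; ring
  -- main derivative of the series
  have hmain : HasDerivAt (fun y => ∑' k, g k y) (∑' k, g' k z) z :=
    hasDerivAt_tsum_of_isPreconnected hu isOpen_Ioi isPreconnected_Ioi hderiv hbound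
      (Set.mem_Ioi.2 (half_lt_self hz)) (sum_log_aux hq0 hq1 hz)
      (Set.mem_Ioi.2 (half_lt_self hz))
  -- constants
  set C : ℝ := ∏' k : ℕ, (1 - q * q ^ k) with hC_def
  have hCsum : Summable fun k : ℕ => Real.log (1 - q * q ^ k) := by
    have h := sum_log_aux hq0 hq1 one_pos
    refine h.congr fun k => ?_
    congr 1
    rw [Real.rpow_add hq0, Real.rpow_one, Real.rpow_natCast]
  have hCpos : 0 < C := by
    refine (log_tprod _ (fun k => ?_) hCsum).1
    have : q * q ^ k ≤ q * 1 := mul_le_mul_of_nonneg_left (pow_le_one₀ hq0.le hq1.le) hq0.le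
    nlinarith
  -- positivity and log of P y for y > 0
  have hP : ∀ y : ℝ, 0 < y →
      0 < (∏' k : ℕ, (1 - q ^ (y + (k:ℝ)))) ∧
        Real.log (∏' k : ℕ, (1 - q ^ (y + (k:ℝ)))) = ∑' k, g k y := by
    intro y hy
    refine log_tprod _ (fun k => ?_) (sum_log_aux hq0 hq1 hy)
    have hyk : 0 < y + (k:ℝ) := by positivity
    have := Real.rpow_lt_one hq0.le hq1 hyk
    linarith
  -- the linearized function
  have hlin : HasDerivAt
      (fun y : ℝ => (1 - y) * Real.log (1 - q) + Real.log C - ∑' k, g k y)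
      (-Real.log (1 - q) - ∑' k, g' k z) z := by
    have h1 : HasDerivAt (fun y : ℝ => (1 - y) * Real.log (1 - q))
        (-Real.log (1 - q)) z := by
      have := ((hasDerivAt_id z).const_sub 1).mul_const (Real.log (1 - q))
      simpa using this
    exact (h1.add_const _).sub hmain
  -- the two functions agree near z
  have heq : (fun z : ℝ =>
        Real.log ((1 - q) ^ (1 - z) * (∏' k : ℕ, (1 - q * q ^ k)) /
          ∏' k : ℕ, (1 - q ^ (z + (k : ℝ)))))
      =ᶠ[nhds z] (fun y : ℝ => (1 - y) * Real.log (1 - q) + Real.log C - ∑' k, g k y) := by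
    filter_upwards [Ioi_mem_nhds hz] with y hy
    have hy' : (0:ℝ) < y := hy
    obtain ⟨hPpos, hPlog⟩ := hP y hy'
    have hA : (0:ℝ) < (1 - q) ^ (1 - y) := Real.rpow_pos_of_pos h1q _
    rw [Real.log_div (by positivity) hPpos.ne', Real.log_mul hA.ne' hCpos.ne',
      Real.log_rpow h1q, hPlog]
  -- conclude
  have hfinal := hlin.congr_of_eventuallyEq heq
  have hval : ∑' k, g' k z
      = -(Real.log q * ∑' k : ℕ, q ^ (z + (k:ℝ)) / (1 - q ^ (z + (k:ℝ)))) := by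
    rw [hg'_def, tsum_neg, tsum_mul_left]
  rw [hval] at hfinal
  exact hfinal.congr_deriv (by ring)
end

section
/- Let q ∈ (0,1). Then f(θ)/κ(θ) → 1 and 1/κ(θ) → 0 as θ → 0+, while f(θ)/κ(θ) → 0 and 1/κ(θ) → 1−q as θ → +∞. In other words, the parametric curve θ ↦ (f(θ)/κ(θ), 1/κ(θ)) describing the macroscopic shape of the q-TASEP particle positions touches the axes at the points (1,0) (as θ → 0+) and (0, 1−q) (as θ → ∞). -/
open Real Filter Set

namespace Stmt3Aux

/-- κ(θ) -/
noncomputable def K (q θ : ℝ) : ℝ := ∑' k : ℕ, q ^ (k : ℕ) / (1 - q ^ (θ + (k : ℝ))) ^ 2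
/-- A(θ) = Σ q^{2k}/(1−q^{θ+k})² -/
noncomputable def A (q θ : ℝ) : ℝ := ∑' k : ℕ, (q ^ k) ^ 2 / (1 - q ^ (θ + (k : ℝ))) ^ 2

variable {q θ : ℝ}

lemma dθpos (hq0 : 0 < q) (hq1 : q < 1) (hθ : 0 < θ) : 0 < 1 - q ^ θ := by
  have := Real.rpow_lt_one hq0.le hq1 hθ; linarith

lemma dpos (hq0 : 0 < q) (hq1 : q < 1) (hθ : 0 < θ) (k : ℕ) :
    0 < 1 - q ^ (θ + (k : ℝ)) := by
  have h := Real.rpow_lt_one hq0.le hq1 (by positivity : (0:ℝ) < θ + (k:ℝ))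
  linarith

lemma dle1 (hq0 : 0 < q) (k : ℕ) : 1 - q ^ (θ + (k : ℝ)) ≤ 1 := by
  have := Real.rpow_nonneg hq0.le (θ + (k:ℝ)); linarith

lemma dge (hq0 : 0 < q) (hq1 : q < 1) (k : ℕ) :
    1 - q ^ θ ≤ 1 - q ^ (θ + (k : ℝ)) := by
  have := Real.rpow_le_rpow_of_exponent_ge hq0 hq1.le
    (le_add_of_nonneg_right (Nat.cast_nonneg k) : θ ≤ θ + (k:ℝ))
  linarith

lemma dgek (hq0 : 0 < q) (hq1 : q < 1) (hθ : 0 < θ) (k : ℕ) :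
    1 - q ^ k ≤ 1 - q ^ (θ + (k : ℝ)) := by
  have h := Real.rpow_le_rpow_of_exponent_ge hq0 hq1.le
    (le_add_of_nonneg_left hθ.le : (k:ℝ) ≤ θ + (k:ℝ))
  rw [Real.rpow_natCast] at h; linarith

lemma sq_le (hq0 : 0 < q) (hq1 : q < 1) (hθ : 0 < θ) (k : ℕ) :
    (1 - q ^ θ) ^ 2 ≤ (1 - q ^ (θ + (k : ℝ))) ^ 2 :=
  pow_le_pow_left₀ (dθpos hq0 hq1 hθ).le (dge hq0 hq1 k) 2

lemma summableK (hq0 : 0 < q) (hq1 : q < 1) (hθ : 0 < θ) :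
    Summable (fun k : ℕ => q ^ k / (1 - q ^ (θ + (k : ℝ))) ^ 2) := by
  have hb : Summable (fun k : ℕ => q ^ k / (1 - q ^ θ) ^ 2) :=
    (summable_geometric_of_lt_one hq0.le hq1).div_const _
  refine Summable.of_nonneg_of_le
    (fun k => by have := dpos hq0 hq1 hθ k; positivity) (fun k => ?_) hb
  exact div_le_div_of_nonneg_left (pow_nonneg hq0.le k)
    (pow_pos (dθpos hq0 hq1 hθ) 2) (sq_le hq0 hq1 hθ k)

lemma summableA (hq0 : 0 < q) (hq1 : q < 1) (hθ : 0 < θ) :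
    Summable (fun k : ℕ => (q ^ k) ^ 2 / (1 - q ^ (θ + (k : ℝ))) ^ 2) := by
  refine Summable.of_nonneg_of_le (fun k => ?_) (fun k => ?_) (summableK hq0 hq1 hθ)
  · have := dpos hq0 hq1 hθ k; positivity
  · apply div_le_div_of_nonneg_right ?_ (pow_pos (dpos hq0 hq1 hθ k) 2).le
    have h1 : q ^ k ≤ 1 := pow_le_one₀ hq0.le hq1.le
    nlinarith [pow_nonneg hq0.le k]

lemma A_le_K (hq0 : 0 < q) (hq1 : q < 1) (hθ : 0 < θ) : A q θ ≤ K q θ := by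
  refine Summable.tsum_le_tsum (fun k => ?_) (summableA hq0 hq1 hθ) (summableK hq0 hq1 hθ)
  apply div_le_div_of_nonneg_right ?_ (pow_pos (dpos hq0 hq1 hθ k) 2).le
  have h1 : q ^ k ≤ 1 := pow_le_one₀ hq0.le hq1.le
  nlinarith [pow_nonneg hq0.le k]

lemma K_ge_inv (hq0 : 0 < q) (hq1 : q < 1) (hθ : 0 < θ) :
    ((1 - q ^ θ) ^ 2)⁻¹ ≤ K q θ := by
  have h := Summable.le_tsum (summableK hq0 hq1 hθ) 0
    (fun j _ => by have := dpos hq0 hq1 hθ j; positivity)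
  simpa [K] using h

lemma K_ge_geom (hq0 : 0 < q) (hq1 : q < 1) (hθ : 0 < θ) : (1 - q)⁻¹ ≤ K q θ := by
  rw [← tsum_geometric_of_lt_one hq0.le hq1]
  refine Summable.tsum_le_tsum (fun k => ?_) (summable_geometric_of_lt_one hq0.le hq1)
    (summableK hq0 hq1 hθ)
  have hd := dpos hq0 hq1 hθ k
  have hd1 := dle1 (θ:=θ) hq0 k
  rw [le_div_iff₀ (by positivity)]
  have hd2 : (1 - q ^ (θ + (k:ℝ))) ^ 2 ≤ 1 := by nlinarith
  nlinarith [pow_nonneg hq0.le k]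

lemma K_pos (hq0 : 0 < q) (hq1 : q < 1) (hθ : 0 < θ) : 0 < K q θ := by
  have hq' : (0:ℝ) < 1 - q := by linarith
  exact lt_of_lt_of_le (by positivity) (K_ge_geom hq0 hq1 hθ)

lemma K_le (hq0 : 0 < q) (hq1 : q < 1) (hθ : 0 < θ) :
    K q θ ≤ (1 - q)⁻¹ * ((1 - q ^ θ) ^ 2)⁻¹ := by
  have hgeo : (∑' k : ℕ, q ^ k * ((1 - q ^ θ) ^ 2)⁻¹)
      = (1 - q)⁻¹ * ((1 - q ^ θ) ^ 2)⁻¹ := by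
    rw [tsum_mul_right, tsum_geometric_of_lt_one hq0.le hq1]
  rw [← hgeo]
  refine Summable.tsum_le_tsum (fun k => ?_) (summableK hq0 hq1 hθ)
    ((summable_geometric_of_lt_one hq0.le hq1).mul_right _)
  rw [div_eq_mul_inv]
  have h2 := sq_le hq0 hq1 hθ k
  have h3 := pow_pos (dθpos hq0 hq1 hθ) 2
  exact mul_le_mul_of_nonneg_left (by gcongr) (pow_nonneg hq0.le k)

lemma D_nonneg (hq0 : 0 < q) (hq1 : q < 1) (hθ : 0 < θ) : 0 ≤ K q θ - A q θ := by
  linarith [A_le_K hq0 hq1 hθ]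

lemma D_le (hq0 : 0 < q) (hq1 : q < 1) (hθ : 0 < θ) :
    K q θ - A q θ ≤ (1 - q)⁻¹ * (1 - q)⁻¹ := by
  have hq' : 0 < 1 - q := by linarith
  have hdiff : K q θ - A q θ
      = ∑' k : ℕ, (q ^ k - (q ^ k) ^ 2) / (1 - q ^ (θ + (k : ℝ))) ^ 2 := by
    rw [K, A, ← Summable.tsum_sub (summableK hq0 hq1 hθ) (summableA hq0 hq1 hθ)]
    exact tsum_congr fun k => div_sub_div_same _ _ _
  have hgeo : (∑' k : ℕ, q ^ k * (1 - q)⁻¹) = (1 - q)⁻¹ * (1 - q)⁻¹ := by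
    rw [tsum_mul_right, tsum_geometric_of_lt_one hq0.le hq1]
  rw [hdiff, ← hgeo]
  refine Summable.tsum_le_tsum (fun k => ?_) ?_ ((summable_geometric_of_lt_one hq0.le hq1).mul_right _)
  · -- termwise bound
    have hd := dpos hq0 hq1 hθ k
    have key : (1 - q) * (1 - q ^ k) ≤ (1 - q ^ (θ + (k : ℝ))) ^ 2 := by
      cases k with
      | zero => simpa using (by positivity : (0:ℝ) ≤ (1 - q ^ (θ + ((0:ℕ):ℝ))) ^ 2)
      | succ n =>
        have h1 := dgek hq0 hq1 hθ (n + 1)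
        have h2 : q ^ (n + 1) ≤ q := by
          calc q ^ (n + 1) ≤ q ^ 1 := pow_le_pow_of_le_one hq0.le hq1.le (by omega)
          _ = q := pow_one q
        nlinarith
    have hkey := mul_le_mul_of_nonneg_left key (pow_nonneg hq0.le k)
    rw [show q ^ k * (1 - q)⁻¹ = q ^ k / (1 - q) from (div_eq_mul_inv _ _).symm,
      div_le_div_iff₀ (pow_pos hd 2) hq']
    nlinarith [hkey]
  · -- summability of the difference terms
    have := (summableK hq0 hq1 hθ).sub (summableA hq0 hq1 hθ)
    refine this.congr fun k => ?_
    exact div_sub_div_same _ _ _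

lemma f_eq (hq0 : 0 < q) (hq1 : q < 1) (θ : ℝ) :
    (∑' k : ℕ, q ^ (2 * θ + 2 * (k : ℝ)) / (1 - q ^ (θ + (k : ℝ))) ^ 2)
      = q ^ (2 * θ) * A q θ := by
  rw [A, ← tsum_mul_left]
  refine tsum_congr fun k => ?_
  rw [Real.rpow_add hq0, ← mul_div_assoc]
  congr 2
  have : (2 : ℝ) * (k : ℝ) = ((2 * k : ℕ) : ℝ) := by push_cast; ring
  rw [this, Real.rpow_natCast, mul_comm 2 k, pow_mul]

/-- tendsto of q^θ at 0 -/
lemma tend_zero (hq0 : 0 < q) : Tendsto (fun θ : ℝ => q ^ θ) (nhds 0) (nhds 1) := by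
  have h := (Real.continuousAt_const_rpow (b := (0:ℝ)) hq0.ne').tendsto
  simpa [Real.rpow_zero] using h

lemma tend_top (hq0 : 0 < q) (hq1 : q < 1) :
    Tendsto (fun θ : ℝ => q ^ θ) atTop (nhds 0) :=
  tendsto_rpow_atTop_of_base_lt_one q (by linarith) hq1

end Stmt3Aux

open Stmt3Aux Filter Set Real in
/-- For `q ∈ (0,1)`, with `κ(θ) = Σ q^k/(1−q^(θ+k))²` and
`f(θ) = Σ q^(2θ+2k)/(1−q^(θ+k))²`, one has `f/κ → 1` and `1/κ → 0` as `θ → 0+`,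
and `f/κ → 0` and `1/κ → 1−q` as `θ → ∞`: the parametric curve
`θ ↦ (f(θ)/κ(θ), 1/κ(θ))` touches the axes at `(1,0)` and `(0,1−q)`. -/
theorem stmt_3 (q : ℝ) (hq : q ∈ Set.Ioo (0 : ℝ) 1) :
    let κ : ℝ → ℝ := fun θ => ∑' k : ℕ, q ^ (k : ℕ) / (1 - q ^ (θ + (k : ℝ))) ^ 2
    let f : ℝ → ℝ := fun θ => ∑' k : ℕ, q ^ (2 * θ + 2 * (k : ℝ)) / (1 - q ^ (θ + (k : ℝ))) ^ 2
    Filter.Tendsto (fun θ => f θ / κ θ) (nhdsWithin 0 (Set.Ioi 0)) (nhds 1) ∧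
    Filter.Tendsto (fun θ => 1 / κ θ) (nhdsWithin 0 (Set.Ioi 0)) (nhds 0) ∧
    Filter.Tendsto (fun θ => f θ / κ θ) Filter.atTop (nhds 0) ∧
    Filter.Tendsto (fun θ => 1 / κ θ) Filter.atTop (nhds (1 - q)) := by
  obtain ⟨hq0, hq1⟩ := hq
  intro κ f
  have hκ : κ = fun θ => K q θ := rfl
  have hq' : (0:ℝ) < 1 - q := by linarith
  -- f θ = q^(2θ) * A q θ
  have hfA : ∀ θ : ℝ, f θ = q ^ (2 * θ) * A q θ := fun θ => f_eq hq0 hq1 θ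
  -- basic limits
  have t0 : Tendsto (fun θ : ℝ => q ^ θ) (nhdsWithin 0 (Ioi 0)) (nhds 1) :=
    (tend_zero hq0).mono_left nhdsWithin_le_nhds
  have tsq0 : Tendsto (fun θ : ℝ => (1 - q ^ θ) ^ 2) (nhdsWithin 0 (Ioi 0)) (nhds 0) := by
    have := ((tendsto_const_nhds (x := (1:ℝ))).sub t0).pow 2
    simpa using this
  have t2θ0 : Tendsto (fun θ : ℝ => q ^ (2 * θ)) (nhdsWithin 0 (Ioi 0)) (nhds 1) := by
    have he : ∀ θ : ℝ, q ^ (2 * θ) = (q ^ θ) ^ 2 := fun θ => by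
      rw [two_mul, Real.rpow_add hq0, sq]
    have := t0.pow 2
    simpa [he] using this
  have ttop : Tendsto (fun θ : ℝ => q ^ θ) atTop (nhds 0) := tend_top hq0 hq1
  have tsqtop : Tendsto (fun θ : ℝ => (1 - q ^ θ) ^ 2) atTop (nhds 1) := by
    have := ((tendsto_const_nhds (x := (1:ℝ))).sub ttop).pow 2
    simpa using this
  have t2θtop : Tendsto (fun θ : ℝ => q ^ (2 * θ)) atTop (nhds 0) := by
    have he : ∀ θ : ℝ, q ^ (2 * θ) = (q ^ θ) ^ 2 := fun θ => by
      rw [two_mul, Real.rpow_add hq0, sq]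
    have := ttop.pow 2
    simpa [he] using this
  -- key inequalities for θ > 0
  have hinvK_le : ∀ θ : ℝ, 0 < θ → 1 / K q θ ≤ (1 - q ^ θ) ^ 2 := by
    intro θ hθ
    have h := one_div_le_one_div_of_le (inv_pos.mpr (pow_pos (dθpos hq0 hq1 hθ) 2)) (K_ge_inv hq0 hq1 hθ)
    simpa [one_div] using h
  have hinvK_ge : ∀ θ : ℝ, 0 < θ → (1 - q) * (1 - q ^ θ) ^ 2 ≤ 1 / K q θ := by
    intro θ hθ
    have hKle := K_le hq0 hq1 hθ
    have hB : (1 - q)⁻¹ * ((1 - q ^ θ) ^ 2)⁻¹ = ((1 - q) * (1 - q ^ θ) ^ 2)⁻¹ := by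
      rw [mul_inv]
    rw [hB] at hKle
    have h := one_div_le_one_div_of_le (K_pos hq0 hq1 hθ) hKle
    simpa [one_div] using h
  have hinvK_le' : ∀ θ : ℝ, 0 < θ → 1 / K q θ ≤ 1 - q := by
    intro θ hθ
    have h := one_div_le_one_div_of_le (by positivity) (K_ge_geom hq0 hq1 hθ)
    simpa [one_div] using h
  have hfK_le : ∀ θ : ℝ, 0 < θ → f θ / K q θ ≤ q ^ (2 * θ) := by
    intro θ hθ
    rw [hfA θ, div_le_iff₀ (K_pos hq0 hq1 hθ)]
    exact mul_le_mul_of_nonneg_left (A_le_K hq0 hq1 hθ) (Real.rpow_nonneg hq0.le _)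
  have hfK_nonneg : ∀ θ : ℝ, 0 < θ → 0 ≤ f θ / K q θ := by
    intro θ hθ
    have hA : 0 ≤ A q θ := tsum_nonneg fun k => by
      have := dpos hq0 hq1 hθ k; positivity
    rw [hfA θ]
    have := (K_pos hq0 hq1 hθ)
    positivity
  have hfK_ge : ∀ θ : ℝ, 0 < θ →
      q ^ (2 * θ) * (1 - (1 - q)⁻¹ * (1 - q)⁻¹ * (1 - q ^ θ) ^ 2) ≤ f θ / K q θ := by
    intro θ hθ
    have hKpos := K_pos hq0 hq1 hθ
    have hAK : A q θ / K q θ = 1 - (K q θ - A q θ) / K q θ := by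
      field_simp
      ring
    have hDK : (K q θ - A q θ) / K q θ ≤ (1 - q)⁻¹ * (1 - q)⁻¹ * (1 - q ^ θ) ^ 2 := by
      rw [div_eq_mul_one_div]
      exact mul_le_mul (D_le hq0 hq1 hθ) (hinvK_le θ hθ)
        (by positivity) (by positivity)
    have h1 : 1 - (1 - q)⁻¹ * (1 - q)⁻¹ * (1 - q ^ θ) ^ 2 ≤ A q θ / K q θ := by
      rw [hAK]; linarith
    calc q ^ (2 * θ) * (1 - (1 - q)⁻¹ * (1 - q)⁻¹ * (1 - q ^ θ) ^ 2)
        ≤ q ^ (2 * θ) * (A q θ / K q θ) :=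
          mul_le_mul_of_nonneg_left h1 (Real.rpow_nonneg hq0.le _)
      _ = f θ / K q θ := by rw [hfA θ, mul_div_assoc]
  refine ⟨?_, ?_, ?_, ?_⟩
  · -- f/κ → 1 at 0+
    refine tendsto_of_tendsto_of_tendsto_of_le_of_le'
      (g := fun θ : ℝ => q ^ (2 * θ) * (1 - (1 - q)⁻¹ * (1 - q)⁻¹ * (1 - q ^ θ) ^ 2))
      (h := fun θ : ℝ => q ^ (2 * θ)) ?_ ?_ ?_ ?_
    · have := t2θ0.mul ((tendsto_const_nhds (x := (1:ℝ))).sub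
        ((tendsto_const_nhds (x := (1 - q)⁻¹ * (1 - q)⁻¹)).mul tsq0))
      simpa using this
    · simpa using t2θ0
    · filter_upwards [self_mem_nhdsWithin] with θ hθ
      exact hfK_ge θ hθ
    · filter_upwards [self_mem_nhdsWithin] with θ hθ
      exact hfK_le θ hθ
  · -- 1/κ → 0 at 0+
    refine tendsto_of_tendsto_of_tendsto_of_le_of_le'
      (g := fun _ : ℝ => (0:ℝ)) (h := fun θ : ℝ => (1 - q ^ θ) ^ 2)
      tendsto_const_nhds tsq0 ?_ ?_
    · filter_upwards [self_mem_nhdsWithin] with θ hθ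
      exact le_of_lt (div_pos one_pos (K_pos hq0 hq1 hθ))
    · filter_upwards [self_mem_nhdsWithin] with θ hθ
      exact hinvK_le θ hθ
  · -- f/κ → 0 atTop
    refine tendsto_of_tendsto_of_tendsto_of_le_of_le'
      (g := fun _ : ℝ => (0:ℝ)) (h := fun θ : ℝ => q ^ (2 * θ))
      tendsto_const_nhds t2θtop ?_ ?_
    · filter_upwards [eventually_gt_atTop (0:ℝ)] with θ hθ
      exact hfK_nonneg θ hθ
    · filter_upwards [eventually_gt_atTop (0:ℝ)] with θ hθ
      exact hfK_le θ hθ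
  · -- 1/κ → 1−q atTop
    refine tendsto_of_tendsto_of_tendsto_of_le_of_le'
      (g := fun θ : ℝ => (1 - q) * (1 - q ^ θ) ^ 2) (h := fun _ : ℝ => 1 - q)
      ?_ tendsto_const_nhds ?_ ?_
    · have := (tendsto_const_nhds (x := 1 - q)).mul tsqtop
      simpa using this
    · filter_upwards [eventually_gt_atTop (0:ℝ)] with θ hθ
      exact hinvK_ge θ hθ
    · filter_upwards [eventually_gt_atTop (0:ℝ)] with θ hθ
      exact hinvK_le' θ hθ
end

section
/- Let q ∈ (0,1) and α ∈ (0,1). Then the mean of the q-geometric distribution with parameter α satisfies E(gap) := Σ_{k=0}^∞ k · (α;q)_∞ α^k/(q;q)_k = α Σ_{k=0}^∞ q^k/(1 − α q^k), and consequently the particle density ρ := 1/(1 + E(gap)) equals log q / (log q + log(1−q) + Ψ_q(log α / log q)). (Together with E(1 − q^{gap}) = α, this gives the particle current j(ρ) = α ρ under the local stationarity assumption.) -/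
open Real Filter Finset Topology

namespace Stmt6Aux

/-- `(q;q)_k`. -/
noncomputable def D (q : ℝ) (k : ℕ) : ℝ := ∏ i ∈ Finset.range k, (1 - q ^ (i + 1))

/-- `(α;q)_n` (partial product). -/
noncomputable def P (q α : ℝ) (n : ℕ) : ℝ := ∏ i ∈ Finset.range n, (1 - α * q ^ i)

noncomputable def f (q α : ℝ) (j k : ℕ) : ℝ := α ^ k * q ^ (j * k) / D q k

noncomputable def g (q α : ℝ) (j k : ℕ) : ℝ := k * α ^ k * q ^ (j * k) / D q k

lemma exp_le_one_sub {c x : ℝ} (hx : 0 ≤ x) (hxc : x ≤ c) (hc1 : c < 1) :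
    Real.exp (-x / (1 - c)) ≤ 1 - x := by
  have h1 : (0:ℝ) < 1 - c := by linarith
  have h2 : (0:ℝ) < 1 - x := by linarith
  rw [← Real.exp_log h2, Real.exp_le_exp]
  have hlog := Real.one_sub_inv_le_log_of_pos h2
  have h3 : -x / (1 - c) ≤ -x / (1 - x) := by
    rw [div_le_div_iff₀ h1 h2]; nlinarith
  have h4 : -x / (1 - x) = 1 - (1 - x)⁻¹ := by field_simp; ring
  linarith
  
lemma prod_one_sub_ge {c : ℝ} (hc1 : c < 1) (u : ℕ → ℝ) (hu0 : ∀ i, 0 ≤ u i)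
    (huc : ∀ i, u i ≤ c) (n : ℕ) :
    Real.exp (-(∑ i ∈ Finset.range n, u i) / (1 - c)) ≤ ∏ i ∈ Finset.range n, (1 - u i) := by
  have : Real.exp (-(∑ i ∈ Finset.range n, u i) / (1 - c))
      = ∏ i ∈ Finset.range n, Real.exp (-u i / (1 - c)) := by
    rw [← Real.exp_sum]
    congr 1
    rw [← Finset.sum_div, ← Finset.sum_neg_distrib]
  rw [this]
  exact Finset.prod_le_prod (fun i _ => (Real.exp_pos _).le)
    (fun i _ => exp_le_one_sub (hu0 i) (huc i) hc1)

section

variable {q α : ℝ} (hq0 : 0 < q) (hq1 : q < 1) (hα0 : 0 < α) (hα1 : α < 1)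

include hq0 hq1 in
lemma D_pos (k : ℕ) : 0 < D q k := by
  refine Finset.prod_pos fun i _ => ?_
  have : q ^ (i + 1) < 1 := pow_lt_one₀ hq0.le hq1 (Nat.succ_ne_zero i)
  linarith

include hq0 hq1 in
lemma D_ge (k : ℕ) : Real.exp (-q / ((1 - q) * (1 - q))) ≤ D q k := by
  have h1 : (0:ℝ) < 1 - q := by linarith
  refine le_trans ?_ (prod_one_sub_ge hq1 (fun i => q ^ (i + 1))
    (fun i => pow_nonneg hq0.le _) (fun i => by
      calc q ^ (i + 1) ≤ q ^ 1 := pow_le_pow_of_le_one hq0.le hq1.le (Nat.one_le_iff_ne_zero.2 (Nat.succ_ne_zero i))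
      _ = q := pow_one q) k)
  rw [Real.exp_le_exp]
  have hsum : ∑ i ∈ Finset.range k, q ^ (i + 1) ≤ q / (1 - q) := by
    have h0 : ∑ i ∈ Finset.range k, q ^ (i + 1) = q * ∑ i ∈ Finset.range k, q ^ i := by
      rw [Finset.mul_sum]; exact Finset.sum_congr rfl fun i _ => by ring
    rw [h0, div_eq_mul_inv]
    refine mul_le_mul_of_nonneg_left ?_ hq0.le
    rw [geom_sum_eq (ne_of_lt hq1) k]
    have h2 : (q ^ k - 1) / (q - 1) = (1 - q ^ k) / (1 - q) := by
      rw [div_eq_div_iff (by linarith) (by linarith : (1:ℝ) - q ≠ 0)]; ring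
    rw [h2, inv_eq_one_div]
    have : q ^ k > 0 := pow_pos hq0 k
    gcongr <;> linarith
  have heq : -q / ((1 - q) * (1 - q)) = -(q / (1 - q)) / (1 - q) := by
    field_simp
  rw [heq]
  gcongr <;> linarith

include hq0 hq1 in
lemma D_ne (k : ℕ) : D q k ≠ 0 := (D_pos hq0 hq1 k).ne'

include hq0 hq1 in
lemma one_sub_pow_pos (k : ℕ) : (0:ℝ) < 1 - q ^ (k + 1) := by
  have : q ^ (k + 1) < 1 := pow_lt_one₀ hq0.le hq1 (Nat.succ_ne_zero k)
  linarith

include hq0 hq1 hα0 hα1 in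
lemma one_sub_aq_pos (n : ℕ) : (0:ℝ) < 1 - α * q ^ n := by
  have h1 : q ^ n ≤ 1 := pow_le_one₀ hq0.le hq1.le
  nlinarith

include hq0 hq1 hα0 in
lemma f_nonneg (j k : ℕ) : 0 ≤ f q α j k := by
  apply div_nonneg _ (D_pos hq0 hq1 k).le
  positivity

include hq0 hq1 hα0 in
lemma g_nonneg (j k : ℕ) : 0 ≤ g q α j k := by
  apply div_nonneg _ (D_pos hq0 hq1 k).le
  positivity

include hq0 hq1 hα0 in
lemma f_le (j k : ℕ) :
    f q α j k ≤ q ^ (j * k) * α ^ k / Real.exp (-q / ((1 - q) * (1 - q))) := by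
  rw [f, mul_comm (α ^ k)]
  exact div_le_div_of_nonneg_left (by positivity) (Real.exp_pos _) (D_ge hq0 hq1 k)

include hq0 hq1 hα0 in
lemma g_le (j k : ℕ) :
    g q α j k ≤ (k : ℝ) * q ^ (j * k) * α ^ k / Real.exp (-q / ((1 - q) * (1 - q))) := by
  rw [g, show (k:ℝ) * α ^ k * q ^ (j*k) = (k:ℝ) * q ^ (j*k) * α ^ k from by ring]
  exact div_le_div_of_nonneg_left (by positivity) (Real.exp_pos _) (D_ge hq0 hq1 k)

include hq0 hq1 hα0 hα1 in
lemma summable_f (j : ℕ) : Summable (f q α j) := by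
  refine Summable.of_nonneg_of_le (f_nonneg hq0 hq1 hα0 j) (fun k => ?_)
    (((summable_geometric_of_lt_one hα0.le hα1).mul_left
      ((Real.exp (-q / ((1 - q) * (1 - q))))⁻¹)))
  refine (f_le hq0 hq1 hα0 j k).trans ?_
  rw [div_eq_mul_inv, mul_comm _ ((Real.exp (-q / ((1 - q) * (1 - q))))⁻¹)]
  have h1 : q ^ (j * k) ≤ 1 := pow_le_one₀ hq0.le hq1.le
  have h2 : (0:ℝ) ≤ α ^ k := by positivity
  have h3 : q ^ (j*k) * α ^ k ≤ α ^ k := by nlinarith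
  exact mul_le_mul_of_nonneg_left h3 (inv_pos.2 (Real.exp_pos _)).le

include hq0 hq1 hα0 hα1 in
lemma summable_kgeom : Summable (fun k : ℕ => (k : ℝ) * α ^ k) := by
  have := summable_pow_mul_geometric_of_norm_lt_one 1 (by
    rw [Real.norm_eq_abs, abs_of_pos hα0]; exact hα1 : ‖α‖ < 1)
  simpa [pow_one] using this

include hq0 hq1 hα0 hα1 in
lemma summable_g (j : ℕ) : Summable (g q α j) := by
  refine Summable.of_nonneg_of_le (g_nonneg hq0 hq1 hα0 j) (fun k => ?_)
    ((summable_kgeom hq0 hq1 hα0 hα1).mul_left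
      ((Real.exp (-q / ((1 - q) * (1 - q))))⁻¹))
  refine (g_le hq0 hq1 hα0 j k).trans ?_
  rw [div_eq_mul_inv, mul_comm _ ((Real.exp (-q / ((1 - q) * (1 - q))))⁻¹)]
  have h1 : q ^ (j * k) ≤ 1 := pow_le_one₀ hq0.le hq1.le
  have h2 : (0:ℝ) ≤ (k:ℝ) * α ^ k := by positivity
  have h3 : (k:ℝ) * q ^ (j*k) * α ^ k ≤ (k:ℝ) * α ^ k := by nlinarith [pow_nonneg hq0.le (j*k), pow_nonneg hα0.le k, Nat.cast_nonneg (α := ℝ) k]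
  exact mul_le_mul_of_nonneg_left h3 (inv_pos.2 (Real.exp_pos _)).le

include hq0 hq1 hα0 hα1 in
lemma tsum_f_succ (j : ℕ) :
    ∑' k, f q α (j+1) k = (1 - α * q ^ j) * ∑' k, f q α j k := by
  set h : ℕ → ℝ := fun k => α ^ k * q ^ (j * k) * (1 - q ^ k) / D q k with hh_def
  have key : ∀ k, f q α j k - f q α (j+1) k = h k := by
    intro k
    rw [hh_def, f, f, div_sub_div_same]
    congr 1
    rw [show (j+1) * k = j * k + k from by ring, pow_add]
    ring
  have hsum_h : Summable h := ((summable_f hq0 hq1 hα0 hα1 j).sub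
    (summable_f hq0 hq1 hα0 hα1 (j+1))).congr key
  have e1 : ∑' k, h k = ∑' k, f q α j k - ∑' k, f q α (j+1) k := by
    rw [← Summable.tsum_sub (summable_f hq0 hq1 hα0 hα1 j) (summable_f hq0 hq1 hα0 hα1 (j+1))]
    exact tsum_congr fun k => (key k).symm
  have hsucc : ∀ k : ℕ, h (k+1) = α * q ^ j * f q α j k := by
    intro k
    rw [hh_def, f]
    simp only []
    rw [show D q (k+1) = D q k * (1 - q ^ (k+1)) from Finset.prod_range_succ _ _,
      show q ^ (j*(k+1)) = q ^ (j*k) * q ^ j from by rw [Nat.mul_succ, pow_add],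
      pow_succ]
    have hD := D_ne hq0 hq1 k
    have h1 := (one_sub_pow_pos hq0 hq1 k).ne'
    field_simp
  have e2 : ∑' k, h k = α * q ^ j * ∑' k, f q α j k := by
    rw [Summable.tsum_eq_zero_add hsum_h]
    have h0 : h 0 = 0 := by simp [hh_def]
    rw [h0, zero_add, tsum_congr hsucc, tsum_mul_left]
  rw [e1] at e2
  linarith [e2]

include hq0 hq1 hα0 hα1 in
lemma tsum_g_succ (j : ℕ) :
    ∑' k, g q α (j+1) k
      = (1 - α * q ^ j) * (∑' k, g q α j k) - α * q ^ j * ∑' k, f q α j k := by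
  set h : ℕ → ℝ := fun k => (k:ℝ) * α ^ k * q ^ (j * k) * (1 - q ^ k) / D q k with hh_def
  have key : ∀ k, g q α j k - g q α (j+1) k = h k := by
    intro k
    rw [hh_def, g, g, div_sub_div_same]
    congr 1
    rw [show (j+1) * k = j * k + k from by ring, pow_add]
    ring
  have hsum_h : Summable h := ((summable_g hq0 hq1 hα0 hα1 j).sub
    (summable_g hq0 hq1 hα0 hα1 (j+1))).congr key
  have e1 : ∑' k, h k = ∑' k, g q α j k - ∑' k, g q α (j+1) k := by
    rw [← Summable.tsum_sub (summable_g hq0 hq1 hα0 hα1 j) (summable_g hq0 hq1 hα0 hα1 (j+1))]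
    exact tsum_congr fun k => (key k).symm
  have hsucc : ∀ k : ℕ, h (k+1) = α * q ^ j * (g q α j k + f q α j k) := by
    intro k
    rw [hh_def, g, f]
    simp only []
    rw [show D q (k+1) = D q k * (1 - q ^ (k+1)) from Finset.prod_range_succ _ _,
      show q ^ (j*(k+1)) = q ^ (j*k) * q ^ j from by rw [Nat.mul_succ, pow_add],
      pow_succ]
    have hD := D_ne hq0 hq1 k
    have h1 := (one_sub_pow_pos hq0 hq1 k).ne'
    push_cast
    field_simp
  have e2 : ∑' k, h k = α * q ^ j * (∑' k, g q α j k + ∑' k, f q α j k) := by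
    rw [Summable.tsum_eq_zero_add hsum_h]
    have h0 : h 0 = 0 := by simp [hh_def]
    rw [h0, zero_add, tsum_congr hsucc, tsum_mul_left,
      Summable.tsum_add (summable_g hq0 hq1 hα0 hα1 j) (summable_f hq0 hq1 hα0 hα1 j)]
  rw [e1] at e2
  linarith [e2]

lemma P_succ (n : ℕ) : P q α (n+1) = P q α n * (1 - α * q ^ n) :=
  Finset.prod_range_succ _ _

include hq0 hq1 hα0 hα1 in
lemma tsum_f_eq (j : ℕ) :
    ∑' k, f q α j k = P q α j * ∑' k, f q α 0 k := by
  induction j with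
  | zero => simp [P]
  | succ n ih =>
      rw [tsum_f_succ hq0 hq1 hα0 hα1 n, ih, P_succ]
      ring

include hq0 hq1 hα0 hα1 in
lemma tsum_g_eq (n : ℕ) :
    ∑' k, g q α n k
      = P q α n * ((∑' k, g q α 0 k)
          - (∑' k, f q α 0 k) * ∑ i ∈ Finset.range n, α * q ^ i / (1 - α * q ^ i)) := by
  induction n with
  | zero => simp [P]
  | succ n ih =>
      rw [tsum_g_succ hq0 hq1 hα0 hα1 n, ih, tsum_f_eq hq0 hq1 hα0 hα1 n,
        P_succ, Finset.sum_range_succ]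
      have h1 := (one_sub_aq_pos hq0 hq1 hα0 hα1 n).ne'
      field_simp
      ring

include hq0 hq1 hα0 hα1 in
lemma multipliable_P : Multipliable (fun i : ℕ => 1 - α * q ^ i) := by
  apply Real.multipliable_of_summable_log (fun n => one_sub_aq_pos hq0 hq1 hα0 hα1 n) ?_
  refine Summable.of_norm_bounded (g := fun n => (α / (1 - α)) * q ^ n)
    ((summable_geometric_of_lt_one hq0.le hq1).mul_left _) (fun n => ?_)
  have hq1n : q ^ n ≤ 1 := pow_le_one₀ hq0.le hq1.le
  have hqn : (0:ℝ) ≤ q ^ n := pow_nonneg hq0.le n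
  have hx0 : 0 ≤ α * q ^ n := by positivity
  have hx1 : α * q ^ n ≤ α := by nlinarith
  have hpos := one_sub_aq_pos hq0 hq1 hα0 hα1 n
  have hlow : -(α * q ^ n) / (1 - α) ≤ Real.log (1 - α * q ^ n) := by
    have h := exp_le_one_sub hx0 hx1 hα1
    calc -(α * q ^ n) / (1 - α)
        = Real.log (Real.exp (-(α * q ^ n) / (1 - α))) := (Real.log_exp _).symm
      _ ≤ _ := Real.log_le_log (Real.exp_pos _) h
  have hup : Real.log (1 - α * q ^ n) ≤ 0 := Real.log_nonpos (by linarith) (by linarith)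
  rw [Real.norm_eq_abs, abs_le]
  have h1α : (0:ℝ) < 1 - α := by linarith
  constructor
  · calc -(α / (1 - α) * q ^ n) = -(α * q ^ n) / (1 - α) := by ring
      _ ≤ _ := hlow
  · exact hup.trans (by positivity)

include hq0 hq1 hα0 hα1 in
lemma tendsto_tsum_f : Tendsto (fun j => ∑' k, f q α j k) atTop (𝓝 1) := by
  have hrep : ∀ j, ∑' k, f q α j k = 1 + ∑' k, f q α j (k + 1) := by
    intro j
    rw [Summable.tsum_eq_zero_add (summable_f hq0 hq1 hα0 hα1 j)]
    congr 1
    simp [f, D]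
  set cE := Real.exp (-q / ((1 - q) * (1 - q))) with hcE
  have hsumb : Summable (fun k : ℕ => cE⁻¹ * α ^ (k + 1)) := by
    refine ((summable_geometric_of_lt_one hα0.le hα1).mul_left (cE⁻¹ * α)).congr fun k => ?_
    ring
  set K := ∑' k : ℕ, cE⁻¹ * α ^ (k + 1) with hK
  have hb : ∀ j, ∑' k, f q α j (k + 1) ≤ K * q ^ j := by
    intro j
    have hterm : ∀ k : ℕ, f q α j (k + 1) ≤ (cE⁻¹ * α ^ (k + 1)) * q ^ j := by
      intro k
      have h1 : q ^ (j * (k + 1)) ≤ q ^ j :=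
        pow_le_pow_of_le_one hq0.le hq1.le (Nat.le_mul_of_pos_right j (Nat.succ_pos k))
      refine (f_le hq0 hq1 hα0 j (k + 1)).trans ?_
      rw [div_eq_mul_inv]
      have : q ^ (j * (k + 1)) * α ^ (k + 1) * cE⁻¹ ≤ q ^ j * α ^ (k + 1) * cE⁻¹ := by
        have hα' : (0:ℝ) ≤ α ^ (k + 1) := by positivity
        have hc' : (0:ℝ) ≤ cE⁻¹ := by positivity
        exact mul_le_mul_of_nonneg_right (mul_le_mul_of_nonneg_right h1 hα') hc'
      linarith [this, (by ring : (cE⁻¹ * α ^ (k + 1)) * q ^ j = q ^ j * α ^ (k + 1) * cE⁻¹)]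
    have hsum1 : Summable (fun k : ℕ => f q α j (k + 1)) :=
      (summable_nat_add_iff 1).2 (summable_f hq0 hq1 hα0 hα1 j)
    calc ∑' k, f q α j (k + 1) ≤ ∑' k, (cE⁻¹ * α ^ (k + 1)) * q ^ j :=
          Summable.tsum_le_tsum hterm hsum1 (hsumb.mul_right _)
      _ = K * q ^ j := tsum_mul_right
  have hr : Tendsto (fun j => ∑' k, f q α j (k + 1)) atTop (𝓝 0) := by
    refine squeeze_zero (fun j => tsum_nonneg fun k => f_nonneg hq0 hq1 hα0 j (k + 1)) hb ?_
    simpa using (tendsto_pow_atTop_nhds_zero_of_lt_one hq0.le hq1).const_mul K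
  have htend : Tendsto (fun j => 1 + ∑' k, f q α j (k + 1)) atTop (𝓝 (1 + 0)) :=
    Tendsto.add tendsto_const_nhds hr
  rw [add_zero] at htend
  exact htend.congr fun j => (hrep j).symm

include hq0 hq1 hα0 hα1 in
lemma tendsto_tsum_g : Tendsto (fun j => ∑' k, g q α j k) atTop (𝓝 0) := by
  set cE := Real.exp (-q / ((1 - q) * (1 - q))) with hcE
  have hsumb : Summable (fun k : ℕ => cE⁻¹ * ((k : ℝ) * α ^ k)) :=
    (summable_kgeom hq0 hq1 hα0 hα1).mul_left _
  set K := ∑' k : ℕ, cE⁻¹ * ((k : ℝ) * α ^ k) with hK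
  have hb : ∀ j, ∑' k, g q α j k ≤ K * q ^ j := by
    intro j
    have hterm : ∀ k : ℕ, g q α j k ≤ (cE⁻¹ * ((k : ℝ) * α ^ k)) * q ^ j := by
      intro k
      match k with
      | 0 => simp [g]
      | (m + 1) =>
        have h1 : q ^ (j * (m + 1)) ≤ q ^ j :=
          pow_le_pow_of_le_one hq0.le hq1.le (Nat.le_mul_of_pos_right j (Nat.succ_pos m))
        refine (g_le hq0 hq1 hα0 j (m + 1)).trans ?_
        rw [div_eq_mul_inv]
        have hα' : (0:ℝ) ≤ α ^ (m + 1) := by positivity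
        have hc' : (0:ℝ) ≤ cE⁻¹ := by positivity
        have hm : (0:ℝ) ≤ ((m : ℝ) + 1) := by positivity
        have : ((m + 1 : ℕ) : ℝ) * q ^ (j * (m + 1)) * α ^ (m + 1) * cE⁻¹
            ≤ ((m + 1 : ℕ) : ℝ) * q ^ j * α ^ (m + 1) * cE⁻¹ := by
          push_cast
          gcongr
        calc ((m + 1 : ℕ) : ℝ) * q ^ (j * (m + 1)) * α ^ (m + 1) * cE⁻¹
            ≤ ((m + 1 : ℕ) : ℝ) * q ^ j * α ^ (m + 1) * cE⁻¹ := this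
          _ = (cE⁻¹ * (((m + 1 : ℕ) : ℝ) * α ^ (m + 1))) * q ^ j := by ring
    calc ∑' k, g q α j k ≤ ∑' k : ℕ, (cE⁻¹ * ((k : ℝ) * α ^ k)) * q ^ j :=
          Summable.tsum_le_tsum hterm (summable_g hq0 hq1 hα0 hα1 j) (hsumb.mul_right _)
      _ = K * q ^ j := tsum_mul_right
  refine squeeze_zero (fun j => tsum_nonneg fun k => g_nonneg hq0 hq1 hα0 j k) hb ?_
  simpa using (tendsto_pow_atTop_nhds_zero_of_lt_one hq0.le hq1).const_mul K

include hq0 hq1 hα0 hα1 in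
lemma summable_S : Summable (fun i : ℕ => α * q ^ i / (1 - α * q ^ i)) := by
  have h1α : (0:ℝ) < 1 - α := by linarith
  refine Summable.of_nonneg_of_le (fun i => ?_) (fun i => ?_)
    ((summable_geometric_of_lt_one hq0.le hq1).mul_left (α / (1 - α)))
  · exact div_nonneg (by positivity) (one_sub_aq_pos hq0 hq1 hα0 hα1 i).le
  · have hq1n : q ^ i ≤ 1 := pow_le_one₀ hq0.le hq1.le
    have hqn : (0:ℝ) ≤ q ^ i := pow_nonneg hq0.le i
    have h2 : 1 - α ≤ 1 - α * q ^ i := by nlinarith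
    calc α * q ^ i / (1 - α * q ^ i) ≤ α * q ^ i / (1 - α) :=
          div_le_div_of_nonneg_left (by positivity) h1α h2
      _ = α / (1 - α) * q ^ i := by ring

include hq0 hq1 hα0 hα1 in
lemma euler_and_key :
    (∏' i : ℕ, (1 - α * q ^ i)) * (∑' k, f q α 0 k) = 1 ∧
    (∏' i : ℕ, (1 - α * q ^ i)) * (∑' k, g q α 0 k)
      = ∑' i : ℕ, α * q ^ i / (1 - α * q ^ i) := by
  set C := ∏' i : ℕ, (1 - α * q ^ i) with hC
  set V := ∑' k, f q α 0 k with hV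
  set G0 := ∑' k, g q α 0 k with hG
  set S := ∑' i : ℕ, α * q ^ i / (1 - α * q ^ i) with hS
  have hP : Tendsto (P q α) atTop (𝓝 C) :=
    (multipliable_P hq0 hq1 hα0 hα1).hasProd.tendsto_prod_nat
  have hfV : Tendsto (fun j => ∑' k, f q α j k) atTop (𝓝 1) :=
    tendsto_tsum_f hq0 hq1 hα0 hα1
  have hCV : C * V = 1 :=
    tendsto_nhds_unique ((hP.mul_const V).congr
      (fun j => (tsum_f_eq hq0 hq1 hα0 hα1 j).symm)) hfV
  have hg0 : Tendsto (fun j => ∑' k, g q α j k) atTop (𝓝 0) :=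
    tendsto_tsum_g hq0 hq1 hα0 hα1
  have hs : Tendsto (fun n => ∑ i ∈ Finset.range n, α * q ^ i / (1 - α * q ^ i))
      atTop (𝓝 S) := (summable_S hq0 hq1 hα0 hα1).hasSum.tendsto_sum_nat
  have h2 : Tendsto (fun n => P q α n
      * (G0 - V * ∑ i ∈ Finset.range n, α * q ^ i / (1 - α * q ^ i)))
      atTop (𝓝 (C * (G0 - V * S))) :=
    hP.mul (tendsto_const_nhds.sub (hs.const_mul V))
  have h3 : C * (G0 - V * S) = 0 :=
    tendsto_nhds_unique (h2.congr fun n => by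
      rw [← tsum_g_eq hq0 hq1 hα0 hα1 n]) hg0
  have hC0 : C ≠ 0 := by
    intro h
    rw [h, zero_mul] at hCV
    exact zero_ne_one hCV
  refine ⟨hCV, ?_⟩
  have h4 : G0 - V * S = 0 := by
    rcases mul_eq_zero.1 h3 with h | h
    · exact absurd h hC0
    · exact h
  have hG0 : G0 = V * S := by linarith
  calc C * G0 = C * V * S := by rw [hG0]; ring
    _ = S := by rw [hCV, one_mul]

end

end Stmt6Aux

/-- For `q ∈ (0,1)` and `α ∈ (0,1)`, the mean of the q-geometric
distribution with parameter `α` equals `α Σ q^k/(1 − α q^k)`, and the particle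
density `ρ = 1/(1 + E(gap))` equals
`log q / (log q + log(1−q) + Ψ_q(log α/log q))`, where `Ψ_q` is the q-digamma
function given by its series. -/
theorem stmt_6 (q α : ℝ) (hq : q ∈ Set.Ioo (0 : ℝ) 1) (hα : α ∈ Set.Ioo (0 : ℝ) 1) :
    let w : ℕ → ℝ := fun k =>
      (∏' j : ℕ, (1 - α * q ^ j)) * α ^ k / ∏ i ∈ Finset.range k, (1 - q ^ (i + 1))
    let Ψ : ℝ → ℝ := fun z =>
      -Real.log (1 - q) + Real.log q * ∑' k : ℕ, q ^ (z + (k : ℝ)) / (1 - q ^ (z + (k : ℝ)))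
    (∑' k : ℕ, (k : ℝ) * w k) = α * ∑' k : ℕ, q ^ k / (1 - α * q ^ k) ∧
    1 / (1 + ∑' k : ℕ, (k : ℝ) * w k)
      = Real.log q /
        (Real.log q + Real.log (1 - q) + Ψ (Real.log α / Real.log q)) := by
  obtain ⟨hq0, hq1⟩ := hq
  obtain ⟨hα0, hα1⟩ := hα
  intro w Ψ
  obtain ⟨heuler, hkey⟩ := Stmt6Aux.euler_and_key hq0 hq1 hα0 hα1
  set C := ∏' i : ℕ, (1 - α * q ^ i) with hC
  set S := ∑' i : ℕ, α * q ^ i / (1 - α * q ^ i) with hS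
  have hw : ∀ k : ℕ, (k : ℝ) * w k = C * Stmt6Aux.g q α 0 k := by
    intro k
    show (k : ℝ) * (C * α ^ k / ∏ i ∈ Finset.range k, (1 - q ^ (i + 1)))
      = C * ((k : ℝ) * α ^ k * q ^ (0 * k) / Stmt6Aux.D q k)
    rw [Stmt6Aux.D, Nat.zero_mul, pow_zero]
    ring
  have hEeq : (∑' k : ℕ, (k : ℝ) * w k) = S := by
    rw [tsum_congr hw, tsum_mul_left, hkey]
  have hSalt : S = α * ∑' k : ℕ, q ^ k / (1 - α * q ^ k) := by
    rw [← tsum_mul_left]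
    exact tsum_congr fun k => by rw [mul_div_assoc]
  have hSnn : 0 ≤ S := tsum_nonneg fun i =>
    div_nonneg (by positivity) (Stmt6Aux.one_sub_aq_pos hq0 hq1 hα0 hα1 i).le
  refine ⟨by rw [hEeq, hSalt], ?_⟩
  have hlq : Real.log q ≠ 0 := (Real.log_neg hq0 hq1).ne
  have hterm : ∀ k : ℕ, q ^ (Real.log α / Real.log q + (k : ℝ)) = α * q ^ k := by
    intro k
    rw [Real.rpow_add hq0, Real.rpow_natCast]
    congr 1
    rw [Real.rpow_def_of_pos hq0, mul_comm (Real.log q), div_mul_cancel₀ _ hlq, Real.exp_log hα0]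
  have hΨ : Ψ (Real.log α / Real.log q) = -Real.log (1 - q) + Real.log q * S := by
    show -Real.log (1 - q) + Real.log q * ∑' k : ℕ,
        q ^ (Real.log α / Real.log q + (k : ℝ)) / (1 - q ^ (Real.log α / Real.log q + (k : ℝ)))
      = -Real.log (1 - q) + Real.log q * S
    congr 2
    exact tsum_congr fun k => by rw [hterm k]
  rw [hEeq, hΨ]
  have hden : Real.log q + Real.log (1 - q) + (-Real.log (1 - q) + Real.log q * S)
      = Real.log q * (1 + S) := by ring
  rw [hden]
  rw [eq_div_iff (by
    intro h
    rcases mul_eq_zero.1 h with h | h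
    · exact hlq h
    · nlinarith)]
  field_simp
end

section
/- Let q ∈ (0,1). The functions θ ↦ (f(θ) − 1)/κ(θ) and θ ↦ 1/κ(θ) are differentiable on (0,∞), and for every θ > 0 one has the identity d/dθ[(f(θ) − 1)/κ(θ)] = −(q^θ κ(θ) − f(θ) + 1) · d/dθ[1/κ(θ)]. -/
open Real Set

namespace Stmt7Aux

variable {q : ℝ}

lemma xpos (hq0 : 0 < q) (a : ℝ) : 0 < q ^ a := Real.rpow_pos_of_pos hq0 a

lemma xlt1 (hq0 : 0 < q) (hq1 : q < 1) {a : ℝ} (ha : 0 < a) : q ^ a < 1 :=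
  Real.rpow_lt_one hq0.le hq1 ha

lemma osp (hq0 : 0 < q) (hq1 : q < 1) {a : ℝ} (ha : 0 < a) : 0 < 1 - q ^ a := by
  linarith [xlt1 hq0 hq1 ha]

lemma hasDerivAt_x (hq0 : 0 < q) (k : ℕ) (θ : ℝ) :
    HasDerivAt (fun t : ℝ => q ^ (t + (k : ℝ))) (q ^ (θ + (k : ℝ)) * Real.log q) θ := by
  have h := (Real.hasStrictDerivAt_const_rpow hq0 (θ + (k : ℝ))).hasDerivAt
  have h2 : HasDerivAt (fun t : ℝ => t + (k : ℝ)) 1 θ := (hasDerivAt_id θ).add_const _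
  simpa [Function.comp_def] using h.comp θ h2

noncomputable def gd (q : ℝ) (k : ℕ) (θ : ℝ) : ℝ :=
  2 * Real.log q * q ^ (k : ℕ) * q ^ (θ + (k : ℝ)) / (1 - q ^ (θ + (k : ℝ))) ^ 3

noncomputable def hdv (q : ℝ) (k : ℕ) (θ : ℝ) : ℝ :=
  Real.log q * q ^ (θ + (k : ℝ)) / (1 - q ^ (θ + (k : ℝ))) ^ 2

lemma hasDerivAt_g (hq0 : 0 < q) (hq1 : q < 1) (k : ℕ) {θ : ℝ} (hθ : 0 < θ) :
    HasDerivAt (fun t => q ^ (k : ℕ) / (1 - q ^ (t + (k : ℝ))) ^ 2) (gd q k θ) θ := by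
  have hk : (0:ℝ) < θ + (k : ℝ) := by linarith [Nat.cast_nonneg (α := ℝ) k]
  have hne : (1 - q ^ (θ + (k : ℝ))) ≠ 0 := (osp hq0 hq1 hk).ne'
  have hden : HasDerivAt (fun t : ℝ => (1 - q ^ (t + (k : ℝ))) ^ 2)
      ((2:ℕ) * (1 - q ^ (θ + (k : ℝ))) ^ 1 * (-(q ^ (θ + (k : ℝ)) * Real.log q))) θ :=
    ((hasDerivAt_x hq0 k θ).const_sub 1).pow 2
  have := (hasDerivAt_const θ ((q:ℝ) ^ (k : ℕ))).div hden (pow_ne_zero 2 hne)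
  refine this.congr_deriv ?_
  symm
  unfold gd
  field_simp
  ring

lemma hasDerivAt_h (hq0 : 0 < q) (hq1 : q < 1) (k : ℕ) {θ : ℝ} (hθ : 0 < θ) :
    HasDerivAt (fun t => q ^ (t + (k : ℝ)) / (1 - q ^ (t + (k : ℝ)))) (hdv q k θ) θ := by
  have hk : (0:ℝ) < θ + (k : ℝ) := by linarith [Nat.cast_nonneg (α := ℝ) k]
  have hne : (1 - q ^ (θ + (k : ℝ))) ≠ 0 := (osp hq0 hq1 hk).ne'
  have := (hasDerivAt_x hq0 k θ).div ((hasDerivAt_x hq0 k θ).const_sub 1) hne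
  refine this.congr_deriv ?_
  symm
  unfold hdv
  field_simp
  ring

lemma x_le_geo (hq0 : 0 < q) (hq1 : q < 1) {θ : ℝ} (hθ : 0 ≤ θ) (k : ℕ) :
    q ^ (θ + (k : ℝ)) ≤ q ^ k := by
  rw [← Real.rpow_natCast q k]
  exact Real.rpow_le_rpow_of_exponent_ge hq0 hq1.le (by linarith)

lemma x_le_eps (hq0 : 0 < q) (hq1 : q < 1) {ε θ : ℝ} (hθ : ε ≤ θ) (k : ℕ) :
    q ^ (θ + (k : ℝ)) ≤ q ^ ε :=
  Real.rpow_le_rpow_of_exponent_ge hq0 hq1.le (by linarith [Nat.cast_nonneg (α := ℝ) k])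

lemma gd_bound (hq0 : 0 < q) (hq1 : q < 1) {ε y : ℝ} (hε : 0 < ε) (hy : ε < y) (k : ℕ) :
    ‖gd q k y‖ ≤ (2 * |Real.log q| / (1 - q ^ ε) ^ 3) * q ^ k := by
  have hk : (0:ℝ) < y + (k : ℝ) := by linarith [Nat.cast_nonneg (α := ℝ) k]
  have hx0 : 0 < q ^ (y + (k : ℝ)) := xpos hq0 _
  have hx1 : q ^ (y + (k : ℝ)) < 1 := xlt1 hq0 hq1 hk
  have hxε : q ^ (y + (k : ℝ)) ≤ q ^ ε := x_le_eps hq0 hq1 hy.le k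
  have hεp : 0 < 1 - q ^ ε := osp hq0 hq1 hε
  have h1 : 0 < 1 - q ^ (y + (k : ℝ)) := by linarith
  rw [Real.norm_eq_abs]
  unfold gd
  rw [abs_div, abs_mul, abs_mul, abs_mul, abs_two, abs_of_pos hx0,
    abs_of_pos (pow_pos hq0 k), abs_of_pos (pow_pos h1 3)]
  calc 2 * |Real.log q| * q ^ k * q ^ (y + (k : ℝ)) / (1 - q ^ (y + (k : ℝ))) ^ 3
      ≤ 2 * |Real.log q| * q ^ k * 1 / (1 - q ^ ε) ^ 3 := by
        have hx1' : q ^ (y + (k : ℝ)) ≤ 1 := hx1.le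
        gcongr
      _ = (2 * |Real.log q| / (1 - q ^ ε) ^ 3) * q ^ k := by ring

lemma hdv_bound (hq0 : 0 < q) (hq1 : q < 1) {ε y : ℝ} (hε : 0 < ε) (hy : ε < y) (k : ℕ) :
    ‖hdv q k y‖ ≤ (|Real.log q| / (1 - q ^ ε) ^ 2) * q ^ k := by
  have hk : (0:ℝ) < y + (k : ℝ) := by linarith [Nat.cast_nonneg (α := ℝ) k]
  have hx0 : 0 < q ^ (y + (k : ℝ)) := xpos hq0 _
  have hxε : q ^ (y + (k : ℝ)) ≤ q ^ ε := x_le_eps hq0 hq1 hy.le k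
  have hxk : q ^ (y + (k : ℝ)) ≤ q ^ k := x_le_geo hq0 hq1 (by linarith) k
  have hεp : 0 < 1 - q ^ ε := osp hq0 hq1 hε
  have h1 : 0 < 1 - q ^ (y + (k : ℝ)) := by linarith
  rw [Real.norm_eq_abs]
  unfold hdv
  rw [abs_div, abs_mul, abs_of_pos hx0, abs_of_pos (pow_pos h1 2)]
  calc |Real.log q| * q ^ (y + (k : ℝ)) / (1 - q ^ (y + (k : ℝ))) ^ 2
      ≤ |Real.log q| * q ^ k / (1 - q ^ ε) ^ 2 := by gcongr
      _ = (|Real.log q| / (1 - q ^ ε) ^ 2) * q ^ k := by ring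

lemma summable_geo (hq0 : 0 < q) (hq1 : q < 1) (C : ℝ) :
    Summable (fun k : ℕ => C * q ^ k) :=
  (summable_geometric_of_lt_one hq0.le hq1).mul_left C

lemma summable_g (hq0 : 0 < q) (hq1 : q < 1) {θ : ℝ} (hθ : 0 < θ) :
    Summable (fun k : ℕ => q ^ (k : ℕ) / (1 - q ^ (θ + (k : ℝ))) ^ 2) := by
  have hθp : 0 < 1 - q ^ θ := osp hq0 hq1 hθ
  refine Summable.of_nonneg_of_le (fun k => ?_) (fun k => ?_)
    (summable_geo hq0 hq1 (1 / (1 - q ^ θ) ^ 2))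
  · have hk : (0:ℝ) < θ + (k : ℝ) := by linarith [Nat.cast_nonneg (α := ℝ) k]
    have := osp hq0 hq1 hk
    positivity
  · have hk : (0:ℝ) < θ + (k : ℝ) := by linarith [Nat.cast_nonneg (α := ℝ) k]
    have h1 : 0 < 1 - q ^ (θ + (k : ℝ)) := osp hq0 hq1 hk
    have hle : q ^ θ + 0 ≤ q ^ θ + 0 := le_refl _
    have hxε : q ^ (θ + (k : ℝ)) ≤ q ^ θ := x_le_eps hq0 hq1 (le_refl θ) k
    calc q ^ (k:ℕ) / (1 - q ^ (θ + (k : ℝ))) ^ 2 ≤ q ^ (k:ℕ) / (1 - q ^ θ) ^ 2 := by gcongr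
      _ = 1 / (1 - q ^ θ) ^ 2 * q ^ k := by ring

lemma summable_h (hq0 : 0 < q) (hq1 : q < 1) {θ : ℝ} (hθ : 0 < θ) :
    Summable (fun k : ℕ => q ^ (θ + (k : ℝ)) / (1 - q ^ (θ + (k : ℝ)))) := by
  have hθp : 0 < 1 - q ^ θ := osp hq0 hq1 hθ
  refine Summable.of_nonneg_of_le (fun k => ?_) (fun k => ?_)
    (summable_geo hq0 hq1 (1 / (1 - q ^ θ)))
  · have hk : (0:ℝ) < θ + (k : ℝ) := by linarith [Nat.cast_nonneg (α := ℝ) k]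
    have := osp hq0 hq1 hk
    have := xpos hq0 (θ + (k:ℝ))
    positivity
  · have hk : (0:ℝ) < θ + (k : ℝ) := by linarith [Nat.cast_nonneg (α := ℝ) k]
    have h1 : 0 < 1 - q ^ (θ + (k : ℝ)) := osp hq0 hq1 hk
    have hxε : q ^ (θ + (k : ℝ)) ≤ q ^ θ := x_le_eps hq0 hq1 (le_refl θ) k
    have hxk : q ^ (θ + (k : ℝ)) ≤ q ^ k := x_le_geo hq0 hq1 hθ.le k
    calc q ^ (θ + (k : ℝ)) / (1 - q ^ (θ + (k : ℝ))) ≤ q ^ (k:ℕ) / (1 - q ^ θ) := by gcongr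
      _ = 1 / (1 - q ^ θ) * q ^ k := by ring

lemma summable_f (hq0 : 0 < q) (hq1 : q < 1) {θ : ℝ} (hθ : 0 < θ) :
    Summable (fun k : ℕ => q ^ (2 * θ + 2 * (k : ℝ)) / (1 - q ^ (θ + (k : ℝ))) ^ 2) := by
  have hθp : 0 < 1 - q ^ θ := osp hq0 hq1 hθ
  refine Summable.of_nonneg_of_le (fun k => ?_) (fun k => ?_)
    (summable_geo hq0 hq1 (1 / (1 - q ^ θ) ^ 2))
  · have hk : (0:ℝ) < θ + (k : ℝ) := by linarith [Nat.cast_nonneg (α := ℝ) k]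
    have := osp hq0 hq1 hk
    have := xpos hq0 (2 * θ + 2 * (k:ℝ))
    positivity
  · have hk : (0:ℝ) < θ + (k : ℝ) := by linarith [Nat.cast_nonneg (α := ℝ) k]
    have h1 : 0 < 1 - q ^ (θ + (k : ℝ)) := osp hq0 hq1 hk
    have hxε : q ^ (θ + (k : ℝ)) ≤ q ^ θ := x_le_eps hq0 hq1 (le_refl θ) k
    have hxk : q ^ (2 * θ + 2 * (k : ℝ)) ≤ q ^ (k:ℕ) := by
      rw [← Real.rpow_natCast q k]
      exact Real.rpow_le_rpow_of_exponent_ge hq0 hq1.le (by nlinarith [Nat.cast_nonneg (α := ℝ) k])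
    calc q ^ (2*θ + 2*(k : ℝ)) / (1 - q ^ (θ + (k : ℝ))) ^ 2 ≤ q ^ (k:ℕ) / (1 - q ^ θ) ^ 2 := by
          gcongr
      _ = 1 / (1 - q ^ θ) ^ 2 * q ^ k := by ring

lemma hasDerivAt_kappa (hq0 : 0 < q) (hq1 : q < 1) {θ : ℝ} (hθ : 0 < θ) :
    HasDerivAt (fun t => ∑' k : ℕ, q ^ (k : ℕ) / (1 - q ^ (t + (k : ℝ))) ^ 2)
      (∑' k : ℕ, gd q k θ) θ := by
  have hε : 0 < θ / 2 := by linarith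
  have hmem : θ ∈ Ioi (θ / 2) := by simp [Set.mem_Ioi]; linarith
  exact hasDerivAt_tsum_of_isPreconnected
    (summable_geo hq0 hq1 (2 * |Real.log q| / (1 - q ^ (θ/2)) ^ 3))
    isOpen_Ioi isPreconnected_Ioi
    (fun k y hy => hasDerivAt_g hq0 hq1 k (lt_trans hε hy))
    (fun k y hy => gd_bound hq0 hq1 hε hy k)
    hmem (summable_g hq0 hq1 hθ) hmem

lemma hasDerivAt_S (hq0 : 0 < q) (hq1 : q < 1) {θ : ℝ} (hθ : 0 < θ) :
    HasDerivAt (fun t => ∑' k : ℕ, q ^ (t + (k : ℝ)) / (1 - q ^ (t + (k : ℝ))))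
      (∑' k : ℕ, hdv q k θ) θ := by
  have hε : 0 < θ / 2 := by linarith
  have hmem : θ ∈ Ioi (θ / 2) := by simp [Set.mem_Ioi]; linarith
  exact hasDerivAt_tsum_of_isPreconnected
    (summable_geo hq0 hq1 (|Real.log q| / (1 - q ^ (θ/2)) ^ 2))
    isOpen_Ioi isPreconnected_Ioi
    (fun k y hy => hasDerivAt_h hq0 hq1 k (lt_trans hε hy))
    (fun k y hy => hdv_bound hq0 hq1 hε hy k)
    hmem (summable_h hq0 hq1 hθ) hmem

lemma S_deriv_eq (hq0 : 0 < q) {θ : ℝ} :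
    (∑' k : ℕ, hdv q k θ)
      = Real.log q * (q ^ θ * ∑' k : ℕ, q ^ (k : ℕ) / (1 - q ^ (θ + (k : ℝ))) ^ 2) := by
  have h : ∀ k : ℕ, hdv q k θ
      = (Real.log q * q ^ θ) * (q ^ (k : ℕ) / (1 - q ^ (θ + (k : ℝ))) ^ 2) := by
    intro k
    unfold hdv
    rw [Real.rpow_add hq0, Real.rpow_natCast]
    ring
  rw [tsum_congr h, tsum_mul_left, mul_assoc]

lemma key_id (hq0 : 0 < q) (hq1 : q < 1) {θ : ℝ} (hθ : 0 < θ) :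
    (∑' k : ℕ, q ^ (2 * θ + 2 * (k : ℝ)) / (1 - q ^ (θ + (k : ℝ))) ^ 2)
      = q ^ θ * (∑' k : ℕ, q ^ (k : ℕ) / (1 - q ^ (θ + (k : ℝ))) ^ 2)
        - ∑' k : ℕ, q ^ (θ + (k : ℝ)) / (1 - q ^ (θ + (k : ℝ))) := by
  have h1 : q ^ θ * (∑' k : ℕ, q ^ (k : ℕ) / (1 - q ^ (θ + (k : ℝ))) ^ 2)
      = ∑' k : ℕ, (q ^ (θ + (k : ℝ)) / (1 - q ^ (θ + (k : ℝ)))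
          + q ^ (2 * θ + 2 * (k : ℝ)) / (1 - q ^ (θ + (k : ℝ))) ^ 2) := by
    rw [← tsum_mul_left]
    congr 1
    funext k
    have hk : (0:ℝ) < θ + (k : ℝ) := by linarith [Nat.cast_nonneg (α := ℝ) k]
    have hne : (1 - q ^ (θ + (k : ℝ))) ≠ 0 := (osp hq0 hq1 hk).ne'
    have e1 : q ^ θ * q ^ (k : ℕ) = q ^ (θ + (k : ℝ)) := by
      rw [Real.rpow_add hq0, Real.rpow_natCast]
    have e2 : q ^ (2 * θ + 2 * (k : ℝ)) = q ^ (θ + (k : ℝ)) * q ^ (θ + (k : ℝ)) := by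
      rw [← Real.rpow_add hq0]
      congr 1
      ring
    rw [← mul_div_assoc, e1, e2]
    field_simp
    ring
  rw [h1, Summable.tsum_add (summable_h hq0 hq1 hθ) (summable_f hq0 hq1 hθ)]
  ring

lemma kappa_pos (hq0 : 0 < q) (hq1 : q < 1) {θ : ℝ} (hθ : 0 < θ) :
    0 < ∑' k : ℕ, q ^ (k : ℕ) / (1 - q ^ (θ + (k : ℝ))) ^ 2 := by
  have h0 : (0:ℝ) < q ^ (0 : ℕ) / (1 - q ^ (θ + ((0:ℕ) : ℝ))) ^ 2 := by
    have hk : (0:ℝ) < θ + ((0:ℕ) : ℝ) := by norm_num; linarith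
    have := osp hq0 hq1 hk
    positivity
  refine Summable.tsum_pos (summable_g hq0 hq1 hθ) (fun k => ?_) 0 h0
  have hk : (0:ℝ) < θ + (k : ℝ) := by linarith [Nat.cast_nonneg (α := ℝ) k]
  have := osp hq0 hq1 hk
  positivity

end Stmt7Aux

open Stmt7Aux in
/-- For `q ∈ (0,1)`, the functions `θ ↦ (f(θ)−1)/κ(θ)` and
`θ ↦ 1/κ(θ)` are differentiable on `(0,∞)` and for every `θ > 0`,
`d/dθ[(f−1)/κ] = −(q^θ κ(θ) − f(θ) + 1) · d/dθ[1/κ]`. -/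
theorem stmt_7 (q : ℝ) (hq : q ∈ Set.Ioo (0 : ℝ) 1) :
    let κ : ℝ → ℝ := fun θ => ∑' k : ℕ, q ^ (k : ℕ) / (1 - q ^ (θ + (k : ℝ))) ^ 2
    let f : ℝ → ℝ := fun θ => ∑' k : ℕ, q ^ (2 * θ + 2 * (k : ℝ)) / (1 - q ^ (θ + (k : ℝ))) ^ 2
    DifferentiableOn ℝ (fun θ => (f θ - 1) / κ θ) (Set.Ioi 0) ∧
    DifferentiableOn ℝ (fun θ => 1 / κ θ) (Set.Ioi 0) ∧
    ∀ θ : ℝ, 0 < θ →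
      deriv (fun u => (f u - 1) / κ u) θ
        = -(q ^ θ * κ θ - f θ + 1) * deriv (fun u => 1 / κ u) θ := by
  obtain ⟨hq0, hq1⟩ := hq
  intro κ f
  -- basic derivative facts at any θ > 0
  have hκd : ∀ θ : ℝ, 0 < θ → HasDerivAt κ (∑' k : ℕ, gd q k θ) θ :=
    fun θ hθ => hasDerivAt_kappa hq0 hq1 hθ
  have hκpos : ∀ θ : ℝ, 0 < θ → 0 < κ θ := fun θ hθ => kappa_pos hq0 hq1 hθ
  have hfd : ∀ θ : ℝ, 0 < θ → HasDerivAt f (q ^ θ * ∑' k : ℕ, gd q k θ) θ := by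
    intro θ hθ
    have hqθ : HasDerivAt (fun t : ℝ => q ^ t) (q ^ θ * Real.log q) θ :=
      (Real.hasStrictDerivAt_const_rpow hq0 θ).hasDerivAt
    have hS := hasDerivAt_S hq0 hq1 hθ
    have hmain : HasDerivAt (fun t => q ^ t * κ t
        - ∑' k : ℕ, q ^ (t + (k : ℝ)) / (1 - q ^ (t + (k : ℝ))))
        ((q ^ θ * Real.log q) * κ θ + q ^ θ * (∑' k : ℕ, gd q k θ)
          - ∑' k : ℕ, hdv q k θ) θ :=
      (hqθ.mul (hκd θ hθ)).sub hS
    have heq : f =ᶠ[nhds θ] (fun t => q ^ t * κ t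
        - ∑' k : ℕ, q ^ (t + (k : ℝ)) / (1 - q ^ (t + (k : ℝ)))) := by
      filter_upwards [Ioi_mem_nhds hθ] with t ht
      exact key_id hq0 hq1 ht
    have := hmain.congr_of_eventuallyEq heq
    refine this.congr_deriv ?_
    symm
    rw [S_deriv_eq hq0]
    show q ^ θ * ∑' k : ℕ, gd q k θ
      = q ^ θ * Real.log q * κ θ + q ^ θ * (∑' k : ℕ, gd q k θ) - Real.log q * (q ^ θ * κ θ)
    ring
  have h1 : ∀ θ : ℝ, 0 < θ → HasDerivAt (fun u => (f u - 1) / κ u)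
      (((q ^ θ * ∑' k : ℕ, gd q k θ) * κ θ - (f θ - 1) * ∑' k : ℕ, gd q k θ) / κ θ ^ 2) θ :=
    fun θ hθ => ((hfd θ hθ).sub_const 1).div (hκd θ hθ) (hκpos θ hθ).ne'
  have h2 : ∀ θ : ℝ, 0 < θ → HasDerivAt (fun u => 1 / κ u)
      ((0 * κ θ - 1 * ∑' k : ℕ, gd q k θ) / κ θ ^ 2) θ :=
    fun θ hθ => (hasDerivAt_const θ (1:ℝ)).div (hκd θ hθ) (hκpos θ hθ).ne'
  refine ⟨fun θ hθ => ((h1 θ hθ).differentiableAt).differentiableWithinAt,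
    fun θ hθ => ((h2 θ hθ).differentiableAt).differentiableWithinAt, ?_⟩
  intro θ hθ
  rw [(h1 θ hθ).deriv, (h2 θ hθ).deriv]
  have hκne : κ θ ≠ 0 := (hκpos θ hθ).ne'
  field_simp
  ring
end

section
/- Let q ∈ (0,1). Suppose Θ : (−(1−q), 1) → (0,∞) is differentiable and satisfies (f(Θ(v)) − 1)/κ(Θ(v)) = v for every v ∈ (−(1−q), 1). For t > 0 and y ∈ ℝ with y/t ∈ (−(1−q), 1), define the density ρ(t,y) = log q / (log q + log(1−q) + Ψ_q(Θ(y/t))) and the current j(t,y) = q^{Θ(y/t)} · ρ(t,y). Then at every such point (t,y) the partial derivatives ∂ρ/∂t and ∂j/∂y exist and satisfy the conservation law ∂ρ/∂t(t,y) + ∂j/∂y(t,y) = 0. -/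
open Real

namespace Stmt8Aux

variable {q : ℝ}

lemma x_mem (hq : q ∈ Set.Ioo (0:ℝ) 1) {x : ℝ} (hx : 0 < x) : q ^ x ∈ Set.Ioo (0:ℝ) 1 :=
  ⟨Real.rpow_pos_of_pos hq.1 x, Real.rpow_lt_one hq.1.le hq.2 hx⟩

lemma summable_T (hq : q ∈ Set.Ioo (0:ℝ) 1) {θ : ℝ} (hθ : 0 < θ) :
    Summable (fun k : ℕ => q ^ (θ + (k:ℝ)) / (1 - q ^ (θ + (k:ℝ))) ^ 2) := by
  obtain ⟨hq0, hq1⟩ := hq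
  have hθm := x_mem ⟨hq0, hq1⟩ hθ
  refine Summable.of_nonneg_of_le (fun k => ?_) (fun k => ?_)
    (((summable_geometric_of_lt_one hq0.le hq1).mul_left (q ^ θ / (1 - q ^ θ) ^ 2))) <;>
  · have hθk : (0:ℝ) < θ + k := by positivity
    have h1 := x_mem ⟨hq0, hq1⟩ hθk
    first
    | positivity
    | · have hrw : q ^ (θ + (k:ℝ)) = q ^ θ * q ^ k := by
          rw [Real.rpow_add hq0, Real.rpow_natCast]
        have hle : q ^ (θ + (k:ℝ)) ≤ q ^ θ := by
          apply Real.rpow_le_rpow_of_exponent_ge hq0 hq1.le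
          have := Nat.cast_nonneg (α := ℝ) k; linarith
        have hC : q ^ θ / (1 - q ^ θ) ^ 2 * q ^ k = (q ^ θ * q ^ k) / (1 - q ^ θ) ^ 2 := by
          ring
        rw [hC, ← hrw, div_le_div_iff₀ (by nlinarith [h1.2]) (by nlinarith [hθm.2])]
        have key : 0 ≤ q ^ (θ + (k:ℝ)) *
            ((q ^ θ - q ^ (θ + (k:ℝ))) * (2 - q ^ (θ + (k:ℝ)) - q ^ θ)) := by
          apply mul_nonneg h1.1.le
          apply mul_nonneg (by linarith) (by linarith [h1.2, hθm.2])
        nlinarith [key]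

lemma summable_S (hq : q ∈ Set.Ioo (0:ℝ) 1) {θ : ℝ} (hθ : 0 < θ) :
    Summable (fun k : ℕ => q ^ (θ + (k:ℝ)) / (1 - q ^ (θ + (k:ℝ)))) := by
  obtain ⟨hq0, hq1⟩ := hq
  refine Summable.of_nonneg_of_le (fun k => ?_) (fun k => ?_) (summable_T ⟨hq0, hq1⟩ hθ) <;>
  · have hθk : (0:ℝ) < θ + k := by positivity
    have h1 := x_mem ⟨hq0, hq1⟩ hθk
    have hsub : (0:ℝ) < 1 - q ^ (θ + (k:ℝ)) := by linarith [h1.2]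
    first
    | positivity
    | · rw [div_le_div_iff₀ hsub (by positivity)]
        nlinarith [mul_nonneg (mul_nonneg h1.1.le hsub.le) h1.1.le]

lemma summable_F (hq : q ∈ Set.Ioo (0:ℝ) 1) {θ : ℝ} (hθ : 0 < θ) :
    Summable (fun k : ℕ => q ^ (2 * θ + 2 * (k:ℝ)) / (1 - q ^ (θ + (k:ℝ))) ^ 2) := by
  obtain ⟨hq0, hq1⟩ := hq
  refine Summable.of_nonneg_of_le (fun k => ?_) (fun k => ?_) (summable_T ⟨hq0, hq1⟩ hθ) <;>
  · have hθk : (0:ℝ) < θ + k := by positivity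
    have h1 := x_mem ⟨hq0, hq1⟩ hθk
    have hsub : (0:ℝ) < 1 - q ^ (θ + (k:ℝ)) := by linarith [h1.2]
    have hrw : q ^ (2 * θ + 2 * (k:ℝ)) = (q ^ (θ + (k:ℝ))) ^ 2 := by
      rw [← Real.rpow_natCast (q ^ (θ + (k:ℝ))) 2, ← Real.rpow_mul hq0.le]
      norm_num
      ring_nf
    first
    | positivity
    | · rw [hrw, div_le_div_iff₀ (by positivity) (by positivity)]
        nlinarith [mul_nonneg (mul_nonneg h1.1.le hsub.le) (sq_nonneg (1 - q ^ (θ + (k:ℝ))))]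

lemma summable_K (hq : q ∈ Set.Ioo (0:ℝ) 1) {θ : ℝ} (hθ : 0 < θ) :
    Summable (fun k : ℕ => q ^ (k:ℕ) / (1 - q ^ (θ + (k:ℝ))) ^ 2) := by
  obtain ⟨hq0, hq1⟩ := hq
  have h := (summable_T ⟨hq0, hq1⟩ hθ).mul_left (q ^ θ)⁻¹
  refine h.congr fun k => ?_
  have hrw : q ^ (θ + (k:ℝ)) = q ^ θ * q ^ k := by
    rw [Real.rpow_add hq0, Real.rpow_natCast]
  have hpos : (0:ℝ) < q ^ θ := Real.rpow_pos_of_pos hq0 _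
  rw [hrw]
  field_simp

lemma T_eq (hq : q ∈ Set.Ioo (0:ℝ) 1) {θ : ℝ} (hθ : 0 < θ) :
    (∑' k : ℕ, q ^ (θ + (k:ℝ)) / (1 - q ^ (θ + (k:ℝ))) ^ 2)
      = q ^ θ * ∑' k : ℕ, q ^ (k:ℕ) / (1 - q ^ (θ + (k:ℝ))) ^ 2 := by
  rw [← Summable.tsum_mul_left _ (summable_K hq hθ)]
  refine tsum_congr fun k => ?_
  rw [Real.rpow_add hq.1, Real.rpow_natCast, mul_div_assoc]

lemma S_eq (hq : q ∈ Set.Ioo (0:ℝ) 1) {θ : ℝ} (hθ : 0 < θ) :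
    (∑' k : ℕ, q ^ (θ + (k:ℝ)) / (1 - q ^ (θ + (k:ℝ))))
      = (∑' k : ℕ, q ^ (θ + (k:ℝ)) / (1 - q ^ (θ + (k:ℝ))) ^ 2)
        - ∑' k : ℕ, q ^ (2 * θ + 2 * (k:ℝ)) / (1 - q ^ (θ + (k:ℝ))) ^ 2 := by
  obtain ⟨hq0, hq1⟩ := hq
  rw [← Summable.tsum_sub (summable_T ⟨hq0, hq1⟩ hθ) (summable_F ⟨hq0, hq1⟩ hθ)]
  refine tsum_congr fun k => ?_
  have hθk : (0:ℝ) < θ + k := by positivity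
  have h1 := x_mem ⟨hq0, hq1⟩ hθk
  have hrw : q ^ (2 * θ + 2 * (k:ℝ)) = (q ^ (θ + (k:ℝ))) ^ 2 := by
    rw [← Real.rpow_natCast (q ^ (θ + (k:ℝ))) 2, ← Real.rpow_mul hq0.le]
    norm_num
    ring_nf
  rw [hrw]
  have hne : 1 - q ^ (θ + (k:ℝ)) ≠ 0 := by linarith [h1.2]
  field_simp

lemma hasDerivAt_S (hq : q ∈ Set.Ioo (0:ℝ) 1) {θ : ℝ} (hθ : 0 < θ) :
    HasDerivAt (fun x : ℝ => ∑' k : ℕ, q ^ (x + (k:ℝ)) / (1 - q ^ (x + (k:ℝ))))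
      (Real.log q * ∑' k : ℕ, q ^ (θ + (k:ℝ)) / (1 - q ^ (θ + (k:ℝ))) ^ 2) θ := by
  obtain ⟨hq0, hq1⟩ := hq
  have hlq : Real.log q < 0 := Real.log_neg hq0 hq1
  have hhalf : (0:ℝ) < θ / 2 := by linarith
  have hm := x_mem ⟨hq0, hq1⟩ hhalf
  have hdpos : (0:ℝ) < 1 - q ^ (θ/2) := by linarith [hm.2]
  have key := hasDerivAt_tsum_of_isPreconnected
    (u := fun k : ℕ => (|Real.log q| * q ^ (θ/2) / (1 - q ^ (θ/2)) ^ 2) * q ^ k)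
    (g := fun (k : ℕ) (x : ℝ) => q ^ (x + (k:ℝ)) / (1 - q ^ (x + (k:ℝ))))
    (g' := fun (k : ℕ) (x : ℝ) => Real.log q * (q ^ (x + (k:ℝ)) / (1 - q ^ (x + (k:ℝ))) ^ 2))
    (t := Set.Ioi (θ/2)) (y₀ := θ) (y := θ)
    (((summable_geometric_of_lt_one hq0.le hq1).mul_left _))
    isOpen_Ioi isPreconnected_Ioi
    ?_ ?_ (by simp only [Set.mem_Ioi]; linarith)
    (summable_S ⟨hq0, hq1⟩ hθ) (by simp only [Set.mem_Ioi]; linarith)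
  · rw [Summable.tsum_mul_left _ (summable_T ⟨hq0, hq1⟩ hθ)] at key
    exact key
  · intro n x hx
    have hx' : θ/2 < x := hx
    have hxn : (0:ℝ) < x + n := by
      have := Nat.cast_nonneg (α := ℝ) n; linarith
    have hmem := x_mem ⟨hq0, hq1⟩ hxn
    have h1 : HasDerivAt (fun w : ℝ => q ^ (w + (n:ℝ))) (q ^ (x + (n:ℝ)) * Real.log q) x := by
      have hb := (Real.hasStrictDerivAt_const_rpow hq0 (x + (n:ℝ))).hasDerivAt
      have h2 : HasDerivAt (fun w : ℝ => w + (n:ℝ)) 1 x := (hasDerivAt_id x).add_const _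
      have h3 := hb.comp x h2
      rw [mul_one] at h3
      exact h3
    have hden := (hasDerivAt_const x (1:ℝ)).sub h1
    have hne : 1 - q ^ (x + (n:ℝ)) ≠ 0 := by linarith [hmem.2]
    have hdiv := h1.div hden hne
    refine HasDerivAt.congr_deriv hdiv ?_
    simp only [Pi.sub_apply]; rw [mul_div_assoc']; congr 1; ring
  · intro n x hx
    have hx' : θ/2 < x := hx
    have hxn : (0:ℝ) < x + n := by
      have := Nat.cast_nonneg (α := ℝ) n; linarith
    have hmem := x_mem ⟨hq0, hq1⟩ hxn
    have hle : q ^ (x + (n:ℝ)) ≤ q ^ (θ/2) * q ^ n := by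
      rw [← Real.rpow_natCast q n, ← Real.rpow_add hq0]
      exact Real.rpow_le_rpow_of_exponent_ge hq0 hq1.le (by linarith)
    have hd : 1 - q ^ (θ/2) ≤ 1 - q ^ (x + (n:ℝ)) := by
      have : q ^ (x + (n:ℝ)) ≤ q ^ (θ/2) := by
        apply Real.rpow_le_rpow_of_exponent_ge hq0 hq1.le
        have := Nat.cast_nonneg (α := ℝ) n; linarith
      linarith
    have hBpos : (0:ℝ) < q ^ (θ/2) * q ^ n := by positivity
    have hfrac : q ^ (x + (n:ℝ)) / (1 - q ^ (x + (n:ℝ))) ^ 2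
        ≤ q ^ (θ/2) * q ^ n / (1 - q ^ (θ/2)) ^ 2 := by
      rw [div_le_div_iff₀ (by nlinarith [hmem.2]) (by positivity)]
      have key : 0 ≤ (q ^ (θ/2) * q ^ n) *
          ((1 - q ^ (θ/2)) * ((1 - q ^ (x + (n:ℝ))) - (1 - q ^ (θ/2)))
            + (1 - q ^ (x + (n:ℝ))) * ((1 - q ^ (x + (n:ℝ))) - (1 - q ^ (θ/2)))) := by
        apply mul_nonneg hBpos.le
        have h2 : (0:ℝ) ≤ 1 - q ^ (x + (n:ℝ)) := by linarith [hmem.2]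
        nlinarith
      nlinarith [key, mul_le_mul_of_nonneg_right hle (sq_nonneg (1 - q ^ (θ/2)))]
    calc ‖Real.log q * (q ^ (x + (n:ℝ)) / (1 - q ^ (x + (n:ℝ))) ^ 2)‖
        = |Real.log q| * (q ^ (x + (n:ℝ)) / (1 - q ^ (x + (n:ℝ))) ^ 2) := by
          rw [Real.norm_eq_abs, abs_mul, abs_of_nonneg (show (0:ℝ) ≤
            q ^ (x + (n:ℝ)) / (1 - q ^ (x + (n:ℝ))) ^ 2 by positivity)]
      _ ≤ |Real.log q| * (q ^ (θ/2) * q ^ n / (1 - q ^ (θ/2)) ^ 2) :=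
          mul_le_mul_of_nonneg_left hfrac (abs_nonneg _)
      _ = |Real.log q| * q ^ (θ/2) / (1 - q ^ (θ/2)) ^ 2 * q ^ n := by ring

end Stmt8Aux

/-- For `q ∈ (0,1)`, suppose `Θ : (−(1−q),1) → (0,∞)` is
differentiable with `(f(Θ(v)) − 1)/κ(Θ(v)) = v` on the interval. Define the
density `ρ(t,y) = log q/(log q + log(1−q) + Ψ_q(Θ(y/t)))` and the current
`j(t,y) = q^(Θ(y/t)) ρ(t,y)`. Then at every `(t,y)` with `t > 0` and
`y/t ∈ (−(1−q),1)` the partial derivatives `∂ρ/∂t` and `∂j/∂y` exist and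
satisfy the conservation law `∂ρ/∂t + ∂j/∂y = 0`. -/
theorem stmt_8 (q : ℝ) (hq : q ∈ Set.Ioo (0 : ℝ) 1) (Θ : ℝ → ℝ)
    (hΘpos : ∀ v ∈ Set.Ioo (-(1 - q)) (1 : ℝ), 0 < Θ v)
    (hΘdiff : ∀ v ∈ Set.Ioo (-(1 - q)) (1 : ℝ), DifferentiableAt ℝ Θ v)
    (hΘeq : ∀ v ∈ Set.Ioo (-(1 - q)) (1 : ℝ),
      ((∑' k : ℕ, q ^ (2 * Θ v + 2 * (k : ℝ)) / (1 - q ^ (Θ v + (k : ℝ))) ^ 2) - 1)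
        / (∑' k : ℕ, q ^ (k : ℕ) / (1 - q ^ (Θ v + (k : ℝ))) ^ 2) = v) :
    let Ψ : ℝ → ℝ := fun z =>
      -Real.log (1 - q) + Real.log q * ∑' k : ℕ, q ^ (z + (k : ℝ)) / (1 - q ^ (z + (k : ℝ)))
    let ρ : ℝ → ℝ → ℝ := fun t y =>
      Real.log q / (Real.log q + Real.log (1 - q) + Ψ (Θ (y / t)))
    let j : ℝ → ℝ → ℝ := fun t y => q ^ (Θ (y / t)) * ρ t y
    ∀ t : ℝ, 0 < t → ∀ y : ℝ, y / t ∈ Set.Ioo (-(1 - q)) (1 : ℝ) →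
      ∃ ρt jy : ℝ,
        HasDerivAt (fun s => ρ s y) ρt t ∧
        HasDerivAt (fun x => j t x) jy y ∧
        ρt + jy = 0 := by
  intro Ψ ρ j t ht y hv
  have hq0 := hq.1
  have hq1 := hq.2
  have hlq : Real.log q < 0 := Real.log_neg hq0 hq1
  set Sfun : ℝ → ℝ := fun x => 1 + ∑' k : ℕ, q ^ (x + (k:ℝ)) / (1 - q ^ (x + (k:ℝ))) with hSfun
  -- rewrite ρ in terms of Sfun (both arguments varying)
  have hρ_eq : ∀ s x : ℝ, ρ s x = (Sfun (Θ (x / s)))⁻¹ := by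
    intro s x
    show Real.log q / (Real.log q + Real.log (1 - q) +
      (-Real.log (1 - q) + Real.log q * ∑' k : ℕ, _ / _)) = _
    have h : Real.log q + Real.log (1 - q) +
        (-Real.log (1 - q) + Real.log q *
          ∑' k : ℕ, q ^ (Θ (x/s) + (k:ℝ)) / (1 - q ^ (Θ (x/s) + (k:ℝ))))
        = Real.log q * Sfun (Θ (x/s)) := by
      simp only [hSfun]; ring
    rw [h, div_mul_cancel_left₀ (ne_of_lt hlq)]
  set v : ℝ := y / t with hvdef
  set θ0 : ℝ := Θ v with hθ0def
  have hθ0 : 0 < θ0 := hΘpos v hv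
  set Tval : ℝ := ∑' k : ℕ, q ^ (θ0 + (k:ℝ)) / (1 - q ^ (θ0 + (k:ℝ))) ^ 2 with hTval
  set Fval : ℝ := ∑' k : ℕ, q ^ (2 * θ0 + 2 * (k:ℝ)) / (1 - q ^ (θ0 + (k:ℝ))) ^ 2 with hFval
  set Kval : ℝ := ∑' k : ℕ, q ^ (k:ℕ) / (1 - q ^ (θ0 + (k:ℝ))) ^ 2 with hKval
  have hKpos : 0 < Kval := by
    rw [hKval]
    refine Summable.tsum_pos (Stmt8Aux.summable_K hq hθ0) (fun k => ?_) 0 ?_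
    · have hθk : (0:ℝ) < θ0 + k := by positivity
      have h1 := Stmt8Aux.x_mem hq hθk
      have : (0:ℝ) < 1 - q ^ (θ0 + (k:ℝ)) := by linarith [h1.2]
      positivity
    · have hθk : (0:ℝ) < θ0 + ((0:ℕ):ℝ) := by push_cast; linarith
      have h1 := Stmt8Aux.x_mem hq hθk
      have : (0:ℝ) < 1 - q ^ (θ0 + ((0:ℕ):ℝ)) := by linarith [h1.2]
      positivity
  have hSval_pos : 0 < Sfun θ0 := by
    have hnn : 0 ≤ ∑' k : ℕ, q ^ (θ0 + (k:ℝ)) / (1 - q ^ (θ0 + (k:ℝ))) := by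
      refine tsum_nonneg fun k => ?_
      have hθk : (0:ℝ) < θ0 + k := by positivity
      have h1 := Stmt8Aux.x_mem hq hθk
      have : (0:ℝ) < 1 - q ^ (θ0 + (k:ℝ)) := by linarith [h1.2]
      positivity
    simp only [hSfun]; linarith
  have hSne : Sfun θ0 ≠ 0 := ne_of_gt hSval_pos
  have hS : HasDerivAt Sfun (Real.log q * Tval) θ0 :=
    (Stmt8Aux.hasDerivAt_S hq hθ0).const_add 1
  have hΘ' : HasDerivAt Θ (deriv Θ v) v := (hΘdiff v hv).hasDerivAt
  set D : ℝ := deriv Θ v with hD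
  have hInv : HasDerivAt (fun x => (Sfun x)⁻¹) (-(Real.log q * Tval) / (Sfun θ0) ^ 2) θ0 :=
    hS.inv hSne
  have hH : HasDerivAt (fun w => (Sfun (Θ w))⁻¹)
      (-(Real.log q * Tval) / (Sfun θ0) ^ 2 * D) v := hInv.comp v hΘ'
  set H' : ℝ := -(Real.log q * Tval) / (Sfun θ0) ^ 2 * D with hH'def
  have hpow : HasDerivAt (fun w => q ^ (Θ w)) (q ^ θ0 * Real.log q * D) v := by
    have hb := (Real.hasStrictDerivAt_const_rpow hq0 θ0).hasDerivAt
    have := hb.comp v hΘ'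
    exact this
  have hK : HasDerivAt (fun w => q ^ (Θ w) * (Sfun (Θ w))⁻¹)
      (q ^ θ0 * Real.log q * D * (Sfun θ0)⁻¹ + q ^ θ0 * H') v := hpow.mul hH
  set K' : ℝ := q ^ θ0 * Real.log q * D * (Sfun θ0)⁻¹ + q ^ θ0 * H' with hK'def
  have hqθpos : (0:ℝ) < q ^ θ0 := Real.rpow_pos_of_pos hq0 _
  -- key algebraic identity
  have h1 : Fval - 1 = v * Kval := by
    have h0 := hΘeq v hv
    rw [← hθ0def, ← hFval, ← hKval, div_eq_iff (ne_of_gt hKpos)] at h0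
    linarith [h0]
  have h2 : Tval = q ^ θ0 * Kval := by
    rw [hTval, hKval]; exact Stmt8Aux.T_eq hq hθ0
  have h3 : Sfun θ0 = 1 + (Tval - Fval) := by
    simp only [hSfun]
    rw [Stmt8Aux.S_eq hq hθ0, ← hTval, ← hFval]
  have hid : q ^ θ0 * (Sfun θ0 - Tval) = -(v * Tval) := by
    rw [h3, h2]
    linear_combination (-(q ^ θ0)) * h1
  have hKey : K' = v * H' := by
    rw [hK'def, hH'def]
    have expand : q ^ θ0 * Real.log q * D * (Sfun θ0)⁻¹
        + q ^ θ0 * (-(Real.log q * Tval) / (Sfun θ0) ^ 2 * D)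
        = (Real.log q * D / (Sfun θ0) ^ 2) * (q ^ θ0 * (Sfun θ0 - Tval)) := by
      field_simp
      ring
    rw [expand, hid]
    field_simp
  -- outer chain rule
  have htne : t ≠ 0 := ne_of_gt ht
  have hdiv1 : HasDerivAt (fun s : ℝ => y / s) (y * (-(1 / t ^ 2))) t := by
    simpa [div_eq_mul_inv] using (hasDerivAt_inv htne).const_mul y
  have hdiv2 : HasDerivAt (fun x : ℝ => x / t) (1 / t) y := by
    simpa using (hasDerivAt_id y).div_const t
  have hρt : HasDerivAt (fun s => ρ s y) (H' * (y * (-(1 / t ^ 2)))) t := by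
    have hcomp := hH.comp t hdiv1
    have hfe : (fun s => ρ s y) = fun s => (Sfun (Θ (y / s)))⁻¹ :=
      funext fun s => hρ_eq s y
    rw [hfe]
    exact hcomp
  have hjy : HasDerivAt (fun x => j t x) (K' * (1 / t)) y := by
    have hcomp := hK.comp y hdiv2
    have hfe : (fun x => j t x) = fun x => q ^ (Θ (x / t)) * (Sfun (Θ (x / t)))⁻¹ := by
      funext x
      show q ^ (Θ (x / t)) * ρ t x = _
      rw [hρ_eq t x]
    rw [hfe]
    exact hcomp
  refine ⟨_, _, hρt, hjy, ?_⟩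
  rw [hKey, hvdef]
  field_simp
  ring
end

section
/- Let q ∈ (0,1) and let x(u) = (f(u) − 1)/κ(u) for u > 0. Then x is differentiable on (0,∞) and for every θ > 0 the (improper) integral of the local particle density over the rightward region equals 1/κ(θ): ∫_0^θ [ −log q / (log q + log(1−q) + Ψ_q(u)) ] · x'(u) du = 1/κ(θ). -/
open Set Filter MeasureTheory intervalIntegral
open scoped Topology

namespace Stmt9

noncomputable def kap (q θ : ℝ) : ℝ := ∑' k : ℕ, q ^ (k : ℕ) / (1 - q ^ (θ + (k : ℝ))) ^ 2
noncomputable def Ess (q θ : ℝ) : ℝ := ∑' k : ℕ, q ^ (θ + (k : ℝ)) / (1 - q ^ (θ + (k : ℝ)))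
noncomputable def Dk (q : ℝ) (k : ℕ) (u : ℝ) : ℝ :=
  2 * q ^ (k : ℕ) * (q ^ (u + (k : ℝ)) * Real.log q) / (1 - q ^ (u + (k : ℝ))) ^ 3
noncomputable def Dd (q u : ℝ) : ℝ := ∑' k : ℕ, Dk q k u

variable {q : ℝ} (hq0 : 0 < q) (hq1 : q < 1)

section basic
include hq0 hq1

lemma sub_pos' {u : ℝ} (hu : 0 < u) (k : ℕ) : 0 < 1 - q ^ (u + (k : ℝ)) :=
  sub_pos.2 (Real.rpow_lt_one hq0.le hq1 (by positivity))

lemma g_mono {a u : ℝ} (hau : a ≤ u) (k : ℕ) : q ^ (u + (k : ℝ)) ≤ q ^ (a + (k : ℝ)) :=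
  Real.rpow_le_rpow_of_exponent_ge hq0 hq1.le (by linarith)

omit hq1 in
lemma g_split (u : ℝ) (k : ℕ) : q ^ (u + (k : ℝ)) = q ^ u * q ^ (k : ℕ) := by
  rw [Real.rpow_add hq0, Real.rpow_natCast]

lemma g_le_qu {u : ℝ} (k : ℕ) : q ^ (u + (k : ℝ)) ≤ q ^ u := by
  rw [g_split hq0 u k]
  have hk : q ^ (k : ℕ) ≤ 1 := pow_le_one₀ hq0.le hq1.le
  nlinarith [Real.rpow_pos_of_pos hq0 u]

lemma g_le_qk {u : ℝ} (hu : 0 < u) (k : ℕ) : q ^ (u + (k : ℝ)) ≤ q ^ (k : ℕ) := by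
  rw [g_split hq0 u k]
  have hk : (0:ℝ) < q ^ (k : ℕ) := by positivity
  nlinarith [Real.rpow_le_one hq0.le hq1.le hu.le, Real.rpow_pos_of_pos hq0 u]

lemma sub_lower {a u : ℝ} (ha : 0 < a) (hau : a ≤ u) (k : ℕ) :
    0 < 1 - q ^ a ∧ 1 - q ^ a ≤ 1 - q ^ (u + (k : ℝ)) := by
  have h1 : q ^ (u + (k : ℝ)) ≤ q ^ (a + (0:ℕ) : ℝ) := by
    calc q ^ (u + (k:ℝ)) ≤ q ^ (a + (k:ℝ)) := g_mono hq0 hq1 hau k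
    _ ≤ q ^ (a + (0:ℕ) : ℝ) := Real.rpow_le_rpow_of_exponent_ge hq0 hq1.le (by
        push_cast; have : (0:ℝ) ≤ k := Nat.cast_nonneg k; linarith)
  have h2 : q ^ (a + (0:ℕ) : ℝ) = q ^ a := by norm_num
  rw [h2] at h1
  have h3 : q ^ a < 1 := Real.rpow_lt_one hq0.le hq1 ha
  exact ⟨by linarith, by linarith⟩

lemma kap_summable {u : ℝ} (hu : 0 < u) :
    Summable (fun k : ℕ => q ^ (k : ℕ) / (1 - q ^ (u + (k : ℝ))) ^ 2) := by
  refine Summable.of_nonneg_of_le (fun k => by have := sub_pos' hq0 hq1 hu k; positivity)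
    (fun k => ?_) (((summable_geometric_of_lt_one hq0.le hq1)).mul_right (((1 - q ^ u) ^ 2)⁻¹))
  obtain ⟨h0, hle⟩ := sub_lower hq0 hq1 hu le_rfl k
  rw [div_eq_mul_inv]
  exact mul_le_mul_of_nonneg_left (by
    apply inv_anti₀ (by positivity)
    have := sub_pos' hq0 hq1 hu k
    nlinarith) (by positivity)

lemma kap_pos {u : ℝ} (hu : 0 < u) : 0 < kap q u := by
  refine Summable.tsum_pos (kap_summable hq0 hq1 hu) (fun k => by
    have := sub_pos' hq0 hq1 hu k; positivity) 0 ?_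
  have := sub_pos' hq0 hq1 hu 0
  positivity

lemma kap_lower {u : ℝ} (hu : 0 < u) : ((1 - q ^ u) ^ 2)⁻¹ ≤ kap q u := by
  have h := Summable.le_tsum (kap_summable hq0 hq1 hu) 0
    (fun j _ => by have := sub_pos' hq0 hq1 hu j; positivity)
  calc ((1 - q ^ u) ^ 2)⁻¹ = q ^ (0:ℕ) / (1 - q ^ (u + ((0:ℕ) : ℝ))) ^ 2 := by norm_num
  _ ≤ kap q u := h

lemma Ess_summable {u : ℝ} (hu : 0 < u) :
    Summable (fun k : ℕ => q ^ (u + (k : ℝ)) / (1 - q ^ (u + (k : ℝ)))) := by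
  refine Summable.of_nonneg_of_le (fun k => by
      have h1 := sub_pos' hq0 hq1 hu k
      have h2 := Real.rpow_pos_of_pos hq0 (u + (k:ℝ))
      positivity)
    (fun k => ?_) (((summable_geometric_of_lt_one hq0.le hq1)).mul_right ((1 - q ^ u))⁻¹)
  obtain ⟨h0, hle⟩ := sub_lower hq0 hq1 hu le_rfl k
  rw [div_eq_mul_inv]
  have := sub_pos' hq0 hq1 hu k
  exact mul_le_mul (g_le_qk hq0 hq1 hu k) (inv_anti₀ h0 hle)
    (by positivity) (by positivity)

lemma Ess_nonneg {u : ℝ} (hu : 0 < u) : 0 ≤ Ess q u :=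
  tsum_nonneg fun k => by
    have h1 := sub_pos' hq0 hq1 hu k
    have h2 := Real.rpow_pos_of_pos hq0 (u + (k:ℝ))
    positivity

end basic

section deriv
include hq0 hq1

omit hq1 in
lemma g_hasDeriv (k : ℕ) (u : ℝ) :
    HasDerivAt (fun v : ℝ => q ^ (v + (k : ℝ))) (q ^ (u + (k : ℝ)) * Real.log q) u := by
  have h := (Real.hasStrictDerivAt_const_rpow hq0 (u + (k : ℝ))).hasDerivAt
  have h2 := h.comp u ((hasDerivAt_id u).add_const (k : ℝ))
  exact h2.congr_deriv (by ring)

lemma kap_term_hasDeriv {u : ℝ} (hu : 0 < u) (k : ℕ) :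
    HasDerivAt (fun v : ℝ => q ^ (k : ℕ) / (1 - q ^ (v + (k : ℝ))) ^ 2) (Dk q k u) u := by
  have hne : (1 - q ^ (u + (k : ℝ))) ≠ 0 := (sub_pos' hq0 hq1 hu k).ne'
  have h1 : HasDerivAt (fun v : ℝ => (1 - q ^ (v + (k : ℝ))) ^ 2)
      (2 * (1 - q ^ (u + (k : ℝ))) ^ 1 * (0 - q ^ (u + (k : ℝ)) * Real.log q)) u :=
    (((hasDerivAt_const u (1:ℝ)).sub (g_hasDeriv hq0 k u)).pow 2)
  have h2 := (hasDerivAt_const u ((q : ℝ) ^ (k : ℕ))).div h1 (pow_ne_zero 2 hne)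
  refine h2.congr_deriv ?_
  unfold Dk
  field_simp
  ring

lemma Ess_term_hasDeriv {u : ℝ} (hu : 0 < u) (k : ℕ) :
    HasDerivAt (fun v : ℝ => q ^ (v + (k : ℝ)) / (1 - q ^ (v + (k : ℝ))))
      (Real.log q * q ^ u * (q ^ (k : ℕ) / (1 - q ^ (u + (k : ℝ))) ^ 2)) u := by
  have hne : (1 - q ^ (u + (k : ℝ))) ≠ 0 := (sub_pos' hq0 hq1 hu k).ne'
  have h2 := (g_hasDeriv hq0 k u).div
    ((hasDerivAt_const u (1:ℝ)).sub (g_hasDeriv hq0 k u)) hne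
  refine h2.congr_deriv ?_
  simp only [Pi.sub_apply]
  have hne' : 1 - q ^ u * q ^ (k : ℕ) ≠ 0 := by rw [← g_split hq0 u k]; exact hne
  rw [g_split hq0 u k]
  field_simp
  ring

lemma Dk_norm_le {a u : ℝ} (ha : 0 < a) (hau : a ≤ u) (k : ℕ) :
    ‖Dk q k u‖ ≤ 2 * |Real.log q| * (q ^ 2) ^ (k : ℕ) / (1 - q ^ a) ^ 3 := by
  obtain ⟨h0, hle⟩ := sub_lower hq0 hq1 ha hau k
  have hu : 0 < u := lt_of_lt_of_le ha hau
  have hgpos := Real.rpow_pos_of_pos hq0 (u + (k : ℝ))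
  have hsub := sub_pos' hq0 hq1 hu k
  have hqk : (0:ℝ) < q ^ (k : ℕ) := by positivity
  unfold Dk
  rw [norm_div, norm_mul, norm_mul, norm_mul]
  have h3 : ‖(1 - q ^ (u + (k : ℝ))) ^ 3‖ = (1 - q ^ (u + (k : ℝ))) ^ 3 := by
    rw [Real.norm_eq_abs, abs_of_pos (by positivity)]
  rw [h3]
  have hnum : ‖(2:ℝ)‖ * ‖q ^ (k:ℕ)‖ * (‖q ^ (u + (k:ℝ))‖ * ‖Real.log q‖)
      ≤ 2 * |Real.log q| * (q ^ 2) ^ (k : ℕ) := by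
    simp only [Real.norm_eq_abs, abs_two]
    rw [abs_of_pos hqk, abs_of_pos hgpos]
    have h4 : q ^ (u + (k:ℝ)) ≤ q ^ (k : ℕ) := g_le_qk hq0 hq1 hu k
    have h5 : (q ^ 2) ^ (k : ℕ) = q ^ (k:ℕ) * q ^ (k:ℕ) := by
      rw [← pow_mul, two_mul, pow_add]
    rw [h5]
    have h6 := mul_le_mul_of_nonneg_right (mul_le_mul_of_nonneg_left h4 hqk.le)
      (abs_nonneg (Real.log q))
    linarith [h6, abs_nonneg (Real.log q)]
  have hden : (1 - q ^ a) ^ 3 ≤ (1 - q ^ (u + (k : ℝ))) ^ 3 :=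
    pow_le_pow_left₀ h0.le hle 3
  exact div_le_div₀ (by positivity) hnum (by positivity) hden

lemma kap_hasDerivAt {u : ℝ} (hu : 0 < u) : HasDerivAt (kap q) (Dd q u) u := by
  have ha : 0 < u / 2 := by linarith
  refine hasDerivAt_tsum_of_isPreconnected
    (u := fun k : ℕ => 2 * |Real.log q| * (q ^ 2) ^ (k : ℕ) / (1 - q ^ (u/2)) ^ 3)
    ?_ isOpen_Ioi isPreconnected_Ioi
    (fun k y hy => kap_term_hasDeriv hq0 hq1 (ha.trans hy) k)
    (fun k y (hy : u/2 < y) => Dk_norm_le hq0 hq1 ha hy.le k)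
    (show u ∈ Ioi (u/2) by simp [Ioi]; linarith)
    (kap_summable hq0 hq1 hu)
    (show u ∈ Ioi (u/2) by simp [Ioi]; linarith)
  · have h0 : (0:ℝ) < 1 - q ^ (u/2) := (sub_lower hq0 hq1 ha le_rfl 0).1
    have : Summable (fun k : ℕ => (q ^ 2) ^ (k:ℕ)) :=
      summable_geometric_of_lt_one (by positivity) (by nlinarith)
    simpa [div_eq_mul_inv, mul_assoc] using ((this.mul_left (2 * |Real.log q|)).mul_right
      (((1 - q ^ (u/2)) ^ 3)⁻¹))

lemma Ess_deriv_norm_le {a u : ℝ} (ha : 0 < a) (hau : a ≤ u) (k : ℕ) :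
    ‖Real.log q * q ^ u * (q ^ (k : ℕ) / (1 - q ^ (u + (k : ℝ))) ^ 2)‖
      ≤ |Real.log q| * (q ^ (k : ℕ) / (1 - q ^ a) ^ 2) := by
  obtain ⟨h0, hle⟩ := sub_lower hq0 hq1 ha hau k
  have hu : 0 < u := ha.trans_le hau
  have hsub := sub_pos' hq0 hq1 hu k
  have hqk : (0:ℝ) < q ^ (k : ℕ) := by positivity
  have hqu := Real.rpow_pos_of_pos hq0 u
  rw [Real.norm_eq_abs, abs_mul, abs_mul, abs_of_pos hqu,
    abs_of_pos (div_pos hqk (pow_pos hsub 2))]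
  have hy1 : q ^ u ≤ 1 := Real.rpow_le_one hq0.le hq1.le hu.le
  have hd : q ^ (k:ℕ) / (1 - q ^ (u + (k:ℝ))) ^ 2 ≤ q ^ (k:ℕ) / (1 - q ^ a) ^ 2 := by
    apply div_le_div_of_nonneg_left hqk.le (by positivity)
    nlinarith
  calc |Real.log q| * q ^ u * (q ^ (k:ℕ) / (1 - q ^ (u + (k:ℝ))) ^ 2)
      ≤ |Real.log q| * 1 * (q ^ (k:ℕ) / (1 - q ^ a) ^ 2) := by
        apply mul_le_mul (by nlinarith [abs_nonneg (Real.log q)]) hd (by positivity)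
          (by positivity)
  _ = |Real.log q| * (q ^ (k:ℕ) / (1 - q ^ a) ^ 2) := by ring

lemma Ess_hasDerivAt {u : ℝ} (hu : 0 < u) :
    HasDerivAt (Ess q) (Real.log q * q ^ u * kap q u) u := by
  have ha : 0 < u / 2 := by linarith
  have hbsum : Summable (fun k : ℕ => |Real.log q| * (q ^ (k:ℕ) / (1 - q ^ (u/2)) ^ 2)) := by
    have h := (((summable_geometric_of_lt_one hq0.le hq1)).mul_right
      (((1 - q ^ (u/2)) ^ 2)⁻¹)).mul_left |Real.log q|
    exact h.congr (fun k => by simp [div_eq_mul_inv])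
  have h := hasDerivAt_tsum_of_isPreconnected hbsum isOpen_Ioi isPreconnected_Ioi
    (fun (k : ℕ) y (hy : y ∈ Ioi (u/2)) => Ess_term_hasDeriv hq0 hq1 (ha.trans hy) k)
    (fun (k : ℕ) y (hy : y ∈ Ioi (u/2)) => Ess_deriv_norm_le hq0 hq1 ha (le_of_lt hy) k)
    (show u ∈ Ioi (u/2) by simp [Ioi]; linarith)
    (Ess_summable hq0 hq1 hu)
    (show u ∈ Ioi (u/2) by simp [Ioi]; linarith)
  have h2 : (∑' k : ℕ, Real.log q * q ^ u * (q ^ (k : ℕ) / (1 - q ^ (u + (k : ℝ))) ^ 2))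
      = Real.log q * q ^ u * kap q u := tsum_mul_left
  rw [h2] at h
  exact h

end deriv

section main
include hq0 hq1

lemma ff_eq {u : ℝ} (hu : 0 < u) :
    (∑' k : ℕ, q ^ (2 * u + 2 * (k : ℝ)) / (1 - q ^ (u + (k : ℝ))) ^ 2)
      = q ^ u * kap q u - Ess q u := by
  have hterm : ∀ k : ℕ, q ^ (2 * u + 2 * (k : ℝ)) / (1 - q ^ (u + (k : ℝ))) ^ 2
      = q ^ u * (q ^ (k : ℕ) / (1 - q ^ (u + (k : ℝ))) ^ 2)
        - q ^ (u + (k : ℝ)) / (1 - q ^ (u + (k : ℝ))) := by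
    intro k
    have hne : (1 - q ^ (u + (k : ℝ))) ≠ 0 := (sub_pos' hq0 hq1 hu k).ne'
    have hne' : 1 - q ^ u * q ^ (k : ℕ) ≠ 0 := by rw [← g_split hq0 u k]; exact hne
    have h2 : q ^ (2 * u + 2 * (k : ℝ)) = q ^ (u + (k:ℝ)) * q ^ (u + (k:ℝ)) := by
      rw [← Real.rpow_add hq0]; congr 1; ring
    rw [h2, g_split hq0 u k]
    field_simp
    ring
  rw [tsum_congr hterm, Summable.tsum_sub ((kap_summable hq0 hq1 hu).mul_left (q ^ u))
    (Ess_summable hq0 hq1 hu), tsum_mul_left]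
  rfl

lemma x_hasDerivAt {u : ℝ} (hu : 0 < u) :
    HasDerivAt (fun v : ℝ =>
        ((∑' k : ℕ, q ^ (2 * v + 2 * (k : ℝ)) / (1 - q ^ (v + (k : ℝ))) ^ 2) - 1) / kap q v)
      ((Ess q u + 1) * Dd q u / (kap q u) ^ 2) u := by
  have hk := kap_hasDerivAt hq0 hq1 hu
  have hs := Ess_hasDerivAt hq0 hq1 hu
  have hkpos := kap_pos hq0 hq1 hu
  have hkne : kap q u ≠ 0 := hkpos.ne'
  have hq' : HasDerivAt (fun v : ℝ => q ^ v) (q ^ u * Real.log q) u :=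
    (Real.hasStrictDerivAt_const_rpow hq0 u).hasDerivAt
  have hgood : HasDerivAt (fun v : ℝ => q ^ v - (Ess q v + 1) / kap q v)
      (q ^ u * Real.log q -
        ((Real.log q * q ^ u * kap q u) * kap q u - (Ess q u + 1) * Dd q u) / (kap q u) ^ 2) u :=
    hq'.sub ((hs.add_const 1).div hk hkne)
  have hev : (fun v : ℝ =>
      ((∑' k : ℕ, q ^ (2 * v + 2 * (k : ℝ)) / (1 - q ^ (v + (k : ℝ))) ^ 2) - 1) / kap q v)
      =ᶠ[nhds u] (fun v : ℝ => q ^ v - (Ess q v + 1) / kap q v) := by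
    filter_upwards [Ioi_mem_nhds hu] with v hv
    have hkv : kap q v ≠ 0 := (kap_pos hq0 hq1 hv).ne'
    rw [ff_eq hq0 hq1 hv]
    field_simp
    ring
  have hres := hgood.congr_of_eventuallyEq hev
  refine hres.congr_deriv ?_
  field_simp
  ring

lemma Dd_div_le {u : ℝ} (hu : 0 < u) :
    ‖Dd q u / (kap q u) ^ 2‖ ≤ 2 * |Real.log q| / (1 - q ^ 2) := by
  have hq2 : (0:ℝ) < 1 - q ^ 2 := by nlinarith
  have ha0 : 0 < 1 - q ^ u := (sub_lower hq0 hq1 hu le_rfl 0).1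
  have ha1 : 1 - q ^ u ≤ 1 := by
    have := Real.rpow_pos_of_pos hq0 u; linarith
  have hbsum : Summable (fun k : ℕ => 2 * |Real.log q| * (q ^ 2) ^ (k:ℕ) / (1 - q ^ u) ^ 3) := by
    have h := ((summable_geometric_of_lt_one (by positivity : (0:ℝ) ≤ q ^ 2)
      (by nlinarith)).mul_left (2 * |Real.log q|)).mul_right (((1 - q ^ u) ^ 3)⁻¹)
    exact h.congr (fun k => by rw [div_eq_mul_inv])
  have hDsum : Summable fun k : ℕ => ‖Dk q k u‖ :=
    Summable.of_nonneg_of_le (fun k => norm_nonneg _)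
      (fun k => Dk_norm_le hq0 hq1 hu le_rfl k) hbsum
  have hDd : ‖Dd q u‖ ≤ 2 * |Real.log q| / ((1 - q ^ u) ^ 3 * (1 - q ^ 2)) := by
    have h1 : ‖Dd q u‖ ≤ ∑' k : ℕ, 2 * |Real.log q| * (q ^ 2) ^ (k:ℕ) / (1 - q ^ u) ^ 3 :=
      (norm_tsum_le_tsum_norm hDsum).trans
        (Summable.tsum_le_tsum (fun k => Dk_norm_le hq0 hq1 hu le_rfl k) hDsum hbsum)
    have h2 : (∑' k : ℕ, 2 * |Real.log q| * (q ^ 2) ^ (k:ℕ) / (1 - q ^ u) ^ 3)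
        = (2 * |Real.log q| / (1 - q ^ u) ^ 3) * (1 - q ^ 2)⁻¹ := by
      rw [tsum_congr (fun k : ℕ => by
        rw [show 2 * |Real.log q| * (q ^ 2) ^ (k:ℕ) / (1 - q ^ u) ^ 3
          = (2 * |Real.log q| / (1 - q ^ u) ^ 3) * (q ^ 2) ^ (k:ℕ) by ring]), tsum_mul_left,
        tsum_geometric_of_lt_one (by positivity) (by nlinarith)]
    rw [h2] at h1
    refine h1.trans_eq ?_
    field_simp
  -- now combine with lower bound on kap
  have hkl := kap_lower hq0 hq1 hu
  have hkpos := kap_pos hq0 hq1 hu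
  have hinvpos : (0:ℝ) < ((1 - q ^ u) ^ 2)⁻¹ := by positivity
  have h1 : (((1 - q ^ u) ^ 2)⁻¹) ^ 2 ≤ (kap q u) ^ 2 := pow_le_pow_left₀ hinvpos.le hkl 2
  have e : (((1 - q ^ u) ^ 2)⁻¹) ^ 2 = ((1 - q ^ u) ^ 4)⁻¹ := by
    rw [← inv_pow, ← pow_mul]
    norm_num
  rw [e] at h1
  have h2 : ((kap q u) ^ 2)⁻¹ ≤ (1 - q ^ u) ^ 4 := by
    rw [← inv_inv ((1 - q ^ u) ^ 4)]
    exact inv_anti₀ (by positivity) h1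
  have hnorm : ‖Dd q u / (kap q u) ^ 2‖ = ‖Dd q u‖ * ((kap q u) ^ 2)⁻¹ := by
    rw [norm_div, div_eq_mul_inv]
    congr 1
    rw [Real.norm_eq_abs, abs_of_pos (by positivity)]
  rw [hnorm]
  calc ‖Dd q u‖ * ((kap q u) ^ 2)⁻¹
      ≤ (2 * |Real.log q| / ((1 - q ^ u) ^ 3 * (1 - q ^ 2))) * (1 - q ^ u) ^ 4 :=
        mul_le_mul hDd h2 (by positivity) (by positivity)
  _ = 2 * |Real.log q| * (1 - q ^ u) / (1 - q ^ 2) := by field_simp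
  _ ≤ 2 * |Real.log q| / (1 - q ^ 2) := by
      apply div_le_div₀ (by positivity) ?_ hq2 le_rfl
      nlinarith [abs_nonneg (Real.log q)]


end main
end Stmt9

/-- For `q ∈ (0,1)` and `x(u) = (f(u)−1)/κ(u)`, the function `x`
is differentiable on `(0,∞)` and for every `θ > 0`,
`∫₀^θ [−log q/(log q + log(1−q) + Ψ_q(u))] · x'(u) du = 1/κ(θ)`. -/
theorem stmt_9 (q : ℝ) (hq : q ∈ Set.Ioo (0 : ℝ) 1) :
    let κ : ℝ → ℝ := fun θ => ∑' k : ℕ, q ^ (k : ℕ) / (1 - q ^ (θ + (k : ℝ))) ^ 2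
    let f : ℝ → ℝ := fun θ => ∑' k : ℕ, q ^ (2 * θ + 2 * (k : ℝ)) / (1 - q ^ (θ + (k : ℝ))) ^ 2
    let Ψ : ℝ → ℝ := fun z =>
      -Real.log (1 - q) + Real.log q * ∑' k : ℕ, q ^ (z + (k : ℝ)) / (1 - q ^ (z + (k : ℝ)))
    let x : ℝ → ℝ := fun u => (f u - 1) / κ u
    DifferentiableOn ℝ x (Set.Ioi 0) ∧
    ∀ θ : ℝ, 0 < θ →
      (∫ u in (0 : ℝ)..θ,
        (-Real.log q / (Real.log q + Real.log (1 - q) + Ψ u)) * deriv x u) = 1 / κ θ := by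
  obtain ⟨hq0, hq1⟩ := hq
  intro κ f Ψ x
  have hL : Real.log q < 0 := Real.log_neg hq0 hq1
  have hxD : ∀ u : ℝ, 0 < u →
      HasDerivAt x ((Stmt9.Ess q u + 1) * Stmt9.Dd q u / (Stmt9.kap q u) ^ 2) u :=
    fun u hu => Stmt9.x_hasDerivAt hq0 hq1 hu
  constructor
  · exact fun u hu => ((hxD u hu).differentiableAt).differentiableWithinAt
  · intro θ hθ
    have hInt : ∀ u : ℝ, 0 < u →
        (-Real.log q / (Real.log q + Real.log (1 - q) + Ψ u)) * deriv x u
          = -(Stmt9.Dd q u) / (Stmt9.kap q u) ^ 2 := by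
      intro u hu
      rw [(hxD u hu).deriv]
      have hΨ : Ψ u = -Real.log (1 - q) + Real.log q * Stmt9.Ess q u := rfl
      have hden : Real.log q + Real.log (1 - q) + Ψ u
          = Real.log q * (1 + Stmt9.Ess q u) := by rw [hΨ]; ring
      rw [hden]
      have hS1 : 0 < 1 + Stmt9.Ess q u := by
        have := Stmt9.Ess_nonneg hq0 hq1 hu; linarith
      have hκ := Stmt9.kap_pos hq0 hq1 hu
      field_simp [hL.ne, hS1.ne', hκ.ne']
      ring
    have hF : ∀ u ∈ Set.Ioo (0:ℝ) θ, HasDerivAt (fun v => (Stmt9.kap q v)⁻¹)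
        ((-Real.log q / (Real.log q + Real.log (1 - q) + Ψ u)) * deriv x u) u := by
      intro u hu
      rw [hInt u hu.1]
      exact (Stmt9.kap_hasDerivAt hq0 hq1 hu.1).inv (Stmt9.kap_pos hq0 hq1 hu.1).ne'
    have hint : IntervalIntegrable
        (fun u => (-Real.log q / (Real.log q + Real.log (1 - q) + Ψ u)) * deriv x u)
        MeasureTheory.volume 0 θ := by
      rw [intervalIntegrable_iff, Set.uIoc_of_le hθ.le]
      constructor
      · have hd : ∀ u ∈ Set.Ioc (0:ℝ) θ,
            (-Real.log q / (Real.log q + Real.log (1 - q) + Ψ u)) * deriv x u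
              = deriv (fun v => (Stmt9.kap q v)⁻¹) u := by
          intro u hu
          rw [hInt u hu.1]
          exact (((Stmt9.kap_hasDerivAt hq0 hq1 hu.1).inv
            (Stmt9.kap_pos hq0 hq1 hu.1).ne').deriv).symm
        refine ((measurable_deriv (fun v => (Stmt9.kap q v)⁻¹)).aestronglyMeasurable.restrict).congr ?_
        rw [Filter.EventuallyEq, MeasureTheory.ae_restrict_iff' measurableSet_Ioc]
        exact MeasureTheory.ae_of_all _ (fun u hu => (hd u hu).symm)
      · apply MeasureTheory.HasFiniteIntegral.of_bounded
          (C := 2 * |Real.log q| / (1 - q ^ 2))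
        rw [MeasureTheory.ae_restrict_iff' measurableSet_Ioc]
        refine MeasureTheory.ae_of_all _ (fun u hu => ?_)
        rw [hInt u hu.1, neg_div, norm_neg]
        exact Stmt9.Dd_div_le hq0 hq1 hu.1
    have h0 : Filter.Tendsto (fun v => (Stmt9.kap q v)⁻¹) (nhdsWithin 0 (Set.Ioi 0))
        (nhds 0) := by
      have hsq : Filter.Tendsto (fun v : ℝ => (1 - q ^ v) ^ 2) (nhdsWithin 0 (Set.Ioi 0))
          (nhds 0) := by
        have hc : ContinuousAt (fun v : ℝ => (1 - q ^ v) ^ 2) 0 :=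
          (continuousAt_const.sub (Real.continuousAt_const_rpow hq0.ne')).pow 2
        have h2 := hc.tendsto.mono_left (nhdsWithin_le_nhds (s := Set.Ioi (0:ℝ)))
        simpa [Real.rpow_zero] using h2
      refine tendsto_of_tendsto_of_tendsto_of_le_of_le' tendsto_const_nhds hsq ?_ ?_
      · filter_upwards [self_mem_nhdsWithin] with v hv
        exact inv_nonneg.2 (Stmt9.kap_pos hq0 hq1 hv).le
      · filter_upwards [self_mem_nhdsWithin] with v hv
        have hvp : 0 < 1 - q ^ v := (Stmt9.sub_lower hq0 hq1 hv le_rfl 0).1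
        rw [← inv_inv ((1 - q ^ v) ^ 2)]
        exact inv_anti₀ (by positivity) (Stmt9.kap_lower hq0 hq1 hv)
    have hbθ : Filter.Tendsto (fun v => (Stmt9.kap q v)⁻¹) (nhdsWithin θ (Set.Iio θ))
        (nhds ((Stmt9.kap q θ)⁻¹)) :=
      (((Stmt9.kap_hasDerivAt hq0 hq1 hθ).continuousAt).inv₀
        (Stmt9.kap_pos hq0 hq1 hθ).ne').tendsto.mono_left nhdsWithin_le_nhds
    have hFTC := intervalIntegral.integral_eq_sub_of_hasDerivAt_of_tendsto hθ hF hint h0 hbθ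
    rw [hFTC, sub_zero, one_div]
    rfl
end

section
/- Let q ∈ (0,1) and for t ∈ ℝ, t ≠ 0, define f_t : ℝ → ℝ by f_t(y) = 1/(−q^{yt};q)_∞ = ∏_{k=0}^∞ (1 + q^{yt+k})^{−1}. Then: (1) for every t > 0 the function f_t is strictly increasing on ℝ, and for every t < 0 it is strictly decreasing; (2) for every δ > 0, sup_{y ∈ ℝ, |y| ≥ δ} |f_t(y) − 𝟙(y > 0)| → 0 as t → +∞, i.e. f_t converges uniformly on ℝ \ [−δ, δ] to the indicator function of (0,∞). -/
open Real Filter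

noncomputable def auxS (q x : ℝ) : ℝ := ∑' k : ℕ, Real.log (1 + q ^ (x + (k : ℝ)))

variable {q : ℝ}

lemma aux_summable (hq0 : 0 < q) (hq1 : q < 1) (x : ℝ) :
    Summable (fun k : ℕ => Real.log (1 + q ^ (x + (k : ℝ)))) := by
  have hpos : ∀ k : ℕ, (0:ℝ) < q ^ (x + (k:ℝ)) := fun k => Real.rpow_pos_of_pos hq0 _
  refine Summable.of_nonneg_of_le
    (fun k => Real.log_nonneg (by linarith [hpos k])) (fun k => ?_)
    (Summable.mul_left (q ^ x) (summable_geometric_of_lt_one hq0.le hq1))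
  have h1 := Real.log_le_sub_one_of_pos (x := 1 + q ^ (x + (k:ℝ))) (by linarith [hpos k])
  have h2 : q ^ (x + (k:ℝ)) = q ^ x * q ^ k := by
    rw [Real.rpow_add hq0, Real.rpow_natCast]
  linarith

lemma aux_prod_eq (hq0 : 0 < q) (hq1 : q < 1) (x : ℝ) :
    (∏' k : ℕ, (1 + q ^ (x + (k : ℝ)))⁻¹) = Real.exp (-(auxS q x)) := by
  have hpos : ∀ k : ℕ, (0:ℝ) < q ^ (x + (k:ℝ)) := fun k => Real.rpow_pos_of_pos hq0 _
  have hs := ((aux_summable hq0 hq1 x).hasSum).neg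
  have hp : HasProd (fun k : ℕ => Real.exp (-(Real.log (1 + q ^ (x + (k:ℝ))))))
      (Real.exp (-(auxS q x))) := by
    have heq : (fun s : Finset ℕ => ∏ k ∈ s, Real.exp (-(Real.log (1 + q ^ (x + (k:ℝ)))))) =
        (Real.exp ∘ fun s : Finset ℕ => ∑ k ∈ s, -(Real.log (1 + q ^ (x + (k:ℝ))))) := by
      funext s
      exact (Real.exp_sum _ _).symm
    rw [HasProd, heq, auxS]
    exact (Real.continuous_exp.tendsto _).comp hs
  have : (fun k : ℕ => Real.exp (-(Real.log (1 + q ^ (x + (k:ℝ))))))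
      = fun k : ℕ => (1 + q ^ (x + (k:ℝ)))⁻¹ := by
    funext k
    rw [Real.exp_neg, Real.exp_log (by linarith [hpos k])]
  rw [this] at hp
  exact hp.tprod_eq

lemma aux_S_nonneg (hq0 : 0 < q) (x : ℝ) : 0 ≤ auxS q x :=
  tsum_nonneg fun k => Real.log_nonneg (by linarith [Real.rpow_pos_of_pos hq0 (x + (k:ℝ))])

lemma aux_S_le (hq0 : 0 < q) (hq1 : q < 1) (x : ℝ) : auxS q x ≤ q ^ x * (1 - q)⁻¹ := by
  have h := Summable.tsum_le_tsum (f := fun k : ℕ => Real.log (1 + q ^ (x + (k:ℝ))))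
    (g := fun k : ℕ => q ^ x * q ^ k) ?_ (aux_summable hq0 hq1 x)
    (Summable.mul_left (q ^ x) (summable_geometric_of_lt_one hq0.le hq1))
  · rwa [tsum_mul_left, tsum_geometric_of_lt_one hq0.le hq1] at h
  · intro k
    have hpos : (0:ℝ) < q ^ (x + (k:ℝ)) := Real.rpow_pos_of_pos hq0 _
    have h1 := Real.log_le_sub_one_of_pos (x := 1 + q ^ (x + (k:ℝ))) (by linarith)
    have h2 : q ^ (x + (k:ℝ)) = q ^ x * q ^ k := by
      rw [Real.rpow_add hq0, Real.rpow_natCast]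
    linarith

lemma aux_log_le_S (hq0 : 0 < q) (hq1 : q < 1) (x : ℝ) :
    Real.log (1 + q ^ x) ≤ auxS q x := by
  have := Summable.le_tsum (aux_summable hq0 hq1 x) 0
    (fun j _ => Real.log_nonneg (by linarith [Real.rpow_pos_of_pos hq0 (x + (j:ℝ))]))
  simpa [auxS] using this

lemma aux_S_strictAnti (hq0 : 0 < q) (hq1 : q < 1) {x₁ x₂ : ℝ} (h : x₁ < x₂) :
    auxS q x₂ < auxS q x₁ := by
  refine Summable.tsum_lt_tsum (i := 0) (fun k => ?_) ?_ (aux_summable hq0 hq1 x₂)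
    (aux_summable hq0 hq1 x₁)
  · dsimp only
    have hlt : q ^ (x₂ + (k:ℝ)) < q ^ (x₁ + (k:ℝ)) :=
      Real.rpow_lt_rpow_of_exponent_gt hq0 hq1 (by
        have : (0:ℝ) ≤ (k:ℝ) := Nat.cast_nonneg k
        linarith)
    have hpos : (0:ℝ) < q ^ (x₂ + (k:ℝ)) := Real.rpow_pos_of_pos hq0 _
    exact Real.log_le_log (by linarith) (by linarith)
  · have hlt : q ^ (x₂ + ((0:ℕ):ℝ)) < q ^ (x₁ + ((0:ℕ):ℝ)) :=
      Real.rpow_lt_rpow_of_exponent_gt hq0 hq1 (by norm_num; linarith)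
    have hpos : (0:ℝ) < q ^ (x₂ + ((0:ℕ):ℝ)) := Real.rpow_pos_of_pos hq0 _
    exact Real.log_lt_log (by linarith) (by linarith)

/-- For `q ∈ (0,1)` and `t ≠ 0`, let
`f_t(y) = 1/(−q^(yt);q)_∞ = ∏_{k=0}^∞ (1 + q^(yt+k))⁻¹`. Then `f_t` is
strictly increasing for `t > 0`, strictly decreasing for `t < 0`, and for
every `δ > 0`, `f_t → 𝟙(y>0)` uniformly on `{|y| ≥ δ}` as `t → +∞`. -/
theorem stmt_10 (q : ℝ) (hq : q ∈ Set.Ioo (0 : ℝ) 1) :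
    let F : ℝ → ℝ → ℝ := fun t y => ∏' k : ℕ, (1 + q ^ (y * t + (k : ℝ)))⁻¹
    (∀ t : ℝ, 0 < t → StrictMono (F t)) ∧
    (∀ t : ℝ, t < 0 → StrictAnti (F t)) ∧
    ∀ δ : ℝ, 0 < δ →
      TendstoUniformlyOn F (fun y => if 0 < y then 1 else 0) Filter.atTop
        {y : ℝ | δ ≤ |y|} := by
  obtain ⟨hq0, hq1⟩ := hq
  intro F
  have hF : ∀ t y : ℝ, F t y = Real.exp (-(auxS q (y * t))) := fun t y =>
    aux_prod_eq hq0 hq1 (y * t)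
  refine ⟨?_, ?_, ?_⟩
  · intro t ht y₁ y₂ h
    rw [hF, hF, Real.exp_lt_exp, neg_lt_neg_iff]
    exact aux_S_strictAnti hq0 hq1 (by nlinarith)
  · intro t ht y₁ y₂ h
    rw [hF, hF, Real.exp_lt_exp, neg_lt_neg_iff]
    exact aux_S_strictAnti hq0 hq1 (by nlinarith)
  · intro δ hδ
    rw [Metric.tendstoUniformlyOn_iff]
    intro ε hε
    have hc : (0:ℝ) < (1 - q)⁻¹ := inv_pos.mpr (by linarith)
    have htend : Tendsto (fun t : ℝ => q ^ (δ * t) * (1 - q)⁻¹) atTop (nhds 0) := by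
      have h1 : Tendsto (fun t : ℝ => q ^ (δ * t)) atTop (nhds 0) :=
        (tendsto_rpow_atTop_of_base_lt_one q (by linarith) hq1).comp
          (tendsto_id.const_mul_atTop hδ)
      simpa using h1.mul_const ((1 - q)⁻¹)
    filter_upwards [htend.eventually (gt_mem_nhds hε), eventually_ge_atTop (0:ℝ)]
      with t hbound ht0
    intro y hy
    have hy' : δ ≤ |y| := hy
    rcases le_abs.mp hy' with hyd | hyd
    · -- y ≥ δ > 0
      have hy0 : 0 < y := lt_of_lt_of_le hδ hyd
      have hSle : auxS q (y * t) ≤ q ^ (δ * t) * (1 - q)⁻¹ := by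
        refine (aux_S_le hq0 hq1 (y * t)).trans ?_
        have : q ^ (y * t) ≤ q ^ (δ * t) :=
          Real.rpow_le_rpow_of_exponent_ge hq0 hq1.le
            (mul_le_mul_of_nonneg_right hyd ht0)
        exact mul_le_mul_of_nonneg_right this hc.le
      have hS0 : 0 ≤ auxS q (y * t) := aux_S_nonneg hq0 _
      have hexp : 1 - auxS q (y * t) ≤ Real.exp (-(auxS q (y * t))) := by
        have := Real.add_one_le_exp (-(auxS q (y * t)))
        linarith
      have hle1 : Real.exp (-(auxS q (y * t))) ≤ 1 := by
        rw [show (1:ℝ) = Real.exp 0 by simp, Real.exp_le_exp]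
        linarith
      rw [if_pos hy0, hF, Real.dist_eq, abs_of_nonneg (by linarith)]
      linarith
    · -- y ≤ -δ < 0
      have hy0 : ¬ 0 < y := by intro h; linarith
      have hSge : Real.log (1 + q ^ (y * t)) ≤ auxS q (y * t) := aux_log_le_S hq0 hq1 _
      have hqpos : (0:ℝ) < q ^ (y * t) := Real.rpow_pos_of_pos hq0 _
      have hFle : Real.exp (-(auxS q (y * t))) ≤ (1 + q ^ (y * t))⁻¹ := by
        rw [← Real.exp_log (show (0:ℝ) < (1 + q ^ (y * t))⁻¹ by positivity),
          Real.exp_le_exp, Real.log_inv]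
        linarith
      have h2 : (1 + q ^ (y * t))⁻¹ ≤ q ^ (δ * t) := by
        have hd : q ^ (-(y * t)) ≤ q ^ (δ * t) := by
          apply Real.rpow_le_rpow_of_exponent_ge hq0 hq1.le
          nlinarith [mul_le_mul_of_nonneg_right hyd ht0]
        calc (1 + q ^ (y * t))⁻¹ ≤ (q ^ (y * t))⁻¹ := by
              apply inv_anti₀ hqpos; linarith
          _ = q ^ (-(y * t)) := by rw [Real.rpow_neg hq0.le]
          _ ≤ q ^ (δ * t) := hd
      have h1q : (1:ℝ) ≤ (1 - q)⁻¹ := by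
        nlinarith [mul_inv_cancel₀ (show (1:ℝ) - q ≠ 0 by linarith)]
      have h3 : q ^ (δ * t) ≤ q ^ (δ * t) * (1 - q)⁻¹ :=
        le_mul_of_one_le_right (Real.rpow_pos_of_pos hq0 _).le h1q
      rw [if_neg hy0, hF, Real.dist_eq, zero_sub, abs_neg,
        abs_of_nonneg (Real.exp_pos _).le]
      linarith
end

section
/- Let (f_n)_{n≥1} be a sequence of functions ℝ → [0,1] such that each f_n is strictly decreasing with lim_{y→−∞} f_n(y) = 1 and lim_{y→+∞} f_n(y) = 0, and such that for every δ > 0, f_n converges uniformly on ℝ \ [−δ, δ] to the indicator 𝟙(y < 0). Let (X_n)_{n≥1} be real-valued random variables (each defined on some probability space) such that for every r ∈ ℝ, E[f_n(X_n − r)] → p(r) as n → ∞, where p : ℝ → [0,1] is a continuous probability distribution function (nondecreasing, continuous, with limits 0 at −∞ and 1 at +∞). Then for every r ∈ ℝ, P(X_n < r) → p(r); i.e., X_n converges weakly in distribution to a random variable X with P(X < r) = p(r). -/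
open MeasureTheory Filter


/-- elementary probability lemma: Let `f_n : ℝ → [0,1]` be
strictly decreasing with limits `1` at `−∞` and `0` at `+∞`, converging
uniformly on `ℝ \ [−δ,δ]` (for each `δ > 0`) to `𝟙(y<0)`. Let `μ n` be the
law of the random variable `X_n` and suppose `E[f_n(X_n − r)] → p(r)` for each
`r`, with `p` a continuous probability distribution function. Then
`P(X_n < r) → p(r)` for every `r`, i.e. `X_n` converges weakly in distribution
to the law with distribution function `p`. -/
theorem stmt_11 (f : ℕ → ℝ → ℝ) (p : ℝ → ℝ)
    (hf01 : ∀ n y, f n y ∈ Set.Icc (0 : ℝ) 1)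
    (hfanti : ∀ n, StrictAnti (f n))
    (hfbot : ∀ n, Filter.Tendsto (f n) Filter.atBot (nhds 1))
    (hftop : ∀ n, Filter.Tendsto (f n) Filter.atTop (nhds 0))
    (hfunif : ∀ δ : ℝ, 0 < δ →
      TendstoUniformlyOn f (fun y => if y < 0 then 1 else 0) Filter.atTop
        {y : ℝ | δ ≤ |y|})
    (hpmono : Monotone p) (hpcont : Continuous p)
    (hpbot : Filter.Tendsto p Filter.atBot (nhds 0))
    (hptop : Filter.Tendsto p Filter.atTop (nhds 1))
    (μ : ℕ → Measure ℝ) (hμ : ∀ n, IsProbabilityMeasure (μ n))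
    (hconv : ∀ r : ℝ,
      Filter.Tendsto (fun n => ∫ x, f n (x - r) ∂(μ n)) Filter.atTop (nhds (p r))) :
    ∀ r : ℝ,
      Filter.Tendsto (fun n => ((μ n) (Set.Iio r)).toReal) Filter.atTop (nhds (p r)) := by
  intro r
  -- basic facts
  have hint : ∀ n (a : ℝ), Integrable (fun x => f n (x - a)) (μ n) := by
    intro n a
    haveI := hμ n
    have hmeas : Measurable (f n) := (hfanti n).antitone.measurable
    have hm2 : Measurable fun x => f n (x - a) :=
      hmeas.comp (measurable_id.sub measurable_const)
    refine (integrable_const (1 : ℝ)).mono' hm2.aestronglyMeasurable ?_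
    refine ae_of_all _ fun x => ?_
    have h := hf01 n (x - a)
    rw [Real.norm_eq_abs, abs_le]
    constructor <;> linarith [h.1, h.2]
  have hm01 : ∀ n, ((μ n) (Set.Iio r)).toReal ∈ Set.Icc (0:ℝ) 1 := by
    intro n
    haveI := hμ n
    constructor
    · exact ENNReal.toReal_nonneg
    · have h : μ n (Set.Iio r) ≤ 1 := prob_le_one
      calc ((μ n) (Set.Iio r)).toReal ≤ (1 : ENNReal).toReal :=
            ENNReal.toReal_mono ENNReal.one_ne_top h
        _ = 1 := by simp
  -- pointwise limits at ±δ
  have hδ0 : ∀ δ : ℝ, 0 < δ → Tendsto (fun n => f n δ) atTop (nhds 0) := by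
    intro δ hδ
    have h := (hfunif δ hδ).tendsto_at (x := δ) (by simp [abs_of_pos hδ])
    simpa [not_lt.mpr hδ.le] using h
  have hδ1 : ∀ δ : ℝ, 0 < δ → Tendsto (fun n => f n (-δ)) atTop (nhds 1) := by
    intro δ hδ
    have h := (hfunif δ hδ).tendsto_at (x := -δ) (by simp [abs_of_pos hδ])
    simpa [neg_neg_iff_pos.mpr hδ] using h
  -- key integral inequalities
  have hlow : ∀ n (δ : ℝ), 0 < δ →
      (∫ x, f n (x - (r - δ)) ∂(μ n)) - f n δ ≤ ((μ n) (Set.Iio r)).toReal := by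
    intro n δ hδ
    haveI := hμ n
    have hpt : ∀ x, f n (x - (r - δ)) ≤
        Set.indicator (Set.Iio r) (fun _ => (1:ℝ)) x + f n δ := by
      intro x
      by_cases hx : x < r
      · rw [Set.indicator_of_mem (show x ∈ Set.Iio r from hx)]
        have := (hf01 n (x - (r - δ))).2
        have := (hf01 n δ).1
        linarith
      · rw [Set.indicator_of_notMem (show x ∉ Set.Iio r from hx)]
        push_neg at hx
        have h1 : δ ≤ x - (r - δ) := by linarith
        have := (hfanti n).antitone h1
        linarith
    have hI1 : Integrable (Set.indicator (Set.Iio r) (fun _ => (1:ℝ))) (μ n) := by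
      exact (integrable_const (1:ℝ)).indicator measurableSet_Iio
    have hI2 : Integrable (fun x => Set.indicator (Set.Iio r) (fun _ => (1:ℝ)) x + f n δ) (μ n) :=
      hI1.add (integrable_const _)
    have hle := integral_mono (hint n (r - δ)) hI2 hpt
    have heq : (∫ x, (Set.indicator (Set.Iio r) (fun _ => (1:ℝ)) x + f n δ) ∂(μ n))
        = ((μ n) (Set.Iio r)).toReal + f n δ := by
      rw [integral_add hI1 (integrable_const _), integral_indicator_const _ measurableSet_Iio,
        integral_const]
      simp
      rfl
    rw [heq] at hle
    linarith
  have hhigh : ∀ n (δ : ℝ), 0 < δ →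
      f n (-δ) * ((μ n) (Set.Iio r)).toReal ≤ ∫ x, f n (x - (r + δ)) ∂(μ n) := by
    intro n δ hδ
    haveI := hμ n
    have hpt : ∀ x, Set.indicator (Set.Iio r) (fun _ => f n (-δ)) x ≤ f n (x - (r + δ)) := by
      intro x
      by_cases hx : x < r
      · rw [Set.indicator_of_mem (show x ∈ Set.Iio r from hx)]
        have h1 : x - (r + δ) ≤ -δ := by linarith
        exact (hfanti n).antitone h1
      · rw [Set.indicator_of_notMem (show x ∉ Set.Iio r from hx)]
        exact (hf01 n _).1
    have hI1 : Integrable (Set.indicator (Set.Iio r) (fun _ => f n (-δ))) (μ n) :=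
      (integrable_const _).indicator measurableSet_Iio
    have hle := integral_mono hI1 (hint n (r + δ)) hpt
    rwa [integral_indicator_const _ measurableSet_Iio, smul_eq_mul, mul_comm] at hle
  -- main ε-argument
  rw [Metric.tendsto_atTop]
  intro ε hε
  have hε4 : 0 < ε / 4 := by linarith
  obtain ⟨δ0, hδ0pos, hδ0p⟩ := Metric.continuousAt_iff.mp (hpcont.continuousAt (x := r)) (ε/4) hε4
  set δ := δ0 / 2 with hδdef
  have hδpos : 0 < δ := by positivity
  have hp1 : |p (r - δ) - p r| < ε / 4 := by
    have := hδ0p (x := r - δ) (by rw [Real.dist_eq]; rw [show r - δ - r = -δ by ring]; rw [abs_neg, abs_of_pos hδpos]; linarith)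
    rwa [Real.dist_eq] at this
  have hp2 : |p (r + δ) - p r| < ε / 4 := by
    have := hδ0p (x := r + δ) (by rw [Real.dist_eq]; rw [show r + δ - r = δ by ring]; rw [abs_of_pos hδpos]; linarith)
    rwa [Real.dist_eq] at this
  have e1 : ∀ᶠ n in atTop, |(∫ x, f n (x - (r - δ)) ∂(μ n)) - p (r - δ)| < ε / 4 := by
    have := (hconv (r - δ)) (Metric.ball_mem_nhds _ hε4)
    simpa [Metric.mem_ball, Real.dist_eq] using this
  have e2 : ∀ᶠ n in atTop, |(∫ x, f n (x - (r + δ)) ∂(μ n)) - p (r + δ)| < ε / 4 := by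
    have := (hconv (r + δ)) (Metric.ball_mem_nhds _ hε4)
    simpa [Metric.mem_ball, Real.dist_eq] using this
  have e3 : ∀ᶠ n in atTop, |f n δ - 0| < ε / 4 := by
    have := (hδ0 δ hδpos) (Metric.ball_mem_nhds _ hε4)
    simpa [Metric.mem_ball, Real.dist_eq] using this
  have e4 : ∀ᶠ n in atTop, |f n (-δ) - 1| < ε / 4 := by
    have := (hδ1 δ hδpos) (Metric.ball_mem_nhds _ hε4)
    simpa [Metric.mem_ball, Real.dist_eq] using this
  have key : ∀ᶠ n in atTop, dist ((μ n) (Set.Iio r)).toReal (p r) < ε := by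
    filter_upwards [e1, e2, e3, e4] with n h1 h2 h3 h4
    set m := ((μ n) (Set.Iio r)).toReal with hmdef
    have hm := hm01 n
    have hlo := hlow n δ hδpos
    have hhi := hhigh n δ hδpos
    have hf3 := hf01 n δ
    have hf4 := hf01 n (-δ)
    rw [Real.dist_eq, abs_lt]
    rw [abs_lt] at h1 h2 h3 h4 hp1 hp2
    have hup : m ≤ (∫ x, f n (x - (r + δ)) ∂(μ n)) + (1 - f n (-δ)) := by
      nlinarith [hm.1, hm.2, hf4.1, hf4.2]
    constructor
    · linarith [h1.1, h1.2, h3.2, hp1.1]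
    · linarith [h2.2, h4.1, hp2.2, hup]
  exact eventually_atTop.mp key
end

section
/- Let q ∈ (0,1) and θ > 0. For Z ∈ ℂ with Re Z > 0 define f₀(Z) = −f(θ)(log q)Z + κ(θ) q^Z + Σ_{k=0}^∞ Log(1 − q^{Z+k}). Then f₀ is complex differentiable at every such Z, with derivative f₀'(Z) = −log q · Σ_{k=0}^∞ q^{2k}(q^θ − q^Z)² / ((1 − q^{θ+k})²(1 − q^{Z+k})). -/
open Complex

/-- Termwise algebraic identity. -/
lemma stmt12_aux_frac (a b : ℂ) (ha : 1 - a ≠ 0) (hb : 1 - b ≠ 0) :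
    (a - b) ^ 2 / ((1 - a) ^ 2 * (1 - b))
      = a ^ 2 / (1 - a) ^ 2 - b / (1 - a) ^ 2 + b / (1 - b) := by
  field_simp
  ring

lemma stmt12_norm_cpow (q : ℝ) (hq0 : 0 < q) (W : ℂ) (k : ℕ) :
    ‖(q : ℂ) ^ (W + (k : ℕ))‖ = q ^ (W.re + (k : ℝ)) := by
  rw [Complex.norm_cpow_eq_rpow_re_of_pos hq0]
  simp

lemma stmt12_lt_one (q : ℝ) (hq0 : 0 < q) (hq1 : q < 1) {x : ℝ} (hx : 0 < x) :
    q ^ x < 1 :=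
  Real.rpow_lt_one hq0.le hq1 hx

/-- The denominators are away from zero. -/
lemma stmt12_den (q : ℝ) (hq0 : 0 < q) (hq1 : q < 1) (W : ℂ) (hW : 0 < W.re) (k : ℕ) :
    1 - q ^ (W.re + (k : ℝ)) ≤ ‖1 - (q : ℂ) ^ (W + (k : ℕ))‖ ∧
      (1 - (q : ℂ) ^ (W + (k : ℕ))) ∈ Complex.slitPlane := by
  have hn := stmt12_norm_cpow q hq0 W k
  have hlt : q ^ (W.re + (k : ℝ)) < 1 :=
    stmt12_lt_one q hq0 hq1 (by positivity)
  constructor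
  · calc 1 - q ^ (W.re + (k : ℝ)) = 1 - ‖(q : ℂ) ^ (W + (k : ℕ))‖ := by rw [hn]
    _ ≤ ‖1 - (q : ℂ) ^ (W + (k : ℕ))‖ := by
        have := norm_sub_norm_le (1 : ℂ) ((q : ℂ) ^ (W + (k : ℕ)))
        simpa using this
  · refine Or.inl ?_
    have hre : ((q : ℂ) ^ (W + (k : ℕ))).re ≤ ‖(q : ℂ) ^ (W + (k : ℕ))‖ :=
      Complex.re_le_norm _
    have : (1 - (q : ℂ) ^ (W + (k : ℕ))).re = 1 - ((q : ℂ) ^ (W + (k : ℕ))).re := by simp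
    rw [this]
    rw [hn] at hre
    linarith

lemma stmt12_den_ne (q : ℝ) (hq0 : 0 < q) (hq1 : q < 1) (W : ℂ) (hW : 0 < W.re) (k : ℕ) :
    1 - (q : ℂ) ^ (W + (k : ℕ)) ≠ 0 := by
  have h := (stmt12_den q hq0 hq1 W hW k).1
  intro h0
  rw [h0] at h
  simp only [norm_zero] at h
  have : q ^ (W.re + (k : ℝ)) < 1 := stmt12_lt_one q hq0 hq1 (by positivity)
  linarith

/-- derivative of each log term -/
lemma stmt12_hasDeriv_log (q : ℝ) (hq0 : 0 < q) (hq1 : q < 1) (k : ℕ) (W : ℂ)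
    (hW : 0 < W.re) :
    HasDerivAt (fun W : ℂ => Complex.log (1 - (q : ℂ) ^ (W + (k : ℕ))))
      (-((Real.log q : ℂ)) * ((q:ℂ) ^ (W + (k:ℕ)) / (1 - (q:ℂ) ^ (W + (k:ℕ))))) W := by
  have hq0c : (q : ℂ) ≠ 0 := by exact_mod_cast hq0.ne'
  have h1 : HasDerivAt (fun W : ℂ => W + (k : ℕ)) 1 W := (hasDerivAt_id W).add_const _
  have h2 := h1.const_cpow (c := (q:ℂ)) (Or.inl hq0c)
  have h3 := h2.const_sub 1
  have h4 := h3.clog (stmt12_den q hq0 hq1 W hW k).2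
  convert h4 using 1
  rw [← Complex.ofReal_log hq0.le]
  ring

/-- For `q ∈ (0,1)`, `θ > 0` and `Z ∈ ℂ` with `Re Z > 0`, the
function `f₀(Z) = −f(θ)(log q)Z + κ(θ) q^Z + Σ_{k=0}^∞ Log(1 − q^(Z+k))` is
complex differentiable with derivative
`f₀'(Z) = −log q · Σ_{k=0}^∞ q^(2k)(q^θ − q^Z)²/((1 − q^(θ+k))²(1 − q^(Z+k)))`. -/
theorem stmt_12 (q θ : ℝ) (hq : q ∈ Set.Ioo (0 : ℝ) 1) (hθ : 0 < θ) :
    let κ : ℝ := ∑' k : ℕ, q ^ (k : ℕ) / (1 - q ^ (θ + (k : ℝ))) ^ 2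
    let f : ℝ := ∑' k : ℕ, q ^ (2 * θ + 2 * (k : ℝ)) / (1 - q ^ (θ + (k : ℝ))) ^ 2
    ∀ Z : ℂ, 0 < Z.re →
      HasDerivAt
        (fun W : ℂ =>
          -(f : ℂ) * (Real.log q : ℂ) * W + (κ : ℂ) * (q : ℂ) ^ W
            + ∑' k : ℕ, Complex.log (1 - (q : ℂ) ^ (W + (k : ℕ))))
        (-(Real.log q : ℂ) *
          ∑' k : ℕ,
            (q : ℂ) ^ (2 * k) * ((q : ℂ) ^ (θ : ℂ) - (q : ℂ) ^ Z) ^ 2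
              / ((((1 - q ^ (θ + (k : ℝ))) ^ 2 : ℝ) : ℂ) * (1 - (q : ℂ) ^ (Z + (k : ℕ))))) Z := by
  obtain ⟨hq0, hq1⟩ := hq
  intro κ f Z hZ
  have hq0c : (q : ℂ) ≠ 0 := by exact_mod_cast hq0.ne'
  set L : ℝ := Real.log q with hL
  -- geometric summability
  have hgeo : Summable (fun k : ℕ => q ^ k) :=
    summable_geometric_of_lt_one hq0.le hq1
  -- real denominators
  have hqθ : q ^ θ < 1 := stmt12_lt_one q hq0 hq1 hθ
  have hdenθ : ∀ k : ℕ, 1 - q ^ θ ≤ 1 - q ^ (θ + (k : ℝ)) := by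
    intro k
    have : q ^ (θ + (k : ℝ)) ≤ q ^ θ :=
      Real.rpow_le_rpow_of_exponent_ge hq0 hq1.le (le_add_of_nonneg_right (Nat.cast_nonneg k))
    linarith
  have hdenθpos : (0:ℝ) < 1 - q ^ θ := by linarith
  -- summability of the κ series
  have SB : Summable (fun k : ℕ => q ^ (k : ℕ) / (1 - q ^ (θ + (k : ℝ))) ^ 2) := by
    refine Summable.of_nonneg_of_le (fun k => by positivity) (fun k => ?_)
      (hgeo.mul_left ((1 - q ^ θ)⁻¹ ^ 2))
    rw [div_le_iff₀ (by nlinarith [hdenθ k])]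
    rw [inv_pow]
    rw [inv_mul_eq_div, div_mul_eq_mul_div, le_div_iff₀ (by positivity)]
    have h1 : (1 - q ^ θ) ^ 2 ≤ (1 - q ^ (θ + (k : ℝ))) ^ 2 := by
      nlinarith [hdenθ k]
    nlinarith [pow_nonneg hq0.le k]
  -- summability of the f series
  have SA : Summable (fun k : ℕ => q ^ (2 * θ + 2 * (k : ℝ)) / (1 - q ^ (θ + (k : ℝ))) ^ 2) := by
    refine Summable.of_nonneg_of_le (fun k => by positivity) (fun k => ?_) SB
    have h1 : q ^ (2 * θ + 2 * (k : ℝ)) ≤ q ^ ((k : ℕ) : ℝ) :=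
      Real.rpow_le_rpow_of_exponent_ge hq0 hq1.le (by push_cast; linarith)
    rw [Real.rpow_natCast] at h1
    have h2 : (0:ℝ) < (1 - q ^ (θ + (k : ℝ))) ^ 2 := by nlinarith [hdenθ k]
    exact (div_le_div_iff_of_pos_right h2).mpr h1
  -- norm of the base terms
  have hb_norm : ∀ (W : ℂ), ∀ k : ℕ, ‖(q:ℂ) ^ (W + (k:ℕ))‖ = q ^ W.re * q ^ k := by
    intro W k
    rw [stmt12_norm_cpow q hq0, Real.rpow_add hq0, Real.rpow_natCast]
  -- the open preconnected set
  set t : Set ℂ := {W : ℂ | Z.re / 2 < W.re} with ht_def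
  have ht_open : IsOpen t := isOpen_lt continuous_const Complex.continuous_re
  have ht_conn : IsPreconnected t := (convex_halfSpace_re_gt (Z.re/2)).isPreconnected
  have hZt : Z ∈ t := by simpa [ht_def] using half_lt_self hZ
  have hδ : (0:ℝ) < Z.re/2 := half_pos hZ
  have hqδ : q ^ (Z.re/2) < 1 := stmt12_lt_one q hq0 hq1 hδ
  -- summable bound on the derivatives
  set u : ℕ → ℝ := fun k => (|L| * q ^ (Z.re/2) / (1 - q ^ (Z.re/2))) * q ^ k with hu
  have hu_sum : Summable u := hgeo.mul_left _
  have hbound : ∀ (k : ℕ) (W : ℂ), W ∈ t →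
      ‖-((L:ℝ):ℂ) * ((q:ℂ) ^ (W + (k:ℕ)) / (1 - (q:ℂ) ^ (W + (k:ℕ))))‖ ≤ u k := by
    intro k W hWt
    have hWt' : Z.re / 2 < W.re := hWt
    have hW : 0 < W.re := lt_trans hδ hWt'
    have hden := (stmt12_den q hq0 hq1 W hW k).1
    have hd2 : (0:ℝ) < 1 - q ^ (Z.re/2) := by linarith
    have hmono : q ^ (W.re + (k:ℝ)) ≤ q ^ (Z.re/2) * q ^ k := by
      rw [← Real.rpow_natCast q k, ← Real.rpow_add hq0]
      exact Real.rpow_le_rpow_of_exponent_ge hq0 hq1.le (by linarith)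
    have hmono2 : q ^ (W.re + (k:ℝ)) ≤ q ^ (Z.re/2) := by
      calc q ^ (W.re + (k:ℝ)) ≤ q ^ (Z.re/2) * q ^ k := hmono
      _ ≤ q ^ (Z.re/2) * 1 := by
          have : q ^ k ≤ 1 := pow_le_one₀ hq0.le hq1.le
          nlinarith [Real.rpow_pos_of_pos hq0 (Z.re/2)]
      _ = q ^ (Z.re/2) := mul_one _
    have hden' : 1 - q ^ (Z.re/2) ≤ ‖1 - (q:ℂ) ^ (W + (k:ℕ))‖ := by
      refine le_trans ?_ hden; linarith
    rw [norm_mul, norm_div, norm_neg, Complex.norm_real, Real.norm_eq_abs,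
      stmt12_norm_cpow q hq0]
    have : q ^ (W.re + (k:ℝ)) / ‖1 - (q:ℂ) ^ (W + (k:ℕ))‖
        ≤ (q ^ (Z.re/2) * q ^ k) / (1 - q ^ (Z.re/2)) := by
      apply div_le_div₀ (by positivity) hmono hd2 hden'
    calc |L| * (q ^ (W.re + (k:ℝ)) / ‖1 - (q:ℂ) ^ (W + (k:ℕ))‖)
        ≤ |L| * ((q ^ (Z.re/2) * q ^ k) / (1 - q ^ (Z.re/2))) := by
          exact mul_le_mul_of_nonneg_left this (abs_nonneg _)
      _ = u k := by rw [hu]; ring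
  -- summability of the log series at Z
  have hg0 : Summable (fun k : ℕ => Complex.log (1 - (q:ℂ) ^ (Z + (k:ℕ)))) := by
    have htend : Filter.Tendsto (fun k : ℕ => q ^ Z.re * q ^ k) Filter.atTop (nhds 0) := by
      simpa using (tendsto_pow_atTop_nhds_zero_of_lt_one hq0.le hq1).const_mul (q ^ Z.re)
    refine Summable.of_norm_bounded_eventually_nat (g := fun k => 3/2 * (q ^ Z.re * q ^ k))
      ((hgeo.mul_left _).mul_left _) ?_
    filter_upwards [htend.eventually_lt_const (by norm_num : (0:ℝ) < 1/2)] with k hk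
    have hb : ‖-((q:ℂ) ^ (Z + (k:ℕ)))‖ ≤ 1/2 := by
      rw [norm_neg, hb_norm Z k]; exact hk.le
    calc ‖Complex.log (1 - (q:ℂ) ^ (Z + (k:ℕ)))‖
        = ‖Complex.log (1 + -((q:ℂ) ^ (Z + (k:ℕ))))‖ := by rw [sub_eq_add_neg]
      _ ≤ 3/2 * ‖-((q:ℂ) ^ (Z + (k:ℕ)))‖ := Complex.norm_log_one_add_half_le_self hb
      _ = 3/2 * (q ^ Z.re * q ^ k) := by rw [norm_neg, hb_norm Z k]
  -- derivative of the log series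
  have Hlog : HasDerivAt (fun W : ℂ => ∑' k : ℕ, Complex.log (1 - (q:ℂ) ^ (W + (k:ℕ))))
      (∑' k : ℕ, -((L:ℝ):ℂ) * ((q:ℂ) ^ (Z + (k:ℕ)) / (1 - (q:ℂ) ^ (Z + (k:ℕ))))) Z :=
    hasDerivAt_tsum_of_isPreconnected hu_sum ht_open ht_conn
      (fun k W hWt => stmt12_hasDeriv_log q hq0 hq1 k W (lt_trans hδ hWt))
      hbound hZt hg0 hZt
  -- derivatives of the elementary parts
  have H1 : HasDerivAt (fun W : ℂ => -(f:ℂ) * ((L:ℝ):ℂ) * W) (-(f:ℂ) * ((L:ℝ):ℂ)) Z := by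
    simpa using (hasDerivAt_id Z).const_mul (-(f:ℂ) * ((L:ℝ):ℂ))
  have H2 : HasDerivAt (fun W : ℂ => (κ:ℂ) * (q:ℂ) ^ W)
      ((κ:ℂ) * ((q:ℂ) ^ Z * ((L:ℝ):ℂ))) Z := by
    have h := ((hasDerivAt_id Z).const_cpow (c := (q:ℂ)) (Or.inl hq0c)).const_mul (κ:ℂ)
    refine h.congr_deriv ?_
    simp only [id_eq, mul_one]
    rw [← Complex.ofReal_log hq0.le]
  have Htot := (H1.add H2).add Hlog
  refine Htot.congr_deriv ?_
  -- summability facts in ℂ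
  have SAc : Summable (fun k : ℕ =>
      ((q ^ (2 * θ + 2 * (k:ℝ)) / (1 - q ^ (θ + (k:ℝ))) ^ 2 : ℝ) : ℂ)) :=
    (Complex.summable_ofReal).mpr SA
  have SBc : Summable (fun k : ℕ =>
      ((q ^ (k:ℕ) / (1 - q ^ (θ + (k:ℝ))) ^ 2 : ℝ) : ℂ)) :=
    (Complex.summable_ofReal).mpr SB
  have SCc : Summable (fun k : ℕ => (q:ℂ) ^ (Z + (k:ℕ)) / (1 - (q:ℂ) ^ (Z + (k:ℕ)))) := by
    refine Summable.of_norm_bounded (g := fun k => (q ^ Z.re / (1 - q ^ Z.re)) * q ^ k)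
      (hgeo.mul_left _) (fun k => ?_)
    have hden := (stmt12_den q hq0 hq1 Z hZ k).1
    have hqZ : q ^ Z.re < 1 := stmt12_lt_one q hq0 hq1 hZ
    have hmono2 : q ^ (Z.re + (k:ℝ)) ≤ q ^ Z.re :=
      Real.rpow_le_rpow_of_exponent_ge hq0 hq1.le (le_add_of_nonneg_right (Nat.cast_nonneg k))
    have hden' : 1 - q ^ Z.re ≤ ‖1 - (q:ℂ) ^ (Z + (k:ℕ))‖ := le_trans (by linarith) hden
    show ‖(q:ℂ) ^ (Z + (k:ℕ)) / (1 - (q:ℂ) ^ (Z + (k:ℕ)))‖ ≤ q ^ Z.re / (1 - q ^ Z.re) * q ^ k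
    rw [norm_div, stmt12_norm_cpow q hq0, Real.rpow_add hq0, Real.rpow_natCast]
    calc q ^ Z.re * q ^ k / ‖1 - (q:ℂ) ^ (Z + (k:ℕ))‖
        ≤ (q ^ Z.re * q ^ k) / (1 - q ^ Z.re) :=
          div_le_div₀ (by positivity) le_rfl (by linarith) hden'
      _ = q ^ Z.re / (1 - q ^ Z.re) * q ^ k := by ring
  -- termwise identity
  have key : ∀ k : ℕ,
      (q : ℂ) ^ (2 * k) * ((q : ℂ) ^ (θ : ℂ) - (q : ℂ) ^ Z) ^ 2
          / ((((1 - q ^ (θ + (k : ℝ))) ^ 2 : ℝ) : ℂ) * (1 - (q : ℂ) ^ (Z + (k : ℕ))))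
        = ((q ^ (2 * θ + 2 * (k:ℝ)) / (1 - q ^ (θ + (k:ℝ))) ^ 2 : ℝ) : ℂ)
          - (q:ℂ) ^ Z * ((q ^ (k:ℕ) / (1 - q ^ (θ + (k:ℝ))) ^ 2 : ℝ) : ℂ)
          + (q:ℂ) ^ (Z + (k:ℕ)) / (1 - (q:ℂ) ^ (Z + (k:ℕ))) := by
    intro k
    set a : ℂ := ((q ^ (θ + (k:ℝ)) : ℝ) : ℂ) with ha_def
    set b : ℂ := (q:ℂ) ^ (Z + (k:ℕ)) with hb_def
    have hθk1 : q ^ (θ + (k:ℝ)) < 1 := stmt12_lt_one q hq0 hq1 (by positivity)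
    have ha_ne : 1 - a ≠ 0 := by
      rw [ha_def, ← Complex.ofReal_one, ← Complex.ofReal_sub]
      exact Complex.ofReal_ne_zero.mpr (by linarith)
    have hb_ne : 1 - b ≠ 0 := stmt12_den_ne q hq0 hq1 Z hZ k
    have ha_eq : a = (q:ℂ) ^ (θ:ℂ) * (q:ℂ) ^ (k:ℕ) := by
      rw [ha_def, Complex.ofReal_cpow hq0.le, Complex.ofReal_add, Complex.ofReal_natCast,
        Complex.cpow_add _ _ hq0c, Complex.cpow_natCast]
    have hb_eq : b = (q:ℂ) ^ Z * (q:ℂ) ^ (k:ℕ) := by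
      rw [hb_def, Complex.cpow_add _ _ hq0c, Complex.cpow_natCast]
    have hnum : (q : ℂ) ^ (2 * k) * ((q : ℂ) ^ (θ : ℂ) - (q : ℂ) ^ Z) ^ 2 = (a - b) ^ 2 := by
      rw [ha_eq, hb_eq, pow_mul]
      ring
    have hden2 : (((1 - q ^ (θ + (k : ℝ))) ^ 2 : ℝ) : ℂ) = (1 - a) ^ 2 := by
      rw [ha_def]; push_cast; ring
    have hA : ((q ^ (2 * θ + 2 * (k:ℝ)) : ℝ) : ℂ) = a ^ 2 := by
      have hr : q ^ (2 * θ + 2 * (k:ℝ)) = (q ^ (θ + (k:ℝ))) ^ (2:ℕ) := by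
        rw [← Real.rpow_natCast (q ^ (θ + (k:ℝ))) 2, ← Real.rpow_mul hq0.le]
        congr 1
        push_cast
        ring
      rw [hr, Complex.ofReal_pow, ← ha_def]
    have hmid : (q:ℂ) ^ Z * (((q ^ (k:ℕ) : ℝ):ℂ) / (1 - a) ^ 2) = b / (1 - a) ^ 2 := by
      push_cast
      rw [hb_eq]
      ring
    rw [hnum, hden2, Complex.ofReal_div, Complex.ofReal_div, hden2, hA, hmid]
    exact stmt12_aux_frac a b ha_ne hb_ne
  -- put everything together
  have hκc : (κ:ℂ) = ∑' k : ℕ, ((q ^ (k:ℕ) / (1 - q ^ (θ + (k:ℝ))) ^ 2 : ℝ) : ℂ) := by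
    rw [show κ = ∑' k : ℕ, q ^ (k:ℕ) / (1 - q ^ (θ + (k:ℝ))) ^ 2 from rfl,
      Complex.ofReal_tsum]
  have hfc : (f:ℂ)
      = ∑' k : ℕ, ((q ^ (2 * θ + 2 * (k:ℝ)) / (1 - q ^ (θ + (k:ℝ))) ^ 2 : ℝ) : ℂ) := by
    rw [show f = ∑' k : ℕ, q ^ (2 * θ + 2 * (k:ℝ)) / (1 - q ^ (θ + (k:ℝ))) ^ 2 from rfl,
      Complex.ofReal_tsum]
  rw [tsum_congr key, Summable.tsum_add (SAc.sub (SBc.mul_left _)) SCc,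
    Summable.tsum_sub SAc (SBc.mul_left _), tsum_mul_left, tsum_mul_left, ← hκc, ← hfc]
  ring
end

section
/- Let q ∈ (0,1) and θ > 0, and define f₀ : (0,∞) → ℝ by f₀(z) = −f(θ)(log q)z + κ(θ) q^z + Σ_{k=0}^∞ log(1 − q^{z+k}). Then f₀ is three times differentiable at z = θ, and θ is a double critical point: f₀'(θ) = 0, f₀''(θ) = 0, and f₀'''(θ) = Ψ_q'(θ) log q − Ψ_q''(θ) (= 2χ, where χ = (Ψ_q'(θ) log q − Ψ_q''(θ))/2). -/
open Real Set Filter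

private lemma aux_geo {q : ℝ} (hq : q ∈ Set.Ioo (0:ℝ) 1) (c : ℝ) :
    Summable (fun k : ℕ => q ^ (c + (k:ℝ))) := by
  have h := (summable_geometric_of_lt_one hq.1.le hq.2).mul_left (q ^ c)
  exact h.congr fun k => by rw [Real.rpow_add hq.1, Real.rpow_natCast]

private lemma aux_bd {q : ℝ} (hq : q ∈ Set.Ioo (0:ℝ) 1) {a : ℕ → ℝ} {C c : ℝ}
    (h : ∀ k : ℕ, |a k| ≤ C * q ^ (c + (k:ℝ))) : Summable a := by
  have h2 := (aux_geo hq c).mul_left C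
  exact (h2.of_nonneg_of_le (fun k => abs_nonneg _) h).of_abs

-- basic facts
example {q : ℝ} (hq : q ∈ Set.Ioo (0:ℝ) 1) {z : ℝ} (hz : 0 < z) (k : ℕ) :
    q ^ (z + (k:ℝ)) < 1 :=
  Real.rpow_lt_one hq.1.le hq.2 (by positivity)

example {q : ℝ} (hq : q ∈ Set.Ioo (0:ℝ) 1) {c z : ℝ} (h : c ≤ z) (k : ℕ) :
    q ^ (z + (k:ℝ)) ≤ q ^ (c + (k:ℝ)) :=
  Real.rpow_le_rpow_of_exponent_ge hq.1 hq.2.le (by linarith)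

private lemma d_base {q : ℝ} (hq : q ∈ Set.Ioo (0:ℝ) 1) (k : ℕ) (z : ℝ) :
    HasDerivAt (fun z : ℝ => q ^ (z + (k:ℝ))) (q ^ (z + (k:ℝ)) * Real.log q) z := by
  have h := ((Real.hasStrictDerivAt_const_rpow hq.1 (z + (k:ℝ))).hasDerivAt).comp z
    ((hasDerivAt_id z).add_const (k:ℝ))
  rw [mul_one] at h
  exact h

private lemma d_F {q : ℝ} (hq : q ∈ Set.Ioo (0:ℝ) 1) (k : ℕ) {z : ℝ} (hz : 0 < z) :
    HasDerivAt (fun z : ℝ => Real.log (1 - q ^ (z + (k:ℝ))))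
      (-Real.log q * (q ^ (z + (k:ℝ)) / (1 - q ^ (z + (k:ℝ))))) z := by
  have hu1 : q ^ (z + (k:ℝ)) < 1 := Real.rpow_lt_one hq.1.le hq.2 (by positivity)
  have h := (((d_base hq k z).const_sub (1:ℝ)).log (by linarith))
  convert h using 1
  ring

private lemma d_G {q : ℝ} (hq : q ∈ Set.Ioo (0:ℝ) 1) (k : ℕ) {z : ℝ} (hz : 0 < z) :
    HasDerivAt (fun z : ℝ => q ^ (z + (k:ℝ)) / (1 - q ^ (z + (k:ℝ))))
      (Real.log q * (q ^ (z + (k:ℝ)) / (1 - q ^ (z + (k:ℝ))) ^ 2)) z := by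
  have hu1 : q ^ (z + (k:ℝ)) < 1 := Real.rpow_lt_one hq.1.le hq.2 (by positivity)
  have hd : (1 : ℝ) - q ^ (z + (k:ℝ)) ≠ 0 := by linarith
  have h := (d_base hq k z).div ((d_base hq k z).const_sub (1:ℝ)) hd
  refine h.congr_deriv ?_
  field_simp
  ring

private lemma d_H {q : ℝ} (hq : q ∈ Set.Ioo (0:ℝ) 1) (k : ℕ) {z : ℝ} (hz : 0 < z) :
    HasDerivAt (fun z : ℝ => q ^ (z + (k:ℝ)) / (1 - q ^ (z + (k:ℝ))) ^ 2)
      (Real.log q *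
        (q ^ (z + (k:ℝ)) * (1 + q ^ (z + (k:ℝ))) / (1 - q ^ (z + (k:ℝ))) ^ 3)) z := by
  have hu1 : q ^ (z + (k:ℝ)) < 1 := Real.rpow_lt_one hq.1.le hq.2 (by positivity)
  have hd : (1 : ℝ) - q ^ (z + (k:ℝ)) ≠ 0 := by linarith
  have h := (d_base hq k z).div
    (((d_base hq k z).const_sub (1:ℝ)).pow 2) (pow_ne_zero 2 hd)
  refine h.congr_deriv ?_
  simp only [Pi.pow_apply]
  field_simp
  ring

private lemma bG {q : ℝ} (hq : q ∈ Set.Ioo (0:ℝ) 1) {c z : ℝ} (hc : 0 < c) (hcz : c ≤ z)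
    (k : ℕ) :
    |q ^ (z + (k:ℝ)) / (1 - q ^ (z + (k:ℝ)))| ≤ (1 - q ^ c)⁻¹ * q ^ (c + (k:ℝ)) := by
  have hk : (0:ℝ) ≤ (k:ℝ) := Nat.cast_nonneg k
  have hu0 : 0 < q ^ (z + (k:ℝ)) := Real.rpow_pos_of_pos hq.1 _
  have hle : q ^ (z + (k:ℝ)) ≤ q ^ (c + (k:ℝ)) :=
    Real.rpow_le_rpow_of_exponent_ge hq.1 hq.2.le (by linarith)
  have huc : q ^ (z + (k:ℝ)) ≤ q ^ c :=
    Real.rpow_le_rpow_of_exponent_ge hq.1 hq.2.le (by linarith)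
  have hqc1 : q ^ c < 1 := Real.rpow_lt_one hq.1.le hq.2 hc
  have hden : (0:ℝ) < 1 - q ^ c := by linarith
  have hpos : (0:ℝ) < 1 - q ^ (z + (k:ℝ)) := by linarith
  rw [abs_of_nonneg (div_nonneg hu0.le hpos.le), inv_mul_eq_div]
  exact div_le_div₀ (Real.rpow_pos_of_pos hq.1 _).le hle hden (by linarith)

private lemma bH {q : ℝ} (hq : q ∈ Set.Ioo (0:ℝ) 1) {c z : ℝ} (hc : 0 < c) (hcz : c ≤ z)
    (k : ℕ) :
    |q ^ (z + (k:ℝ)) / (1 - q ^ (z + (k:ℝ))) ^ 2| ≤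
      ((1 - q ^ c) ^ 2)⁻¹ * q ^ (c + (k:ℝ)) := by
  have hk : (0:ℝ) ≤ (k:ℝ) := Nat.cast_nonneg k
  have hu0 : 0 < q ^ (z + (k:ℝ)) := Real.rpow_pos_of_pos hq.1 _
  have hle : q ^ (z + (k:ℝ)) ≤ q ^ (c + (k:ℝ)) :=
    Real.rpow_le_rpow_of_exponent_ge hq.1 hq.2.le (by linarith)
  have huc : q ^ (z + (k:ℝ)) ≤ q ^ c :=
    Real.rpow_le_rpow_of_exponent_ge hq.1 hq.2.le (by linarith)
  have hqc1 : q ^ c < 1 := Real.rpow_lt_one hq.1.le hq.2 hc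
  have hden : (0:ℝ) < 1 - q ^ c := by linarith
  have hpos : (0:ℝ) < 1 - q ^ (z + (k:ℝ)) := by linarith
  rw [abs_of_nonneg (div_nonneg hu0.le (pow_nonneg hpos.le 2)), inv_mul_eq_div]
  exact div_le_div₀ (Real.rpow_pos_of_pos hq.1 _).le hle (pow_pos hden 2)
    (pow_le_pow_left₀ hden.le (by linarith) 2)

private lemma bK {q : ℝ} (hq : q ∈ Set.Ioo (0:ℝ) 1) {c z : ℝ} (hc : 0 < c) (hcz : c ≤ z)
    (k : ℕ) :
    |q ^ (z + (k:ℝ)) * (1 + q ^ (z + (k:ℝ))) / (1 - q ^ (z + (k:ℝ))) ^ 3| ≤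
      (2 / (1 - q ^ c) ^ 3) * q ^ (c + (k:ℝ)) := by
  have hk : (0:ℝ) ≤ (k:ℝ) := Nat.cast_nonneg k
  have hu0 : 0 < q ^ (z + (k:ℝ)) := Real.rpow_pos_of_pos hq.1 _
  have hu1 : q ^ (z + (k:ℝ)) < 1 := Real.rpow_lt_one hq.1.le hq.2 (by linarith)
  have hle : q ^ (z + (k:ℝ)) ≤ q ^ (c + (k:ℝ)) :=
    Real.rpow_le_rpow_of_exponent_ge hq.1 hq.2.le (by linarith)
  have huc : q ^ (z + (k:ℝ)) ≤ q ^ c :=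
    Real.rpow_le_rpow_of_exponent_ge hq.1 hq.2.le (by linarith)
  have hqc1 : q ^ c < 1 := Real.rpow_lt_one hq.1.le hq.2 hc
  have hden : (0:ℝ) < 1 - q ^ c := by linarith
  have hpos : (0:ℝ) < 1 - q ^ (z + (k:ℝ)) := by linarith
  rw [abs_of_nonneg (div_nonneg (mul_nonneg hu0.le (by linarith)) (pow_nonneg hpos.le 3))]
  have h1 : q ^ (z + (k:ℝ)) * (1 + q ^ (z + (k:ℝ))) ≤ 2 * q ^ (c + (k:ℝ)) := by nlinarith
  have h2 : (1 - q ^ c) ^ 3 ≤ (1 - q ^ (z + (k:ℝ))) ^ 3 :=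
    pow_le_pow_left₀ hden.le (by linarith) 3
  calc q ^ (z + (k:ℝ)) * (1 + q ^ (z + (k:ℝ))) / (1 - q ^ (z + (k:ℝ))) ^ 3
      ≤ 2 * q ^ (c + (k:ℝ)) / (1 - q ^ c) ^ 3 :=
        div_le_div₀ (by nlinarith [Real.rpow_pos_of_pos hq.1 (c+(k:ℝ))]) h1 (pow_pos hden 3) h2
    _ = (2 / (1 - q ^ c) ^ 3) * q ^ (c + (k:ℝ)) := by ring

private lemma bF {q : ℝ} (hq : q ∈ Set.Ioo (0:ℝ) 1) {z : ℝ} (hz : 0 < z) (k : ℕ) :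
    |Real.log (1 - q ^ (z + (k:ℝ)))| ≤ (1 - q ^ z)⁻¹ * q ^ (z + (k:ℝ)) := by
  have hk : (0:ℝ) ≤ (k:ℝ) := Nat.cast_nonneg k
  have hu0 : 0 < q ^ (z + (k:ℝ)) := Real.rpow_pos_of_pos hq.1 _
  have hu1 : q ^ (z + (k:ℝ)) < 1 := Real.rpow_lt_one hq.1.le hq.2 (by linarith)
  have huc : q ^ (z + (k:ℝ)) ≤ q ^ z :=
    Real.rpow_le_rpow_of_exponent_ge hq.1 hq.2.le (by linarith)
  have hqc1 : q ^ z < 1 := Real.rpow_lt_one hq.1.le hq.2 hz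
  have hden : (0:ℝ) < 1 - q ^ z := by linarith
  have hpos : (0:ℝ) < 1 - q ^ (z + (k:ℝ)) := by linarith
  rw [abs_of_nonpos (Real.log_nonpos (by linarith) (by linarith))]
  rw [(Real.log_inv _).symm]
  have h2 : Real.log (1 - q ^ (z + (k:ℝ)))⁻¹ ≤ (1 - q ^ (z + (k:ℝ)))⁻¹ - 1 :=
    Real.log_le_sub_one_of_pos (by positivity)
  have h3 : (1 - q ^ (z + (k:ℝ)))⁻¹ - 1 = q ^ (z + (k:ℝ)) / (1 - q ^ (z + (k:ℝ))) := by
    field_simp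
    ring
  have h4 : q ^ (z + (k:ℝ)) / (1 - q ^ (z + (k:ℝ))) ≤ q ^ (z + (k:ℝ)) / (1 - q ^ z) :=
    div_le_div_of_nonneg_left hu0.le hden (by linarith)
  rw [inv_mul_eq_div]
  linarith
/-- For `q ∈ (0,1)`, `θ > 0`, the real function
`f₀(z) = −f(θ)(log q)z + κ(θ)q^z + Σ log(1 − q^(z+k))` is three times
differentiable at `θ`, which is a double critical point:
`f₀'(θ) = 0`, `f₀''(θ) = 0` and `f₀'''(θ) = Ψ_q'(θ) log q − Ψ_q''(θ)`. -/
theorem stmt_13 (q θ : ℝ) (hq : q ∈ Set.Ioo (0 : ℝ) 1) (hθ : 0 < θ) :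
    let κ : ℝ := ∑' k : ℕ, q ^ (k : ℕ) / (1 - q ^ (θ + (k : ℝ))) ^ 2
    let f : ℝ := ∑' k : ℕ, q ^ (2 * θ + 2 * (k : ℝ)) / (1 - q ^ (θ + (k : ℝ))) ^ 2
    let f₀ : ℝ → ℝ := fun z =>
      -f * Real.log q * z + κ * q ^ z + ∑' k : ℕ, Real.log (1 - q ^ (z + (k : ℝ)))
    let Ψ' : ℝ → ℝ := fun z =>
      (Real.log q) ^ 2 * ∑' k : ℕ, q ^ (z + (k : ℝ)) / (1 - q ^ (z + (k : ℝ))) ^ 2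
    let Ψ'' : ℝ → ℝ := fun z =>
      (Real.log q) ^ 3 *
        ∑' k : ℕ, q ^ (z + (k : ℝ)) * (1 + q ^ (z + (k : ℝ))) / (1 - q ^ (z + (k : ℝ))) ^ 3
    HasDerivAt f₀ 0 θ ∧
    HasDerivAt (deriv f₀) 0 θ ∧
    HasDerivAt (deriv (deriv f₀)) (Ψ' θ * Real.log q - Ψ'' θ) θ := by
  intro κ f f₀ Ψ' Ψ''
  set L := Real.log q with hL
  set c := θ / 2 with hcdef
  have hc : 0 < c := by positivity
  have hcθ : c < θ := by rw [hcdef]; linarith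
  have hmem : θ ∈ Set.Ioi c := Set.mem_Ioi.mpr hcθ
  -- summability at θ
  have sumF : Summable (fun k : ℕ => Real.log (1 - q ^ (θ + (k:ℝ)))) :=
    aux_bd hq (fun k => bF hq hθ k)
  have sumG : Summable (fun k : ℕ => q ^ (θ + (k:ℝ)) / (1 - q ^ (θ + (k:ℝ)))) :=
    aux_bd hq (fun k => bG hq hθ le_rfl k)
  have sumH : Summable (fun k : ℕ => q ^ (θ + (k:ℝ)) / (1 - q ^ (θ + (k:ℝ))) ^ 2) :=
    aux_bd hq (fun k => bH hq hθ le_rfl k)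
  -- first derivative
  have hd1 : ∀ z ∈ Set.Ioi c, HasDerivAt f₀
      (-f * L + κ * (q ^ z * L) +
        ∑' k : ℕ, -L * (q ^ (z + (k:ℝ)) / (1 - q ^ (z + (k:ℝ))))) z := by
    intro z hz
    have hzc : c < z := hz
    have h_lin : HasDerivAt (fun z : ℝ => -f * L * z) (-f * L) z := by
      simpa using (hasDerivAt_id z).const_mul (-f * L)
    have h_rpow : HasDerivAt (fun z : ℝ => κ * q ^ z) (κ * (q ^ z * L)) z :=
      ((Real.hasStrictDerivAt_const_rpow hq.1 z).hasDerivAt).const_mul κ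
    have h_sum : HasDerivAt (fun y : ℝ => ∑' k : ℕ, Real.log (1 - q ^ (y + (k:ℝ))))
        (∑' k : ℕ, -L * (q ^ (z + (k:ℝ)) / (1 - q ^ (z + (k:ℝ))))) z := by
      refine hasDerivAt_tsum_of_isPreconnected
        (u := fun k : ℕ => |L| * ((1 - q ^ c)⁻¹ * q ^ (c + (k:ℝ))))
        (((aux_geo hq c).mul_left _).mul_left _) isOpen_Ioi isPreconnected_Ioi
        (fun k y hy => d_F hq k (hc.trans hy)) ?_ hmem sumF hz
      intro k y hy
      rw [Real.norm_eq_abs, abs_mul, abs_neg]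
      exact mul_le_mul_of_nonneg_left (bG hq hc (le_of_lt hy) k) (abs_nonneg _)
    exact (h_lin.add h_rpow).add h_sum
  -- second derivative
  have hd2 : ∀ z ∈ Set.Ioi c, HasDerivAt (fun z : ℝ => -f * L + κ * (q ^ z * L) +
        ∑' k : ℕ, -L * (q ^ (z + (k:ℝ)) / (1 - q ^ (z + (k:ℝ)))))
      (0 + κ * (q ^ z * L * L) +
        ∑' k : ℕ, -L * (L * (q ^ (z + (k:ℝ)) / (1 - q ^ (z + (k:ℝ))) ^ 2))) z := by
    intro z hz
    have h_rpow : HasDerivAt (fun z : ℝ => κ * (q ^ z * L)) (κ * (q ^ z * L * L)) z :=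
      (((Real.hasStrictDerivAt_const_rpow hq.1 z).hasDerivAt).mul_const L).const_mul κ
    have h_sum : HasDerivAt
        (fun y : ℝ => ∑' k : ℕ, -L * (q ^ (y + (k:ℝ)) / (1 - q ^ (y + (k:ℝ)))))
        (∑' k : ℕ, -L * (L * (q ^ (z + (k:ℝ)) / (1 - q ^ (z + (k:ℝ))) ^ 2))) z := by
      refine hasDerivAt_tsum_of_isPreconnected
        (u := fun k : ℕ => |L| * (|L| * (((1 - q ^ c) ^ 2)⁻¹ * q ^ (c + (k:ℝ)))))
        ((((aux_geo hq c).mul_left _).mul_left _).mul_left _) isOpen_Ioi isPreconnected_Ioi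
        (fun k y hy => (d_G hq k (hc.trans hy)).const_mul (-L)) ?_ hmem
        (sumG.mul_left _) hz
      intro k y hy
      rw [Real.norm_eq_abs, abs_mul, abs_neg, abs_mul]
      exact mul_le_mul_of_nonneg_left
        (mul_le_mul_of_nonneg_left (bH hq hc (le_of_lt hy) k) (abs_nonneg _)) (abs_nonneg _)
    exact ((hasDerivAt_const z (-f * L)).add h_rpow).add h_sum
  -- third derivative
  have hd3 : HasDerivAt (fun z : ℝ => 0 + κ * (q ^ z * L * L) +
        ∑' k : ℕ, -L * (L * (q ^ (z + (k:ℝ)) / (1 - q ^ (z + (k:ℝ))) ^ 2)))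
      (0 + κ * (q ^ θ * L * L * L) +
        ∑' k : ℕ, -L * (L * (L * (q ^ (θ + (k:ℝ)) * (1 + q ^ (θ + (k:ℝ))) /
          (1 - q ^ (θ + (k:ℝ))) ^ 3)))) θ := by
    have h_rpow : HasDerivAt (fun z : ℝ => κ * (q ^ z * L * L)) (κ * (q ^ θ * L * L * L)) θ :=
      ((((Real.hasStrictDerivAt_const_rpow hq.1 θ).hasDerivAt).mul_const L).mul_const
        L).const_mul κ
    have h_sum : HasDerivAt
        (fun y : ℝ => ∑' k : ℕ, -L * (L * (q ^ (y + (k:ℝ)) / (1 - q ^ (y + (k:ℝ))) ^ 2)))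
        (∑' k : ℕ, -L * (L * (L * (q ^ (θ + (k:ℝ)) * (1 + q ^ (θ + (k:ℝ))) /
          (1 - q ^ (θ + (k:ℝ))) ^ 3)))) θ := by
      refine hasDerivAt_tsum_of_isPreconnected
        (u := fun k : ℕ => |L| * (|L| * (|L| * ((2 / (1 - q ^ c) ^ 3) * q ^ (c + (k:ℝ))))))
        (((((aux_geo hq c).mul_left _).mul_left _).mul_left _).mul_left _)
        isOpen_Ioi isPreconnected_Ioi
        (fun k y hy => ((d_H hq k (hc.trans hy)).const_mul L).const_mul (-L)) ?_ hmem
        ((sumH.mul_left _).mul_left _) hmem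
      intro k y hy
      rw [Real.norm_eq_abs, abs_mul, abs_neg, abs_mul, abs_mul]
      refine mul_le_mul_of_nonneg_left (mul_le_mul_of_nonneg_left
        (mul_le_mul_of_nonneg_left (bK hq hc (le_of_lt hy) k) (abs_nonneg _))
        (abs_nonneg _)) (abs_nonneg _)
    exact ((hasDerivAt_const θ (0:ℝ)).add h_rpow).add h_sum
  -- key algebraic identities
  have keyκ : q ^ θ * κ = ∑' k : ℕ, q ^ (θ + (k:ℝ)) / (1 - q ^ (θ + (k:ℝ))) ^ 2 := by
    rw [show κ = ∑' k : ℕ, q ^ (k:ℕ) / (1 - q ^ (θ + (k:ℝ))) ^ 2 from rfl, ← tsum_mul_left]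
    exact tsum_congr fun k => by
      rw [← mul_div_assoc, ← Real.rpow_natCast q k, ← Real.rpow_add hq.1]
  have keyf : (∑' k : ℕ, q ^ (θ + (k:ℝ)) / (1 - q ^ (θ + (k:ℝ))) ^ 2) =
      f + ∑' k : ℕ, q ^ (θ + (k:ℝ)) / (1 - q ^ (θ + (k:ℝ))) := by
    have sumf : Summable (fun k : ℕ => q ^ (2 * θ + 2 * (k:ℝ)) / (1 - q ^ (θ + (k:ℝ))) ^ 2) := by
      refine aux_bd hq (C := ((1 - q ^ θ) ^ 2)⁻¹) (c := θ) fun k => ?_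
      have hk : (0:ℝ) ≤ (k:ℝ) := Nat.cast_nonneg k
      have hu0 : 0 < q ^ (θ + (k:ℝ)) := Real.rpow_pos_of_pos hq.1 _
      have hu1 : q ^ (θ + (k:ℝ)) < 1 := Real.rpow_lt_one hq.1.le hq.2 (by linarith)
      have h2 : 0 < q ^ (2 * θ + 2 * (k:ℝ)) := Real.rpow_pos_of_pos hq.1 _
      have hle : q ^ (2 * θ + 2 * (k:ℝ)) ≤ q ^ (θ + (k:ℝ)) :=
        Real.rpow_le_rpow_of_exponent_ge hq.1 hq.2.le (by linarith)
      have hqθ : q ^ θ < 1 := Real.rpow_lt_one hq.1.le hq.2 hθ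
      have hden : (0:ℝ) < 1 - q ^ θ := by linarith
      have huc : q ^ (θ + (k:ℝ)) ≤ q ^ θ :=
        Real.rpow_le_rpow_of_exponent_ge hq.1 hq.2.le (by linarith)
      rw [abs_of_nonneg (div_nonneg h2.le (pow_nonneg (by linarith) 2)), inv_mul_eq_div]
      exact div_le_div₀ (Real.rpow_pos_of_pos hq.1 _).le hle (pow_pos hden 2)
        (pow_le_pow_left₀ hden.le (by linarith) 2)
    have hterm : ∀ k : ℕ, q ^ (θ + (k:ℝ)) / (1 - q ^ (θ + (k:ℝ))) ^ 2 =
        q ^ (2 * θ + 2 * (k:ℝ)) / (1 - q ^ (θ + (k:ℝ))) ^ 2 +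
          q ^ (θ + (k:ℝ)) / (1 - q ^ (θ + (k:ℝ))) := by
      intro k
      have hk : (0:ℝ) ≤ (k:ℝ) := Nat.cast_nonneg k
      have hu0 : 0 < q ^ (θ + (k:ℝ)) := Real.rpow_pos_of_pos hq.1 _
      have hu1 : q ^ (θ + (k:ℝ)) < 1 := Real.rpow_lt_one hq.1.le hq.2 (by linarith)
      have hd : (1:ℝ) - q ^ (θ + (k:ℝ)) ≠ 0 := by linarith
      have h2 : q ^ (2 * θ + 2 * (k:ℝ)) = q ^ (θ + (k:ℝ)) * q ^ (θ + (k:ℝ)) := by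
        rw [← Real.rpow_add hq.1]; ring_nf
      rw [h2]; field_simp; ring
    rw [tsum_congr hterm, Summable.tsum_add sumf sumG]
  -- assemble
  have hnbd : Set.Ioi c ∈ nhds θ := Ioi_mem_nhds hcθ
  have hev1 : deriv f₀ =ᶠ[nhds θ] (fun z : ℝ => -f * L + κ * (q ^ z * L) +
      ∑' k : ℕ, -L * (q ^ (z + (k:ℝ)) / (1 - q ^ (z + (k:ℝ))))) :=
    Filter.eventuallyEq_of_mem hnbd fun z hz => (hd1 z hz).deriv
  have hev2 : deriv (deriv f₀) =ᶠ[nhds θ] (fun z : ℝ => 0 + κ * (q ^ z * L * L) +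
      ∑' k : ℕ, -L * (L * (q ^ (z + (k:ℝ)) / (1 - q ^ (z + (k:ℝ))) ^ 2))) :=
    hev1.deriv.trans (Filter.eventuallyEq_of_mem hnbd fun z hz => (hd2 z hz).deriv)
  have e1 : q ^ θ * κ = f + ∑' k : ℕ, q ^ (θ + (k:ℝ)) / (1 - q ^ (θ + (k:ℝ))) :=
    keyκ.trans keyf
  refine ⟨?_, ?_, ?_⟩
  · have h := hd1 θ hmem
    have hval : -f * L + κ * (q ^ θ * L) +
        (∑' k : ℕ, -L * (q ^ (θ + (k:ℝ)) / (1 - q ^ (θ + (k:ℝ))))) = 0 := by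
      rw [tsum_mul_left]
      linear_combination L * e1
    rwa [hval] at h
  · have h := (hd2 θ hmem).congr_of_eventuallyEq hev1
    have hval : 0 + κ * (q ^ θ * L * L) +
        (∑' k : ℕ, -L * (L * (q ^ (θ + (k:ℝ)) / (1 - q ^ (θ + (k:ℝ))) ^ 2))) = 0 := by
      simp only [tsum_mul_left]
      linear_combination L * L * keyκ
    rwa [hval] at h
  · have h := hd3.congr_of_eventuallyEq hev2
    have hval : 0 + κ * (q ^ θ * L * L * L) +
        (∑' k : ℕ, -L * (L * (L * (q ^ (θ + (k:ℝ)) * (1 + q ^ (θ + (k:ℝ))) /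
          (1 - q ^ (θ + (k:ℝ))) ^ 3)))) = Ψ' θ * L - Ψ'' θ := by
      rw [show Ψ' θ = L ^ 2 * ∑' k : ℕ, q ^ (θ + (k:ℝ)) / (1 - q ^ (θ + (k:ℝ))) ^ 2 from rfl,
        show Ψ'' θ = L ^ 3 * ∑' k : ℕ, q ^ (θ + (k:ℝ)) * (1 + q ^ (θ + (k:ℝ))) /
          (1 - q ^ (θ + (k:ℝ))) ^ 3 from rfl]
      simp only [tsum_mul_left]
      linear_combination L * L * L * keyκ
    rwa [hval] at h
end
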